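/- arXiv:2411.15273 — 10 statements merged into one kernel-verified Lean document; each statement's English description precedes it below -/
import Mathlib

section
/- Equip M_n(ℂ) × M_m(ℂ) with the norm ‖(X₁, X₂)‖ = max(‖X₁‖, ‖X₂‖), where each factor carries the operator norm induced by the Euclidean norm. Let A = (A₁, A₂) with ‖A₂‖ < ‖A₁‖. Then for every B = (B₁, B₂) ∈ M_n(ℂ) × M_m(ℂ), the pair A is Birkhoff–James orthogonal to B (with complex scalars) if and only if (A₁, 0) is Birkhoff–James orthogonal to B. -/
open scoped Matrix.Norms.L2Operator

/-- Birkhoff–James orthogonality with complex scalars. -/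
def BJ {E : Type*} [Norm E] [Add E] [SMul ℂ E] (u v : E) : Prop :=
  ∀ c : ℂ, ‖u‖ ≤ ‖u + c • v‖

lemma bj_iff_fst {E F : Type*} [NormedAddCommGroup E] [NormedSpace ℂ E]
    [NormedAddCommGroup F] [NormedSpace ℂ F] (a : E) (a₂ : F) (h : ‖a₂‖ < ‖a‖)
    (B : E × F) : BJ (a, a₂) B ↔ ∀ c : ℂ, ‖a‖ ≤ ‖a + c • B.1‖ := by
  have hnorm : ‖((a, a₂) : E × F)‖ = ‖a‖ := by
    rw [Prod.norm_def]; exact max_eq_left h.le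
  constructor
  · intro hbj c
    by_contra hcon
    push_neg at hcon
    set t : ℝ := min 1 ((‖a‖ - ‖a₂‖) / (2 * (‖c‖ * ‖B.2‖ + 1))) with ht
    have hpos : (0:ℝ) < ‖a‖ - ‖a₂‖ := sub_pos.2 h
    have ht0 : 0 < t := lt_min one_pos (by positivity)
    have ht1 : t ≤ 1 := min_le_left _ _
    have hkey : t * (‖c‖ * ‖B.2‖) < ‖a‖ - ‖a₂‖ := by
      calc t * (‖c‖ * ‖B.2‖)
          ≤ ((‖a‖ - ‖a₂‖) / (2 * (‖c‖ * ‖B.2‖ + 1))) * (‖c‖ * ‖B.2‖) :=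
            mul_le_mul_of_nonneg_right (min_le_right _ _) (by positivity)
        _ < ‖a‖ - ‖a₂‖ := by
            rw [div_mul_eq_mul_div, div_lt_iff₀ (by positivity)]
            have hx : ‖c‖ * ‖B.2‖ < 2 * (‖c‖ * ‖B.2‖ + 1) := by
              nlinarith [norm_nonneg c, norm_nonneg B.2]
            exact mul_lt_mul_of_pos_left hx hpos
    have h1 : ‖a + ((t:ℂ) * c) • B.1‖ < ‖a‖ := by
      have heq : a + ((t:ℂ) * c) • B.1 = (1 - (t:ℂ)) • a + (t:ℂ) • (a + c • B.1) := by
        module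
      have hn1 : ‖(1 - (t:ℂ))‖ = 1 - t := by
        rw [show (1 - (t:ℂ)) = ((1 - t : ℝ) : ℂ) by push_cast; ring,
          Complex.norm_real, Real.norm_eq_abs, abs_of_nonneg (by linarith)]
      have hnt : ‖(t:ℂ)‖ = t := by
        rw [Complex.norm_real, Real.norm_eq_abs, abs_of_nonneg ht0.le]
      calc ‖a + ((t:ℂ) * c) • B.1‖
          ≤ ‖(1 - (t:ℂ)) • a‖ + ‖(t:ℂ) • (a + c • B.1)‖ := by rw [heq]; exact norm_add_le _ _
        _ = (1 - t) * ‖a‖ + t * ‖a + c • B.1‖ := by rw [norm_smul, norm_smul, hn1, hnt]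
        _ < (1 - t) * ‖a‖ + t * ‖a‖ := by
            have := mul_lt_mul_of_pos_left hcon ht0
            linarith
        _ = ‖a‖ := by ring
    have h2 : ‖a₂ + ((t:ℂ) * c) • B.2‖ < ‖a‖ := by
      have hnt : ‖(t:ℂ) * c‖ = t * ‖c‖ := by
        rw [norm_mul, Complex.norm_real, Real.norm_eq_abs, abs_of_nonneg ht0.le]
      calc ‖a₂ + ((t:ℂ) * c) • B.2‖ ≤ ‖a₂‖ + ‖((t:ℂ) * c) • B.2‖ := norm_add_le _ _
        _ = ‖a₂‖ + t * (‖c‖ * ‖B.2‖) := by rw [norm_smul, hnt]; ring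
        _ < ‖a‖ := by linarith
    have := hbj ((t:ℂ) * c)
    rw [hnorm] at this
    have hle : ‖((a, a₂) : E × F) + ((t:ℂ) * c) • B‖ < ‖a‖ := by
      rw [Prod.norm_def]
      exact max_lt h1 h2
    linarith
  · intro hc c
    have h1 : ‖a + c • B.1‖ ≤ ‖((a, a₂) : E × F) + c • B‖ := by
      rw [Prod.norm_def]
      exact le_max_left _ _
    rw [hnorm]
    exact (hc c).trans h1

/-- On `M_n(ℂ) × M_m(ℂ)` with the max norm (each factor carrying the Euclidean operator
norm), if `‖A₂‖ < ‖A₁‖`, then `(A₁, A₂) ⊥ B` iff `(A₁, 0) ⊥ B`. -/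
theorem bj_prod_smaller_block {n m : ℕ}
    (A₁ : Matrix (Fin n) (Fin n) ℂ) (A₂ : Matrix (Fin m) (Fin m) ℂ)
    (h : ‖A₂‖ < ‖A₁‖)
    (B : Matrix (Fin n) (Fin n) ℂ × Matrix (Fin m) (Fin m) ℂ) :
    BJ (A₁, A₂) B ↔ BJ (A₁, (0 : Matrix (Fin m) (Fin m) ℂ)) B := by
  have h0 : ‖(0 : Matrix (Fin m) (Fin m) ℂ)‖ < ‖A₁‖ := by
    rw [norm_zero]; exact (norm_nonneg A₂).trans_lt h
  rw [bj_iff_fst A₁ A₂ h B, bj_iff_fst A₁ 0 h0 B]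
end

section
/- Let n ≥ 2 and equip M_n(ℂ) with the operator norm induced by the Euclidean norm, with Birkhoff–James orthogonality taken with complex scalars. For s ≠ t let E_{st} denote the matrix unit with 1 in position (s,t) and 0 elsewhere. Then the intersection over all pairs s ≠ t of the outgoing neighbourhoods (E_{st})^⊥ equals exactly the set of diagonal matrices: a matrix B satisfies E_{st} ⊥ B for all s ≠ t if and only if all off-diagonal entries of B vanish. -/
open scoped Matrix.Norms.L2Operator ComplexConjugate
open Matrix

section Helpers

variable {n : ℕ}


lemma euc_apply_le (x : EuclideanSpace ℂ (Fin n)) (i : Fin n) : ‖x i‖ ≤ ‖x‖ := by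
  rw [EuclideanSpace.norm_eq]
  have : ‖x i‖ = Real.sqrt (‖x i‖ ^ 2) := by rw [Real.sqrt_sq (norm_nonneg _)]
  rw [this]
  apply Real.sqrt_le_sqrt
  exact Finset.single_le_sum (f := fun j => ‖x j‖ ^ 2) (fun j _ => sq_nonneg _) (Finset.mem_univ i)

lemma mat_norm_le_bound (A : Matrix (Fin n) (Fin n) ℂ) {C : ℝ} (hC : 0 ≤ C)
    (h : ∀ x : EuclideanSpace ℂ (Fin n),
      ‖(EuclideanSpace.equiv (Fin n) ℂ).symm (A *ᵥ x)‖ ≤ C * ‖x‖) : ‖A‖ ≤ C := by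
  rw [Matrix.l2_opNorm_def]
  exact ContinuousLinearMap.opNorm_le_bound _ hC h

lemma entry_le_norm (A : Matrix (Fin n) (Fin n) ℂ) (i j : Fin n) : ‖A i j‖ ≤ ‖A‖ := by
  have h := A.l2_opNorm_mulVec (EuclideanSpace.single j (1:ℂ))
  rw [EuclideanSpace.norm_single, norm_one, mul_one] at h
  refine le_trans (le_trans ?_ (euc_apply_le ((EuclideanSpace.equiv (Fin n) ℂ).symm
    (A *ᵥ (EuclideanSpace.single j (1:ℂ)))) i)) h
  have : ((EuclideanSpace.equiv (Fin n) ℂ).symm (A *ᵥ (EuclideanSpace.single j (1:ℂ)))) i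
      = A i j := by
    show (A *ᵥ Pi.single j (1:ℂ)) i = A i j
    rw [Matrix.mulVec_single]
    simp
  rw [this]

lemma stdBasis_mulVec (s t : Fin n) (c : ℂ) (x : Fin n → ℂ) (i : Fin n) :
    (Matrix.single s t c *ᵥ x) i = if i = s then c * x t else 0 := by
  simp [Matrix.mulVec, Matrix.single, dotProduct, Finset.sum_ite_eq, ite_and, eq_comm]

lemma norm_stdBasisMatrix (s t : Fin n) : ‖Matrix.single s t (1:ℂ)‖ = 1 := by
  refine le_antisymm (mat_norm_le_bound _ zero_le_one fun x => ?_) ?_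
  · have : (EuclideanSpace.equiv (Fin n) ℂ).symm (Matrix.single s t (1:ℂ) *ᵥ x)
        = EuclideanSpace.single s (x t) := by
      apply PiLp.ext
      intro i
      show (Matrix.single s t (1:ℂ) *ᵥ x) i = _
      rw [stdBasis_mulVec, EuclideanSpace.single_apply]
      simp
    rw [this, EuclideanSpace.norm_single, one_mul]
    exact euc_apply_le x t
  · have := entry_le_norm (Matrix.single s t (1:ℂ)) s t
    simpa using this

lemma key_estimate (B : Matrix (Fin n) (Fin n) ℂ) (s t : Fin n) (hb : B s t ≠ 0) :
    ∃ c : ℂ, ‖Matrix.single s t (1:ℂ) + c • B‖ < 1 := by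
  set b := B s t with hbdef
  set M := ‖B‖ with hMdef
  have hbM : ‖b‖ ≤ M := entry_le_norm B s t
  have hbpos : (0:ℝ) < ‖b‖ := norm_pos_iff.mpr hb
  have hMpos : (0:ℝ) < M := lt_of_lt_of_le hbpos hbM
  set ε : ℝ := 1 / (2 * M ^ 2) with hεdef
  have hεpos : 0 < ε := by positivity
  have hεM : ε * M ^ 2 = 1 / 2 := by rw [hεdef, div_mul_eq_mul_div, one_mul, div_eq_div_iff (mul_ne_zero two_ne_zero (pow_ne_zero 2 hMpos.ne')) two_ne_zero]; ring
  have hb2M2 : ‖b‖ ^ 2 ≤ M ^ 2 := pow_le_pow_left₀ (norm_nonneg b) hbM 2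
  have hεb : ε * ‖b‖ ^ 2 ≤ 1 / 2 := by
    calc ε * ‖b‖ ^ 2 ≤ ε * M ^ 2 := mul_le_mul_of_nonneg_left hb2M2 hεpos.le
    _ = 1/2 := hεM
  have hεbpos : 0 < ε * ‖b‖ ^ 2 := by positivity
  set δ : ℝ := ε * ‖b‖ ^ 2 / 2 with hδdef
  have hδpos : 0 < δ := by positivity
  have hδlt : δ < 1 := by simp only [hδdef]; linarith
  set K : ℝ := Real.sqrt (1 - δ) with hKdef
  have hKnonneg : 0 ≤ K := Real.sqrt_nonneg _
  have hKsq : K ^ 2 = 1 - δ := Real.sq_sqrt (by linarith)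
  have hKlt : K < 1 := by
    have := Real.sqrt_lt_sqrt (by linarith : (0:ℝ) ≤ 1 - δ) (by linarith : 1 - δ < 1)
    rwa [Real.sqrt_one] at this
  set c : ℂ := -(ε : ℂ) * conj b with hcdef
  have hcnorm : ‖c‖ = ε * ‖b‖ := by
    simp [hcdef, norm_mul, abs_of_pos hεpos]
  refine ⟨c, lt_of_le_of_lt (mat_norm_le_bound _ hKnonneg fun x => ?_) hKlt⟩
  set N : ℝ := ‖x‖ with hNdef
  have hNnonneg : 0 ≤ N := norm_nonneg _
  set a : ℝ := ‖x t‖ with hadef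
  set y : EuclideanSpace ℂ (Fin n) := x - EuclideanSpace.single t (x t) with hydef
  have hyt : y t = 0 := by simp [hydef, EuclideanSpace.single_apply]
  have hpyth : N ^ 2 = a ^ 2 + ‖y‖ ^ 2 := by
    have hx : x = EuclideanSpace.single t (x t) + y := by simp [hydef]
    have hinner : inner (𝕜 := ℂ) (EuclideanSpace.single t (x t)) y = 0 := by
      rw [EuclideanSpace.inner_single_left, hyt, mul_zero]
    calc N ^ 2 = ‖EuclideanSpace.single t (x t) + y‖ ^ 2 := by rw [hNdef, ← hx]
    _ = ‖EuclideanSpace.single t (x t)‖^2 + 2 * RCLike.re (inner (𝕜 := ℂ) (EuclideanSpace.single t (x t)) y) + ‖y‖^2 := norm_add_sq _ _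
    _ = a ^ 2 + ‖y‖ ^ 2 := by rw [hinner, EuclideanSpace.norm_single, map_zero]; ring
  set Bx : EuclideanSpace ℂ (Fin n) := (EuclideanSpace.equiv (Fin n) ℂ).symm (B *ᵥ x) with hBxdef
  have hBxle : ‖Bx‖ ≤ M * N := B.l2_opNorm_mulVec x
  set r : ℂ := (B *ᵥ (fun i => y i)) s with hrdef
  have hrle : ‖r‖ ≤ M * ‖y‖ := by
    have h1 : ‖((EuclideanSpace.equiv (Fin n) ℂ).symm (B *ᵥ y)) s‖
        ≤ ‖(EuclideanSpace.equiv (Fin n) ℂ).symm (B *ᵥ y)‖ := euc_apply_le _ s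
    exact le_trans h1 (B.l2_opNorm_mulVec y)
  have hsplit : Bx s = b * x t + r := by
    have hyfun : (fun i => y i) = (fun i => x i) - (Pi.single t (x t) : Fin n → ℂ) := by
      funext i
      by_cases h : i = t
      · subst h; simp [hydef, EuclideanSpace.single_apply]
      · simp [hydef, EuclideanSpace.single_apply, Pi.single_apply, h]
    show (B *ᵥ (fun i => x i)) s = b * x t + r
    rw [hrdef, hyfun, Matrix.mulVec_sub, Matrix.mulVec_single]
    simp only [Pi.sub_apply, Pi.smul_apply, op_smul_eq_mul, Matrix.col_apply]
    ring
  have hvec : (EuclideanSpace.equiv (Fin n) ℂ).symm ((Matrix.single s t (1:ℂ) + c • B) *ᵥ x)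
      = EuclideanSpace.single s (x t) + c • Bx := by
    apply PiLp.ext
    intro i
    show ((Matrix.single s t (1:ℂ) + c • B) *ᵥ x) i = _
    rw [Matrix.add_mulVec, Matrix.smul_mulVec]
    simp only [Pi.add_apply, Pi.smul_apply, smul_eq_mul]
    rw [stdBasis_mulVec]
    show _ = EuclideanSpace.single s (x t) i + c * ((B *ᵥ x) i)
    rw [EuclideanSpace.single_apply]
    simp
  rw [hvec]
  have hns : ‖EuclideanSpace.single s (x t) + c • Bx‖ ^ 2
      = a ^ 2 + 2 * RCLike.re (c * (conj (x t) * Bx s)) + (ε * ‖b‖)^2 * ‖Bx‖ ^ 2 := by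
    rw [norm_add_sq (𝕜 := ℂ), inner_smul_right, EuclideanSpace.inner_single_left,
      EuclideanSpace.norm_single, norm_smul, hcnorm, mul_pow]
  have h1 : conj (x t) * x t = ((a ^ 2 : ℝ) : ℂ) := by
    rw [RCLike.conj_mul]; norm_cast
  have h2 : conj b * b = ((‖b‖ ^ 2 : ℝ) : ℂ) := by
    rw [RCLike.conj_mul]; norm_cast
  have hre : RCLike.re (c * (conj (x t) * Bx s)) ≤ -(ε * ‖b‖^2) * a^2 + ε * ‖b‖ * a * (M * ‖y‖) := by
    rw [hsplit]
    have hexp : c * (conj (x t) * (b * x t + r))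
        = ((-(ε * ‖b‖^2) * a^2 : ℝ) : ℂ) + c * conj (x t) * r := by
      calc c * (conj (x t) * (b * x t + r))
          = -(ε:ℂ) * ((conj b * b) * (conj (x t) * x t)) + c * conj (x t) * r := by
            rw [hcdef]; ring
        _ = _ := by rw [h1, h2]; norm_cast; push_cast; ring
    have h0 : RCLike.re (((-(ε * ‖b‖^2) * a^2 : ℝ) : ℂ)) = -(ε * ‖b‖^2) * a^2 :=
      RCLike.ofReal_re _
    rw [hexp, map_add, h0]
    have h3 : RCLike.re (c * conj (x t) * r) ≤ ε * ‖b‖ * a * (M * ‖y‖) := by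
      refine le_trans (RCLike.re_le_norm _) ?_
      rw [norm_mul, norm_mul, hcnorm]
      have hat : ‖conj (x t)‖ = a := by rw [RCLike.norm_conj]
      rw [hat]
      have h4 : 0 ≤ ε * ‖b‖ * a := by positivity
      exact mul_le_mul_of_nonneg_left hrle h4
    linarith
  have hnorm2 : ‖EuclideanSpace.single s (x t) + c • Bx‖ ^ 2 ≤ (K * N) ^ 2 := by
    rw [hns, mul_pow K N, hKsq]
    have hanon : 0 ≤ a := norm_nonneg _
    have hynon : 0 ≤ ‖y‖ := norm_nonneg _
    have hBxnon : 0 ≤ ‖Bx‖ := norm_nonneg _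
    clear_value r Bx y a N c K δ ε M b
    clear hvec hns hsplit h1 h2 hrdef hBxdef hydef hyt hcnorm hcdef hKdef hKsq hεdef hrle
    set w : ℝ := ‖y‖ with hwdef
    set q : ℝ := ‖Bx‖ with hqdef
    set R : ℝ := RCLike.re (c * (conj (x t) * Bx s)) with hRdef
    clear_value w q R
    clear hwdef hqdef hRdef hbdef hMdef hadef hNdef
    have hBx2 : q^2 ≤ M^2 * N^2 := by nlinarith
    have hamgm : 2 * (ε * ‖b‖ * a * (M * w)) ≤ ε * ‖b‖^2 * a^2 + ε * M^2 * w^2 := by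
      nlinarith [sq_nonneg (‖b‖ * a - M * w), hεpos.le]
    have e2 : (ε * ‖b‖)^2 * q^2 ≤ δ * N^2 := by
      have h5 : (ε * ‖b‖)^2 * q^2 ≤ (ε * ‖b‖)^2 * (M^2 * N^2) :=
        mul_le_mul_of_nonneg_left hBx2 (sq_nonneg _)
      have h6 : (ε * ‖b‖)^2 * (M^2 * N^2) = δ * N^2 := by
        rw [hδdef]; linear_combination (ε * ‖b‖^2 * N^2) * hεM
      linarith
    have e4 : ε * M^2 * w^2 = 1/2 * w^2 := by linear_combination w^2 * hεM
    have e5 : (0:ℝ) ≤ (1/2 - ε * ‖b‖^2) * w^2 :=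
      mul_nonneg (by linarith) (sq_nonneg _)
    have hδd : δ = ε * ‖b‖^2 / 2 := hδdef
    have e6 : 2*δ*N^2 = ε*‖b‖^2*a^2 + ε*‖b‖^2*w^2 := by
      linear_combination 2*N^2*hδd + ε*‖b‖^2*hpyth
    linarith [hre, hamgm, e2, e4, e5, e6]
  have hfin := Real.sqrt_le_sqrt hnorm2
  rwa [Real.sqrt_sq (norm_nonneg _), Real.sqrt_sq (mul_nonneg hKnonneg hNnonneg)] at hfin

end Helpers

/-- In `M_n(ℂ)` (`n ≥ 2`, Euclidean operator norm, complex scalars), a matrix `B` lies in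
`(E_{st})^⊥` for all matrix units `E_{st}` with `s ≠ t` iff `B` is diagonal. -/
theorem inter_perp_offdiag_units_eq_diagonal {n : ℕ} (hn : 2 ≤ n)
    (B : Matrix (Fin n) (Fin n) ℂ) :
    (∀ s t : Fin n, s ≠ t → BJ (Matrix.single s t (1 : ℂ)) B) ↔
      (∀ s t : Fin n, s ≠ t → B s t = 0) := by
  constructor
  · intro h s t hst
    by_contra hb
    obtain ⟨c, hc⟩ := key_estimate B s t hb
    have h1 := h s t hst c
    rw [norm_stdBasisMatrix] at h1
    linarith
  · intro h s t hst c
    rw [norm_stdBasisMatrix]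
    have hentry := entry_le_norm (Matrix.single s t (1:ℂ) + c • B) s t
    have : (Matrix.single s t (1:ℂ) + c • B) s t = 1 := by
      simp [Matrix.add_apply, Matrix.smul_apply, h s t hst]
    rw [this] at hentry
    simpa using hentry
end

section
/- Let n ≥ 1 and equip M_n(ℂ) with the operator norm induced by the Euclidean norm, with Birkhoff–James orthogonality taken with complex scalars. Then every matrix unit E_{st} (the matrix with 1 in position (s,t) and 0 elsewhere) is a smooth point of M_n(ℂ): there is no matrix B ∈ M_n(ℂ) whose outgoing neighbourhood B^⊥ is a proper subset of (E_{st})^⊥. -/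
open scoped Matrix.Norms.L2Operator

/-- The outgoing neighbourhood `v^⊥ = {u : v ⊥ u}`. -/
def perp {E : Type*} [Norm E] [Add E] [SMul ℂ E] (v : E) : Set E := {u | BJ v u}


noncomputable def clm {n : ℕ} (M : Matrix (Fin n) (Fin n) ℂ) :
    EuclideanSpace ℂ (Fin n) →L[ℂ] EuclideanSpace ℂ (Fin n) :=
  Matrix.toEuclideanCLM (𝕜 := ℂ) M

lemma norm_clm {n : ℕ} (M : Matrix (Fin n) (Fin n) ℂ) : ‖M‖ = ‖clm M‖ :=
  Matrix.cstar_norm_def M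

lemma clm_apply {n : ℕ} (M : Matrix (Fin n) (Fin n) ℂ) (x : EuclideanSpace ℂ (Fin n)) (j : Fin n) :
    clm M x j = ∑ k, M j k * x k := rfl

lemma clm_addsmul {n : ℕ} (M N : Matrix (Fin n) (Fin n) ℂ) (c : ℂ) :
    clm (M + c • N) = clm M + c • clm N := by
  simp only [clm, map_add, map_smul]

lemma clm_stdBasis {n : ℕ} (s t : Fin n) (x : EuclideanSpace ℂ (Fin n)) :
    clm (Matrix.single s t (1 : ℂ)) x = EuclideanSpace.single s (x t) := by
  ext j
  rw [clm_apply]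
  simp [Matrix.single, EuclideanSpace.single_apply, ite_and]
  by_cases h : j = s <;> by_cases h2 : s = j <;> simp_all

lemma key_ineq (K C p q m ε : ℝ) (hK : 0 ≤ K) (hC : 0 ≤ C) (hp : 0 ≤ p) (hq : 0 ≤ q)
    (hm : p^2 + q^2 = m^2) (hε : ε = 1/(4*K^2+2*K+2*C+4)) :
    p^2 - 2*ε*p^2 + 2*ε*K*p*q + C*ε^2*m^2 ≤ (1-ε/2)^2 * m^2 := by
  have hD : 0 < 4*K^2+2*K+2*C+4 := by positivity
  have hε0 : 0 < ε := by rw [hε]; positivity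
  have hεD : ε * (4*K^2+2*K+2*C+4) = 1 := by rw [hε]; field_simp
  have hε4 : ε ≤ 1/4 := by
    rw [hε, div_le_div_iff₀ hD (by norm_num)]; nlinarith
  have f2 : ε * (4*K^2) ≤ 1 := by nlinarith
  have f3 : C * ε ≤ 1/2 := by nlinarith
  have step1 : 2*ε*K*p*q ≤ (ε/2)*p^2 + 2*ε*K^2*q^2 := by
    nlinarith [mul_nonneg hε0.le (sq_nonneg (p - 2*K*q))]
  have step2 : 2*ε*K^2*q^2 ≤ (1/2)*q^2 := by
    nlinarith [sq_nonneg q]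
  have step3 : C*ε^2*m^2 ≤ (ε/2)*p^2 + (ε/2)*q^2 := by
    nlinarith [sq_nonneg m, mul_nonneg hε0.le (sq_nonneg m)]
  nlinarith [sq_nonneg p, sq_nonneg q, mul_nonneg hε0.le (mul_nonneg hε0.le (sq_nonneg p)),
    mul_nonneg hε0.le (mul_nonneg hε0.le (sq_nonneg q))]

lemma hard {n : ℕ} (s t : Fin n) (A : Matrix (Fin n) (Fin n) ℂ) (ha : A s t ≠ 0) :
    ∃ c : ℂ, ‖Matrix.single s t (1 : ℂ) + c • A‖ < 1 := by
  classical
  set a : ℂ := A s t with ha_def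
  set na : ℝ := ‖a‖ with hna_def
  have hna : 0 < na := norm_pos_iff.mpr ha
  set v : EuclideanSpace ℂ (Fin n) :=
    (WithLp.equiv 2 (Fin n → ℂ)).symm (fun j => if j = t then 0 else starRingEnd ℂ (A s j))
    with hv_def
  have hvco : ∀ j, v j = if j = t then 0 else starRingEnd ℂ (A s j) := fun j => rfl
  set R : ℝ := ‖v‖ with hR_def
  set F : ℝ := ‖A‖ with hF_def
  have hF : 0 ≤ F := norm_nonneg _
  have hR : 0 ≤ R := norm_nonneg _
  set K : ℝ := R / na with hK_def
  set C : ℝ := (F / na)^2 with hC_def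
  have hK : 0 ≤ K := div_nonneg hR hna.le
  have hC : 0 ≤ C := sq_nonneg _
  set ε : ℝ := 1/(4*K^2+2*K+2*C+4) with hε_def
  have hε0 : 0 < ε := by rw [hε_def]; positivity
  have hε4 : ε ≤ 1/4 := by
    rw [hε_def, div_le_div_iff₀ (by positivity) (by norm_num)]; nlinarith
  set c : ℂ := -(ε : ℂ)/a with hc_def
  refine ⟨c, ?_⟩
  have hca : c * a = -(ε : ℂ) := by
    rw [hc_def]; field_simp
  have hcnorm : ‖c‖ = ε / na := by
    rw [hc_def, norm_div, norm_neg, Complex.norm_real, Real.norm_eq_abs, abs_of_pos hε0]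
  -- the per-vector bound
  have main : ∀ x : EuclideanSpace ℂ (Fin n),
      ‖clm (Matrix.single s t (1:ℂ) + c • A) x‖ ≤ (1 - ε/2) * ‖x‖ := by
    intro x
    set p : ℝ := ‖x t‖ with hp_def
    set m : ℝ := ‖x‖ with hm_def
    set x' : EuclideanSpace ℂ (Fin n) := x - EuclideanSpace.single t (x t) with hx'_def
    set q : ℝ := ‖x'‖ with hq_def
    have hp : 0 ≤ p := norm_nonneg _
    have hq : 0 ≤ q := norm_nonneg _
    have hx't : x' t = 0 := by
      simp [hx'_def, EuclideanSpace.single_apply]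
    have hsum : EuclideanSpace.single t (x t) + x' = x := by
      rw [hx'_def]; abel
    have hpyth : p^2 + q^2 = m^2 := by
      have horth : (inner ℂ (EuclideanSpace.single t (x t)) x' : ℂ) = 0 := by
        rw [EuclideanSpace.inner_single_left, hx't, mul_zero]
      have := @norm_add_sq ℂ _ _ _ _ (EuclideanSpace.single t (x t)) x'
      rw [hsum, horth] at this
      simp only [map_zero, mul_zero, add_zero] at this
      rw [hm_def, this, EuclideanSpace.norm_single]
    -- the residual term
    set r : ℂ := (inner ℂ v x' : ℂ) with hr_def
    have hrb : ‖r‖ ≤ R * q := by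
      calc ‖r‖ ≤ ‖v‖ * ‖x'‖ := norm_inner_le_norm v x'
      _ = R * q := rfl
    have hvt : v t = 0 := by rw [hvco]; simp
    have hws : clm A x s = a * x t + r := by
      have hvx : (inner ℂ v x : ℂ) = r := by
        rw [hr_def, hx'_def, inner_sub_right, EuclideanSpace.inner_single_right, hvt]
        simp
      rw [← hvx, clm_apply]
      have hterm : ∀ k, A s k * x k =
          (if k = t then a * x t else 0) + (starRingEnd ℂ) (v k) * x k := by
        intro k
        by_cases hk : k = t
        · subst hk; rw [hvco]; simp [ha_def]
        · rw [hvco]; simp [hk]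
      calc ∑ k, A s k * x k
          = ∑ k, ((if k = t then a * x t else 0) + (starRingEnd ℂ) (v k) * x k) :=
            Finset.sum_congr rfl fun k _ => hterm k
      _ = (∑ k, if k = t then a * x t else 0) + ∑ k, (starRingEnd ℂ) (v k) * x k :=
            Finset.sum_add_distrib
      _ = a * x t + (inner ℂ v x : ℂ) := by
            rw [Finset.sum_ite_eq' Finset.univ t fun _ => a * x t]
            simp [PiLp.inner_apply, RCLike.inner_apply]
            exact Finset.sum_congr rfl fun _ _ => mul_comm _ _
    -- expand the norm
    have hexp : clm (Matrix.single s t (1:ℂ) + c • A) x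
        = EuclideanSpace.single s (x t) + c • clm A x := by
      rw [clm_addsmul]
      simp only [ContinuousLinearMap.add_apply, ContinuousLinearMap.smul_apply, clm_stdBasis]
    have hnormsq : ‖clm (Matrix.single s t (1:ℂ) + c • A) x‖^2
        = p^2 + 2 * Complex.re (c * ((starRingEnd ℂ) (x t) * clm A x s)) + ‖c • clm A x‖^2 := by
      rw [hexp]
      have := @norm_add_sq ℂ _ _ _ _ (EuclideanSpace.single s (x t)) (c • clm A x)
      rw [this, EuclideanSpace.norm_single, inner_smul_right, EuclideanSpace.inner_single_left]
      norm_num [RCLike.re_to_complex, hp_def]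
    -- bound the middle term
    have hmid : Complex.re (c * ((starRingEnd ℂ) (x t) * clm A x s))
        ≤ -(ε * p^2) + (ε/na) * p * (R * q) := by
      have h1 : c * ((starRingEnd ℂ) (x t) * clm A x s)
          = ((-(ε * p^2) : ℝ) : ℂ) + c * (starRingEnd ℂ) (x t) * r := by
        rw [hws]
        have hconj : (starRingEnd ℂ) (x t) * x t = ((p^2 : ℝ) : ℂ) := by
          rw [RCLike.conj_mul]; norm_cast
        calc c * ((starRingEnd ℂ) (x t) * (a * x t + r))
            = (c * a) * ((starRingEnd ℂ) (x t) * x t) + c * (starRingEnd ℂ) (x t) * r := by ring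
        _ = ((-(ε * p^2) : ℝ) : ℂ) + c * (starRingEnd ℂ) (x t) * r := by
            rw [hca, hconj]; push_cast; ring
      rw [h1, Complex.add_re, Complex.ofReal_re]
      have h2 : Complex.re (c * (starRingEnd ℂ) (x t) * r) ≤ (ε/na) * p * (R * q) := by
        calc Complex.re (c * (starRingEnd ℂ) (x t) * r)
            ≤ ‖c * (starRingEnd ℂ) (x t) * r‖ := Complex.re_le_norm _
        _ = ‖c‖ * ‖x t‖ * ‖r‖ := by rw [norm_mul, norm_mul, RCLike.norm_conj]
        _ ≤ (ε/na) * p * (R * q) := by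
            rw [hcnorm]
            have : 0 ≤ ε / na * p := by positivity
            exact mul_le_mul_of_nonneg_left hrb this
      linarith
    -- bound the last term
    have hlast : ‖c • clm A x‖^2 ≤ C * ε^2 * m^2 := by
      have h1 : ‖c • clm A x‖ ≤ (ε/na) * (F * m) := by
        rw [norm_smul, hcnorm]
        have h2 : ‖clm A x‖ ≤ F * m := by
          rw [hF_def, norm_clm, hm_def]
          exact (clm A).le_opNorm x
        exact mul_le_mul_of_nonneg_left h2 (by positivity)
      calc ‖c • clm A x‖^2 ≤ ((ε/na) * (F * m))^2 := by
            apply pow_le_pow_left₀ (norm_nonneg _) h1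
      _ = C * ε^2 * m^2 := by rw [hC_def]; field_simp
    -- combine
    have hfin : ‖clm (Matrix.single s t (1:ℂ) + c • A) x‖^2
        ≤ p^2 - 2*ε*p^2 + 2*ε*K*p*q + C*ε^2*m^2 := by
      rw [hnormsq, hK_def]
      have : 2 * Complex.re (c * ((starRingEnd ℂ) (x t) * clm A x s))
          ≤ -2*(ε*p^2) + 2*((ε/na) * p * (R * q)) := by linarith
      have heq : 2*ε*(R/na)*p*q = 2*((ε/na) * p * (R * q)) := by ring
      linarith [this]
    have hkey := key_ineq K C p q m ε hK hC hp hq hpyth hε_def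
    have hfin2 : ‖clm (Matrix.single s t (1:ℂ) + c • A) x‖^2 ≤ ((1-ε/2) * m)^2 := by
      calc ‖clm (Matrix.single s t (1:ℂ) + c • A) x‖^2
          ≤ p^2 - 2*ε*p^2 + 2*ε*K*p*q + C*ε^2*m^2 := hfin
      _ ≤ (1-ε/2)^2 * m^2 := hkey
      _ = ((1-ε/2) * m)^2 := by ring
    have hb : 0 ≤ (1-ε/2) * m := by
      apply mul_nonneg (by linarith) (norm_nonneg _)
    calc ‖clm (Matrix.single s t (1:ℂ) + c • A) x‖
        = Real.sqrt (‖clm (Matrix.single s t (1:ℂ) + c • A) x‖^2) :=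
          (Real.sqrt_sq (norm_nonneg _)).symm
    _ ≤ Real.sqrt (((1-ε/2) * m)^2) := Real.sqrt_le_sqrt hfin2
    _ = (1-ε/2) * m := Real.sqrt_sq hb
  have : ‖Matrix.single s t (1:ℂ) + c • A‖ ≤ 1 - ε/2 := by
    rw [norm_clm]
    exact ContinuousLinearMap.opNorm_le_bound _ (by linarith) main
  linarith

lemma norm_attain {n : ℕ} (hn : 1 ≤ n) (B : Matrix (Fin n) (Fin n) ℂ) :
    ∃ x : EuclideanSpace ℂ (Fin n), ‖x‖ = 1 ∧ ‖clm B x‖ = ‖B‖ := by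
  have hne : (Metric.sphere (0 : EuclideanSpace ℂ (Fin n)) 1).Nonempty := by
    refine ⟨EuclideanSpace.single ⟨0, hn⟩ 1, ?_⟩
    simp [EuclideanSpace.norm_single]
  obtain ⟨x, hx, hmax⟩ := (isCompact_sphere (0 : EuclideanSpace ℂ (Fin n)) 1).exists_isMaxOn hne
    (Continuous.continuousOn (by fun_prop : Continuous fun y => ‖clm B y‖))
  rw [mem_sphere_zero_iff_norm] at hx
  refine ⟨x, hx, le_antisymm ?_ ?_⟩
  · calc ‖clm B x‖ ≤ ‖clm B‖ * ‖x‖ := (clm B).le_opNorm x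
    _ = ‖B‖ := by rw [hx, norm_clm, mul_one]
  · rw [norm_clm]
    refine ContinuousLinearMap.opNorm_le_bound _ (norm_nonneg _) fun y => ?_
    rcases eq_or_ne y 0 with rfl | hy
    · simp
    · have hyn : ‖y‖ ≠ 0 := norm_ne_zero_iff.mpr hy
      have hmem : (‖y‖⁻¹ : ℝ) • y ∈ Metric.sphere (0 : EuclideanSpace ℂ (Fin n)) 1 := by
        rw [mem_sphere_zero_iff_norm, norm_smul, norm_inv, norm_norm, inv_mul_cancel₀ hyn]
      have := hmax hmem
      simp only [Set.mem_setOf_eq] at this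
      rw [(clm B).map_smul_of_tower, norm_smul, norm_inv, norm_norm] at this
      have hpos : 0 < ‖y‖ := (norm_nonneg y).lt_of_ne (Ne.symm hyn)
      rw [inv_mul_le_iff₀ hpos] at this
      rw [mul_comm] at this
      exact this

lemma bj_of_orth {n : ℕ} (B A : Matrix (Fin n) (Fin n) ℂ) (x : EuclideanSpace ℂ (Fin n))
    (hx : ‖x‖ = 1) (hmax : ‖clm B x‖ = ‖B‖)
    (horth : (inner ℂ (clm B x) (clm A x) : ℂ) = 0) : BJ B A := by
  intro c
  rcases eq_or_ne (‖B‖) 0 with hB0 | hB0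
  · rw [hB0]; exact norm_nonneg _
  have key : ‖B‖ ≤ ‖clm (B + c • A) x‖ := by
    have hBx : ‖clm B x‖ ≠ 0 := by rw [hmax]; exact hB0
    have hin : (inner ℂ (clm B x) (clm (B + c • A) x) : ℂ) = (‖clm B x‖ : ℂ)^2 := by
      rw [clm_addsmul]
      simp only [ContinuousLinearMap.add_apply, ContinuousLinearMap.smul_apply]
      rw [inner_add_right, inner_smul_right, horth, mul_zero, add_zero,
        inner_self_eq_norm_sq_to_K]
      norm_cast
    have hcs := norm_inner_le_norm (𝕜 := ℂ) (clm B x) (clm (B + c • A) x)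
    rw [hin] at hcs
    have h2 : ‖clm B x‖^2 ≤ ‖clm B x‖ * ‖clm (B + c • A) x‖ := by
      calc ‖clm B x‖^2 = ‖(‖clm B x‖ : ℂ)^2‖ := by
            rw [norm_pow, Complex.norm_real, Real.norm_eq_abs, abs_of_nonneg (norm_nonneg _)]
      _ ≤ _ := hcs
    have hpos : 0 < ‖clm B x‖ := (norm_nonneg _).lt_of_ne (Ne.symm hBx)
    rw [← hmax]
    nlinarith
  calc ‖B‖ ≤ ‖clm (B + c • A) x‖ := key
  _ ≤ ‖clm (B + c • A)‖ * ‖x‖ := (clm _).le_opNorm x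
  _ = ‖B + c • A‖ := by rw [hx, norm_clm, mul_one]

lemma coord_le_norm {n : ℕ} (y : EuclideanSpace ℂ (Fin n)) (t : Fin n) : ‖y t‖ ≤ ‖y‖ := by
  have h := norm_inner_le_norm (𝕜 := ℂ) (EuclideanSpace.single t (1:ℂ)) y
  rwa [EuclideanSpace.inner_single_left, map_one, one_mul, EuclideanSpace.norm_single,
    norm_one, one_mul] at h

lemma norm_E {n : ℕ} (s t : Fin n) : ‖Matrix.single s t (1 : ℂ)‖ = 1 := by
  refine le_antisymm ?_ ?_
  · rw [norm_clm]
    refine ContinuousLinearMap.opNorm_le_bound _ zero_le_one fun y => ?_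
    rw [clm_stdBasis, one_mul, EuclideanSpace.norm_single]
    exact coord_le_norm y t
  · have h := (clm (Matrix.single s t (1:ℂ))).le_opNorm (EuclideanSpace.single t (1:ℂ))
    rw [clm_stdBasis] at h
    rw [norm_clm]
    have h1 : (EuclideanSpace.single t (1:ℂ)) t = 1 := by
      simp [EuclideanSpace.single_apply]
    rw [h1, EuclideanSpace.norm_single, EuclideanSpace.norm_single, norm_one, mul_one] at h
    exact h

/-- Every matrix unit `E_{st}` is a smooth point of `M_n(ℂ)` (`n ≥ 1`, Euclidean operator
norm, complex scalars): no matrix `B` has `B^⊥` a proper subset of `(E_{st})^⊥`. -/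
theorem stdBasisMatrix_smooth {n : ℕ} (hn : 1 ≤ n) (s t : Fin n) :
    ¬ ∃ B : Matrix (Fin n) (Fin n) ℂ, perp B ⊂ perp (Matrix.single s t (1 : ℂ)) := by
  rintro ⟨B, hss⟩
  have hsub := hss.subset
  obtain ⟨A0, hA0E, hA0B⟩ := Set.exists_of_ssubset hss
  have hEchar : ∀ A : Matrix (Fin n) (Fin n) ℂ,
      A ∈ perp (Matrix.single s t (1:ℂ)) → A s t = 0 := by
    intro A hA
    by_contra hAst
    obtain ⟨c, hc⟩ := hard s t A hAst
    have h2 := hA c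
    rw [norm_E] at h2
    linarith
  by_cases hB : B = 0
  · refine hA0B ?_
    intro c
    subst hB
    simpa using norm_nonneg ((0 : Matrix (Fin n) (Fin n) ℂ) + c • A0)
  · obtain ⟨x, hx1, hxB⟩ := norm_attain hn B
    have hBx0 : ‖clm B x‖ ≠ 0 := by rw [hxB]; exact norm_ne_zero_iff.mpr hB
    have hψB : (inner ℂ (clm B x) (clm B x) : ℂ) ≠ 0 := by
      intro h
      exact hBx0 (norm_eq_zero.mpr (inner_self_eq_zero.mp h))
    have key : ∀ A : Matrix (Fin n) (Fin n) ℂ,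
        A s t = ((inner ℂ (clm B x) (clm A x) : ℂ) / (inner ℂ (clm B x) (clm B x) : ℂ)) * B s t := by
      intro A
      set d : ℂ := (inner ℂ (clm B x) (clm A x) : ℂ) / (inner ℂ (clm B x) (clm B x) : ℂ) with hd_def
      have hc : clm (A - d • B) = clm A - d • clm B := by
        simp only [clm, map_sub, map_smul]
      have hψ0 : (inner ℂ (clm B x) (clm (A - d • B) x) : ℂ) = 0 := by
        rw [hc]
        simp only [ContinuousLinearMap.sub_apply, ContinuousLinearMap.smul_apply]
        rw [inner_sub_right, inner_smul_right, hd_def, div_mul_cancel₀ _ hψB, sub_self]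
      have hmem : (A - d • B) ∈ perp B := bj_of_orth B (A - d • B) x hx1 hxB hψ0
      have hz := hEchar _ (hsub hmem)
      have hsub_entry : (A - d • B) s t = A s t - d * B s t := by
        simp [Matrix.sub_apply, smul_eq_mul]
      rw [hsub_entry] at hz
      linear_combination hz
    have h1 := key (Matrix.single s t (1:ℂ))
    rw [Matrix.single_apply_same] at h1
    have hBst : B s t ≠ 0 := by
      intro h
      rw [h, mul_zero] at h1
      exact one_ne_zero h1
    have hA0st : A0 s t = 0 := hEchar A0 hA0E
    have h2 := key A0
    rw [hA0st] at h2
    have hψA0 : (inner ℂ (clm B x) (clm A0 x) : ℂ) = 0 := by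
      rcases mul_eq_zero.mp h2.symm with h | h
      · rcases div_eq_zero_iff.mp h with h' | h'
        · exact h'
        · exact absurd h' hψB
      · exact absurd h hBst
    exact hA0B (bj_of_orth B A0 x hx1 hxB hψA0)
end

section
/- Let A ∈ M_n(ℂ) (with the Euclidean operator norm) and suppose there is a unit vector x ∈ ℂⁿ such that M₀(A) = ℂ·x, where M₀(A) = {y ∈ ℂⁿ : ‖Ay‖ = ‖A‖·‖y‖}. Let R be the rank-one matrix (Ax)x* (i.e. R_{ij} = (Ax)_i · conj(x_j)). Then A and R have the same outgoing neighbourhood: for every B ∈ M_n(ℂ), A ⊥ B if and only if R ⊥ B, where ⊥ is Birkhoff–James orthogonality with complex scalars. -/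
open scoped Matrix.Norms.L2Operator

set_option maxHeartbeats 1000000

open scoped InnerProductSpace

variable {E : Type*} [NormedAddCommGroup E] [InnerProductSpace ℂ E] [FiniteDimensional ℂ E]

lemma norm_attain_s7 (T : E →L[ℂ] E) (x₀ : E) (hx₀ : ‖x₀‖ = 1) :
    ∃ y : E, ‖y‖ = 1 ∧ ‖T y‖ = ‖T‖ := by
  have hcs : IsCompact (Metric.sphere (0:E) 1) := isCompact_sphere 0 1
  have hne : (Metric.sphere (0:E) 1).Nonempty :=
    ⟨x₀, by rwa [mem_sphere_zero_iff_norm]⟩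
  obtain ⟨y, hy, hmax'⟩ := hcs.exists_isMaxOn hne (T.continuous.norm).continuousOn
  have hmax : ∀ z ∈ Metric.sphere (0:E) 1, ‖T z‖ ≤ ‖T y‖ := fun z hz => hmax' hz
  rw [mem_sphere_zero_iff_norm] at hy
  have hle : ‖T y‖ ≤ ‖T‖ := by
    calc ‖T y‖ ≤ ‖T‖ * ‖y‖ := T.le_opNorm y
      _ = ‖T‖ := by rw [hy, mul_one]
  refine ⟨y, hy, le_antisymm hle ?_⟩
  refine T.opNorm_le_bound (norm_nonneg _) fun z => ?_
  rcases eq_or_ne z 0 with rfl | hz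
  · simp
  · have hnz : (0:ℝ) < ‖z‖ := norm_pos_iff.2 hz
    have h1 : ‖((‖z‖⁻¹ : ℂ)) • z‖ = 1 := by
      rw [norm_smul]
      simp [hnz.ne']
    have h2 := hmax (((‖z‖⁻¹ : ℂ)) • z) (by rwa [mem_sphere_zero_iff_norm])
    rw [map_smul, norm_smul] at h2
    simp only [Complex.norm_real, norm_inv, Complex.norm_real] at h2
    have : ‖z‖⁻¹ * ‖T z‖ ≤ ‖T y‖ := by
      simpa [abs_of_nonneg (norm_nonneg z)] using h2
    calc ‖T z‖ = ‖z‖ * (‖z‖⁻¹ * ‖T z‖) := by field_simp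
      _ ≤ ‖z‖ * ‖T y‖ := by nlinarith [hnz.le]
      _ = ‖T y‖ * ‖z‖ := mul_comm _ _

lemma bj_iff_inner (T B : E →L[ℂ] E) (x : E) (hx : ‖x‖ = 1)
    (hM : ∀ y : E, ‖T y‖ = ‖T‖ * ‖y‖ ↔ ∃ c : ℂ, y = c • x) :
    (∀ c : ℂ, ‖T‖ ≤ ‖T + c • B‖) ↔ ⟪T x, B x⟫_ℂ = 0 := by
  have hTx : ‖T x‖ = ‖T‖ := by
    have := (hM x).2 ⟨1, (one_smul _ _).symm⟩
    rw [hx, mul_one] at this; exact this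
  constructor
  · -- hard direction
    intro hbj
    by_contra hd
    set d : ℂ := ⟪T x, B x⟫_ℂ with hdd
    have hdn : (0:ℝ) < ‖d‖ := norm_pos_iff.2 hd
    have hBx : B x ≠ 0 := by
      intro h; exact hd (by rw [hdd, h, inner_zero_right])
    have hB : (0:ℝ) < ‖B‖ := by
      have h1 : (0:ℝ) < ‖B x‖ := norm_pos_iff.2 hBx
      have h2 : ‖B x‖ ≤ ‖B‖ := by
        calc ‖B x‖ ≤ ‖B‖ * ‖x‖ := B.le_opNorm x
          _ = ‖B‖ := by rw [hx, mul_one]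
      linarith
    have hTxne : T x ≠ 0 := by
      intro h; exact hd (by rw [hdd, h, inner_zero_left])
    have hT : (0:ℝ) < ‖T‖ := by
      rw [← hTx]; exact norm_pos_iff.2 hTxne
    set φ : E → ℝ := fun y => ((starRingEnd ℂ d) * ⟪T y, B y⟫_ℂ).re with hφ
    have hφcont : Continuous φ :=
      Complex.continuous_re.comp (continuous_const.mul (T.continuous.inner B.continuous))
    have hφx : ∀ c : ℂ, ‖c‖ = 1 → φ (c • x) = ‖d‖ ^ 2 := by
      intro c hc
      have h1 : ⟪T (c • x), B (c • x)⟫_ℂ = d := by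
        rw [map_smul, map_smul, inner_smul_left, inner_smul_right, ← mul_assoc,
          ← Complex.normSq_eq_conj_mul_self]
        have h2 : Complex.normSq c = 1 := by
          have h3 := Complex.sq_norm c
          rw [← h3, hc, one_pow]
        rw [h2, Complex.ofReal_one, one_mul]
      rw [hφ]
      simp only [h1]
      rw [← Complex.normSq_eq_conj_mul_self, Complex.ofReal_re, Complex.normSq_eq_norm_sq]
    set K : Set E := Metric.sphere (0:E) 1 ∩ {y | φ y ≤ ‖d‖ ^ 2 / 2} with hK
    have hKc : IsCompact K :=
      (isCompact_sphere 0 1).inter_right (isClosed_le hφcont continuous_const)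
    have hK0 : IsCompact (insert (0:E) K) := hKc.insert 0
    obtain ⟨y₀, hy₀mem, hy₀max'⟩ :=
      hK0.exists_isMaxOn ⟨0, Set.mem_insert _ _⟩ (T.continuous.norm).continuousOn
    have hy₀max : ∀ z ∈ K, ‖T z‖ ≤ ‖T y₀‖ := fun z hz => hy₀max' (Set.mem_insert_iff.2 (Or.inr hz))
    set m : ℝ := ‖T y₀‖ with hm0
    have hmnn : 0 ≤ m := norm_nonneg _
    have hm : m < ‖T‖ := by
      rcases Set.mem_insert_iff.1 hy₀mem with h0 | hy₀K
      · rw [hm0, h0, map_zero, norm_zero]; exact hT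
      · obtain ⟨hy₀s, hy₀φ⟩ := hy₀K
        rw [mem_sphere_zero_iff_norm] at hy₀s
        have hle : ‖T y₀‖ ≤ ‖T‖ := by
          calc ‖T y₀‖ ≤ ‖T‖ * ‖y₀‖ := T.le_opNorm y₀
            _ = ‖T‖ := by rw [hy₀s, mul_one]
        rcases lt_or_eq_of_le hle with h | h
        · exact h
        · exfalso
          obtain ⟨c, hc⟩ := (hM y₀).1 (by rw [h, hy₀s, mul_one])
          have hc1 : ‖c‖ = 1 := by
            have := hy₀s
            rw [hc, norm_smul, hx, mul_one] at this
            exact this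
          have h5 := hφx c hc1
          rw [← hc] at h5
          have h6 : φ y₀ ≤ ‖d‖ ^ 2 / 2 := hy₀φ
          rw [h5] at h6
          nlinarith
    -- choose t
    obtain ⟨t, htpos, ht1, ht2⟩ :
        ∃ t : ℝ, 0 < t ∧ t * ‖B‖ ^ 2 < ‖d‖ ∧ m + t * ‖B‖ < ‖T‖ := by
      refine ⟨(1/2) * min (‖d‖ / ‖B‖ ^ 2) ((‖T‖ - m) / ‖B‖), ?_, ?_, ?_⟩
      · apply mul_pos (by norm_num)
        exact lt_min (div_pos hdn (pow_pos hB 2)) (div_pos (by linarith) hB)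
      · have h1 : min (‖d‖ / ‖B‖ ^ 2) ((‖T‖ - m) / ‖B‖) ≤ ‖d‖ / ‖B‖ ^ 2 :=
          min_le_left _ _
        have hB2 : (0:ℝ) < ‖B‖ ^ 2 := pow_pos hB 2
        calc (1/2) * min (‖d‖ / ‖B‖ ^ 2) ((‖T‖ - m) / ‖B‖) * ‖B‖ ^ 2
            ≤ (1/2) * (‖d‖ / ‖B‖ ^ 2) * ‖B‖ ^ 2 := by nlinarith
          _ = (1/2) * ‖d‖ := by rw [mul_assoc, div_mul_cancel₀ _ (ne_of_gt hB2)]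
          _ < ‖d‖ := by linarith
      · have h1 : min (‖d‖ / ‖B‖ ^ 2) ((‖T‖ - m) / ‖B‖) ≤ (‖T‖ - m) / ‖B‖ :=
          min_le_right _ _
        have h3 : (‖T‖ - m) / ‖B‖ * ‖B‖ = ‖T‖ - m := div_mul_cancel₀ _ (ne_of_gt hB)
        have h4 := mul_le_mul_of_nonneg_right h1 hB.le
        rw [h3] at h4
        nlinarith
    obtain ⟨c, hcn, hcre⟩ :
        ∃ c : ℂ, ‖c‖ = t ∧
          ∀ w : ℂ, (c * w).re = -(t / ‖d‖) * ((starRingEnd ℂ) d * w).re := by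
      refine ⟨((-(t / ‖d‖) : ℝ) : ℂ) * starRingEnd ℂ d, ?_, fun w => ?_⟩
      · rw [norm_mul, Complex.norm_real, RCLike.norm_conj, Real.norm_eq_abs,
          abs_of_nonpos (neg_nonpos.2 (div_nonneg htpos.le hdn.le)), neg_neg]
        exact div_mul_cancel₀ t (ne_of_gt hdn)
      · rw [mul_assoc, Complex.re_ofReal_mul]
    obtain ⟨y, hy1, hyS⟩ := norm_attain_s7 (T + c • B) x hx
    have hge : ‖T‖ ≤ ‖(T + c • B) y‖ := by rw [hyS]; exact hbj c
    have happ : (T + c • B) y = T y + c • B y := by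
      rw [ContinuousLinearMap.add_apply, ContinuousLinearMap.smul_apply]
    by_cases hyK : φ y ≤ ‖d‖ ^ 2 / 2
    · have hymem : y ∈ K := ⟨by rwa [mem_sphere_zero_iff_norm], hyK⟩
      have h1 : ‖T y‖ ≤ m := hy₀max y hymem
      have h2 : ‖c • B y‖ ≤ t * ‖B‖ := by
        rw [norm_smul, hcn]
        have : ‖B y‖ ≤ ‖B‖ := by
          calc ‖B y‖ ≤ ‖B‖ * ‖y‖ := B.le_opNorm y
            _ = ‖B‖ := by rw [hy1, mul_one]
        nlinarith
      have : ‖(T + c • B) y‖ ≤ m + t * ‖B‖ := by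
        rw [happ]
        calc ‖T y + c • B y‖ ≤ ‖T y‖ + ‖c • B y‖ := norm_add_le _ _
          _ ≤ m + t * ‖B‖ := by linarith
      linarith
    · push_neg at hyK
      have hexp : ‖(T + c • B) y‖ ^ 2
          = ‖T y‖ ^ 2 + 2 * (⟪T y, c • B y⟫_ℂ).re + ‖c • B y‖ ^ 2 := by
        rw [happ]; exact norm_add_sq (𝕜 := ℂ) _ _
      have hre : (⟪T y, c • B y⟫_ℂ).re = -(t / ‖d‖) * φ y := by
        rw [inner_smul_right, hcre]
      have hre2 : 2 * (⟪T y, c • B y⟫_ℂ).re ≤ -(t * ‖d‖) := by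
        rw [hre]
        have h1 : -(t / ‖d‖) * φ y ≤ -(t / ‖d‖) * (‖d‖ ^ 2 / 2) := by
          apply mul_le_mul_of_nonpos_left hyK.le
          have : 0 < t / ‖d‖ := by positivity
          linarith
        have hdne : ‖d‖ ≠ 0 := hdn.ne'
        have h2 : -(t / ‖d‖) * (‖d‖ ^ 2 / 2) = -(t * ‖d‖) / 2 := by
          field_simp
        nlinarith
      have hT2 : ‖T y‖ ^ 2 ≤ ‖T‖ ^ 2 := by
        have : ‖T y‖ ≤ ‖T‖ := by
          calc ‖T y‖ ≤ ‖T‖ * ‖y‖ := T.le_opNorm y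
            _ = ‖T‖ := by rw [hy1, mul_one]
        nlinarith [norm_nonneg (T y)]
      have hcB2 : ‖c • B y‖ ^ 2 ≤ t ^ 2 * ‖B‖ ^ 2 := by
        rw [norm_smul, hcn]
        have h1 : ‖B y‖ ≤ ‖B‖ := by
          calc ‖B y‖ ≤ ‖B‖ * ‖y‖ := B.le_opNorm y
            _ = ‖B‖ := by rw [hy1, mul_one]
        have h2 : ‖B y‖ ^ 2 ≤ ‖B‖ ^ 2 := by nlinarith [norm_nonneg (B y)]
        have h3 := mul_le_mul_of_nonneg_left h2 (sq_nonneg t)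
        calc (t * ‖B y‖) ^ 2 = t ^ 2 * ‖B y‖ ^ 2 := by ring
          _ ≤ t ^ 2 * ‖B‖ ^ 2 := h3
      have hfin : ‖(T + c • B) y‖ ^ 2 < ‖T‖ ^ 2 := by
        rw [hexp]
        have : t ^ 2 * ‖B‖ ^ 2 = t * (t * ‖B‖ ^ 2) := by ring
        nlinarith
      have : ‖T‖ ^ 2 ≤ ‖(T + c • B) y‖ ^ 2 := by nlinarith [norm_nonneg ((T + c • B) y)]
      linarith
  · -- easy direction
    intro hd c
    have h0 : (⟪T x, c • B x⟫_ℂ) = 0 := by rw [inner_smul_right, hd, mul_zero]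
    have hexp : ‖T x + c • B x‖ ^ 2 = ‖T x‖ ^ 2 + ‖c • B x‖ ^ 2 := by
      have := norm_add_sq (𝕜 := ℂ) (T x) (c • B x)
      rw [h0] at this
      simpa using this
    have h1 : ‖T x‖ ≤ ‖T x + c • B x‖ := by
      nlinarith [norm_nonneg (T x + c • B x), norm_nonneg (T x), norm_nonneg (c • B x)]
    calc ‖T‖ = ‖T x‖ := hTx.symm
      _ ≤ ‖T x + c • B x‖ := h1
      _ = ‖(T + c • B) x‖ := by rw [ContinuousLinearMap.add_apply, ContinuousLinearMap.smul_apply]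
      _ ≤ ‖T + c • B‖ * ‖x‖ := (T + c • B).le_opNorm x
      _ = ‖T + c • B‖ := by rw [hx, mul_one]

/-- If the set of norm-attaining vectors of `A ∈ M_n(ℂ)` is exactly the complex line `ℂ·x`
spanned by a unit vector `x`, then `A` and the rank-one matrix `R = (Ax)x*` have the same
outgoing neighbourhood: `A ⊥ B ↔ R ⊥ B` for every `B`. -/
theorem perp_eq_perp_rankOne {n : ℕ} (A : Matrix (Fin n) (Fin n) ℂ)
    (x : EuclideanSpace ℂ (Fin n)) (hx : ‖x‖ = 1)
    (hM : {y : EuclideanSpace ℂ (Fin n) | ‖Matrix.toEuclideanLin A y‖ = ‖A‖ * ‖y‖} =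
      {y : EuclideanSpace ℂ (Fin n) | ∃ c : ℂ, y = c • x})
    (R : Matrix (Fin n) (Fin n) ℂ)
    (hR : R = Matrix.vecMulVec (fun i => Matrix.toEuclideanLin A x i)
      (fun j => starRingEnd ℂ (x j))) :
    ∀ B : Matrix (Fin n) (Fin n) ℂ, BJ A B ↔ BJ R B := by
  intro B
  set T := Matrix.toEuclideanCLM (𝕜 := ℂ) A with hT
  have hTapp : ∀ y, Matrix.toEuclideanLin A y = T y := fun y => by
    rw [hT, ← Matrix.coe_toEuclideanCLM_eq_toEuclideanLin]; rfl
  have hAnorm : ‖A‖ = ‖T‖ := Matrix.cstar_norm_def A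
  have hM' : ∀ y : EuclideanSpace ℂ (Fin n),
      ‖T y‖ = ‖T‖ * ‖y‖ ↔ ∃ c : ℂ, y = c • x := fun y => by
    rw [← hTapp, ← hAnorm]
    exact Set.ext_iff.mp hM y
  have hBJ : ∀ U V : Matrix (Fin n) (Fin n) ℂ, BJ U V ↔
      (∀ c : ℂ, ‖Matrix.toEuclideanCLM (𝕜 := ℂ) U‖ ≤
        ‖Matrix.toEuclideanCLM (𝕜 := ℂ) U + c • Matrix.toEuclideanCLM (𝕜 := ℂ) V‖) := by
    intro U V
    unfold BJ
    apply forall_congr'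
    intro c
    rw [Matrix.cstar_norm_def, Matrix.cstar_norm_def, map_add, map_smul]
  -- x is norm-attaining for A
  have hxM : ‖T x‖ = ‖T‖ := by
    have := (hM' x).2 ⟨1, (one_smul _ _).symm⟩
    rwa [hx, mul_one] at this
  by_cases hAx : T x = 0
  · -- then A = 0 and R = 0
    have hA0 : A = 0 := by
      rw [← norm_eq_zero (a := A), hAnorm, ← hxM, hAx, norm_zero]
    have hR0 : R = 0 := by
      rw [hR]
      ext i j
      have h1 : Matrix.toEuclideanLin A x i = 0 := by
        rw [hTapp, hAx]; rfl
      simp only [Matrix.vecMulVec_apply, h1, zero_mul, Matrix.zero_apply]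
    rw [hA0, hR0]
  · -- main case
    set S := Matrix.toEuclideanCLM (𝕜 := ℂ) R with hS
    have hx0 : x ≠ 0 := by
      intro h
      rw [h, norm_zero] at hx
      exact one_ne_zero hx.symm
    have hSy : ∀ (y : EuclideanSpace ℂ (Fin n)) (i : Fin n),
        S y i = ∑ j, R i j * y j := fun y i => rfl
    have hRapp : ∀ y : EuclideanSpace ℂ (Fin n), S y = ⟪x, y⟫_ℂ • (T x) := by
      intro y
      ext i
      rw [hSy, PiLp.smul_apply, smul_eq_mul, PiLp.inner_apply]
      simp only [hR, Matrix.vecMulVec_apply, hTapp, RCLike.inner_apply]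
      rw [Finset.sum_mul]
      apply Finset.sum_congr rfl
      intro j _
      ring
    have hSx : S x = T x := by
      rw [hRapp, inner_self_eq_norm_sq_to_K, hx]
      norm_num
    have hTxn : (0:ℝ) < ‖T x‖ := norm_pos_iff.2 hAx
    have hSnorm : ‖S‖ = ‖T x‖ := by
      apply le_antisymm
      · apply ContinuousLinearMap.opNorm_le_bound _ (norm_nonneg (T x))
        intro y
        rw [hRapp, norm_smul]
        have h1 : ‖⟪x, y⟫_ℂ‖ ≤ ‖y‖ := by
          have h2 := norm_inner_le_norm (𝕜 := ℂ) x y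
          rwa [hx, one_mul] at h2
        calc ‖⟪x, y⟫_ℂ‖ * ‖T x‖ ≤ ‖y‖ * ‖T x‖ := by nlinarith
          _ = ‖T x‖ * ‖y‖ := mul_comm _ _
      · have h3 := S.le_opNorm x
        rw [hSx, hx, mul_one] at h3
        exact h3
    have hMS : ∀ y : EuclideanSpace ℂ (Fin n),
        ‖S y‖ = ‖S‖ * ‖y‖ ↔ ∃ c : ℂ, y = c • x := by
      intro y
      rw [hRapp, norm_smul, hSnorm]
      constructor
      · intro h
        have h2 : ‖⟪x, y⟫_ℂ‖ = ‖y‖ := by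
          apply mul_right_cancel₀ hTxn.ne'
          rw [h, mul_comm]
        have h2' : ‖⟪x, y⟫_ℂ‖ = ‖x‖ * ‖y‖ := by rw [hx, one_mul, h2]
        have h4 := ((norm_inner_eq_norm_tfae (𝕜 := ℂ) x y).out 0 2).1 h2'
        rcases h4 with h5 | h5
        · exact absurd h5 hx0
        · exact h5
      · rintro ⟨c, rfl⟩
        rw [inner_smul_right, inner_self_eq_norm_sq_to_K, hx, norm_smul]
        push_cast
        rw [one_pow, mul_one, hx]
        ring
    rw [hBJ A B, hBJ R B, ← hT, ← hS,
      bj_iff_inner T (Matrix.toEuclideanCLM (𝕜 := ℂ) B) x hx hM',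
      bj_iff_inner S (Matrix.toEuclideanCLM (𝕜 := ℂ) B) x hx hMS, hSx]
end

section
/- Let V = {X ∈ M₂(ℂ) : X₁₁ = 0}, where M₂(ℂ) carries the operator norm induced by the Euclidean norm, and let ⊥ denote Birkhoff–James orthogonality with complex scalars. Then each of the matrix units E₂₂, E₁₂, and E₂₁ is left-symmetric relative to V: for every B ∈ V, if E ⊥ B then B ⊥ E (where E is any of these three matrix units, all of which lie in V). -/
open scoped Matrix.Norms.L2Operator

open Matrix in
private lemma cs2 (a b x y : ℂ) : ‖a*x + b*y‖^2 ≤ (‖a‖^2+‖b‖^2) * (‖x‖^2+‖y‖^2) := by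
  have h : ‖a*x + b*y‖ ≤ ‖a‖*‖x‖ + ‖b‖*‖y‖ := by
    calc ‖a*x + b*y‖ ≤ ‖a*x‖ + ‖b*y‖ := norm_add_le _ _
    _ = ‖a‖*‖x‖ + ‖b‖*‖y‖ := by rw [norm_mul, norm_mul]
  nlinarith [norm_nonneg (a*x+b*y), norm_nonneg a, norm_nonneg b, norm_nonneg x, norm_nonneg y,
    sq_nonneg (‖a‖*‖y‖ - ‖b‖*‖x‖)]

private lemma norm_toCLM (A : Matrix (Fin 2) (Fin 2) ℂ) :
    ‖A‖ = ‖Matrix.toEuclideanCLM (𝕜 := ℂ) A‖ := Matrix.cstar_norm_def A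

open Matrix in
private lemma toCLM_apply_norm (A : Matrix (Fin 2) (Fin 2) ℂ) (v : EuclideanSpace ℂ (Fin 2)) :
    ‖Matrix.toEuclideanCLM (𝕜 := ℂ) A v‖
      = Real.sqrt (‖A 0 0 * v 0 + A 0 1 * v 1‖^2 + ‖A 1 0 * v 0 + A 1 1 * v 1‖^2) := by
  rw [EuclideanSpace.norm_eq, Fin.sum_univ_two]
  have h : ∀ i, (Matrix.toEuclideanCLM (𝕜 := ℂ) A v) i
      = (A *ᵥ (WithLp.equiv 2 (Fin 2 → ℂ) v)) i := fun i => rfl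
  rw [h 0, h 1]
  simp [Matrix.mulVec, dotProduct, Fin.sum_univ_two]

private lemma opNorm_le_bound2 (A : Matrix (Fin 2) (Fin 2) ℂ) (C : ℝ) (hC : 0 ≤ C)
    (h : ∀ x y : ℂ, ‖A 0 0 * x + A 0 1 * y‖^2 + ‖A 1 0 * x + A 1 1 * y‖^2
           ≤ C^2 * (‖x‖^2 + ‖y‖^2)) :
    ‖A‖ ≤ C := by
  rw [norm_toCLM]
  apply ContinuousLinearMap.opNorm_le_bound _ hC
  intro v
  have hv : ‖v‖ = Real.sqrt (‖v 0‖^2 + ‖v 1‖^2) := by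
    rw [EuclideanSpace.norm_eq, Fin.sum_univ_two]
  rw [toCLM_apply_norm, hv, ← Real.sqrt_sq hC, ← Real.sqrt_mul (by positivity)]
  exact Real.sqrt_le_sqrt (h (v 0) (v 1))

private lemma col_le (A : Matrix (Fin 2) (Fin 2) ℂ) (j : Fin 2) :
    Real.sqrt (‖A 0 j‖^2 + ‖A 1 j‖^2) ≤ ‖A‖ := by
  have hv : ‖(EuclideanSpace.single j (1:ℂ))‖ = 1 := by
    simp [EuclideanSpace.norm_single]
  have h := (Matrix.toEuclideanCLM (𝕜 := ℂ) A).le_opNorm (EuclideanSpace.single j 1)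
  rw [hv, mul_one, toCLM_apply_norm, ← norm_toCLM] at h
  have hs : ∀ i, A i 0 * (EuclideanSpace.single j (1:ℂ)) 0
      + A i 1 * (EuclideanSpace.single j (1:ℂ)) 1 = A i j := by
    intro i
    fin_cases j <;> simp [EuclideanSpace.single_apply]
  rw [hs 0, hs 1] at h
  exact h

open Matrix in
private lemma row_le (A : Matrix (Fin 2) (Fin 2) ℂ) (i : Fin 2) :
    Real.sqrt (‖A i 0‖^2 + ‖A i 1‖^2) ≤ ‖A‖ := by
  have h := col_le (Aᴴ) i
  rw [Matrix.l2_opNorm_conjTranspose] at h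
  simpa [Matrix.conjTranspose_apply] using h

private lemma frob_le (A : Matrix (Fin 2) (Fin 2) ℂ) :
    ‖A‖ ≤ Real.sqrt (‖A 0 0‖^2 + ‖A 0 1‖^2 + ‖A 1 0‖^2 + ‖A 1 1‖^2) := by
  apply opNorm_le_bound2 _ _ (Real.sqrt_nonneg _)
  intro x y
  rw [Real.sq_sqrt (by positivity)]
  have h1 := cs2 (A 0 0) (A 0 1) x y
  have h2 := cs2 (A 1 0) (A 1 1) x y
  nlinarith [norm_nonneg x, norm_nonneg y, sq_nonneg (‖x‖), sq_nonneg (‖y‖),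
    norm_nonneg (A 0 0), norm_nonneg (A 0 1), norm_nonneg (A 1 0), norm_nonneg (A 1 1)]

private lemma contra_aux (b : ℂ) (hb : b ≠ 0) (S : ℝ) (hS : 0 ≤ S) :
    ∃ c : ℂ, ‖c‖^2 * S + ‖1 + c * b‖^2 < 1 := by
  set u : ℝ := ‖b‖^2 with hu
  have hu0 : 0 < u := by
    rw [hu]
    exact pow_pos (norm_pos_iff.mpr hb) 2
  set t : ℝ := u / (u + S) with ht
  have ht0 : 0 < t := div_pos hu0 (by linarith)
  have ht1 : t ≤ 1 := by
    rw [ht, div_le_one (by positivity)]; linarith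
  refine ⟨-(t:ℂ)/b, ?_⟩
  have h1 : (1 : ℂ) + (-(t:ℂ)/b) * b = ((1 - t : ℝ) : ℂ) := by
    field_simp
    push_cast; ring
  rw [h1]
  have h2 : ‖((1 - t : ℝ) : ℂ)‖ = 1 - t := by
    rw [Complex.norm_real, Real.norm_eq_abs, abs_of_nonneg (by linarith)]
  have h3 : ‖-(t:ℂ)/b‖^2 = t^2 / u := by
    rw [norm_div, norm_neg, Complex.norm_real, Real.norm_eq_abs, abs_of_nonneg ht0.le,
      div_pow, hu]
  rw [h2, h3]
  have key : t^2 / u * S + (1-t)^2 = 1 - t := by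
    rw [ht]; field_simp; ring
  rw [key]; linarith

/-- `A` is left-symmetric relative to the subset `S`. -/
def LeftSymmRel {E : Type*} [Norm E] [Add E] [SMul ℂ E] (S : Set E) (A : E) : Prop :=
  A ∈ S ∧ ∀ B ∈ S, BJ A B → BJ B A

/-- The subspace `V = {X ∈ M₂(ℂ) : X₁₁ = 0}`. -/
def V : Set (Matrix (Fin 2) (Fin 2) ℂ) := {X | X 0 0 = 0}

private lemma case22 : LeftSymmRel V (Matrix.single 1 1 (1 : ℂ)) := by
  constructor
  · show (Matrix.single 1 1 (1:ℂ)) 0 0 = 0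
    simp
  intro B hB hEB
  have hB00 : B 0 0 = 0 := hB
  set E : Matrix (Fin 2) (Fin 2) ℂ := Matrix.single 1 1 (1 : ℂ) with hE
  have hE1 : (1:ℝ) ≤ ‖E‖ := by
    have h := col_le E 1
    simp only [hE, Matrix.single_apply_same,
      Matrix.single_apply_of_row_ne (show (1:Fin 2) ≠ 0 by decide)] at h
    simpa using h
  have hd : B 1 1 = 0 := by
    by_contra hd
    obtain ⟨c, hc⟩ := contra_aux (B 1 1) hd (‖B 0 1‖^2 + ‖B 1 0‖^2) (by positivity)
    have h2 := frob_le (E + c • B)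
    have e00 : (E + c • B) 0 0 = 0 := by
      simp [hE, Matrix.add_apply, Matrix.smul_apply, hB00]
    have e01 : (E + c • B) 0 1 = c * B 0 1 := by
      simp [hE, Matrix.add_apply, Matrix.smul_apply]
    have e10 : (E + c • B) 1 0 = c * B 1 0 := by
      simp [hE, Matrix.add_apply, Matrix.smul_apply]
    have e11 : (E + c • B) 1 1 = 1 + c * B 1 1 := by
      simp [hE, Matrix.add_apply, Matrix.smul_apply]
    rw [e00, e01, e10, e11] at h2
    have hlt : ‖E + c • B‖ < 1 := by
      refine lt_of_le_of_lt h2 ?_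
      rw [← Real.sqrt_one]
      apply Real.sqrt_lt_sqrt (by positivity)
      simp only [norm_zero, norm_mul, mul_pow]
      nlinarith [hc, norm_nonneg c, norm_nonneg (B 0 1), norm_nonneg (B 1 0)]
    have := hEB c
    linarith
  intro c
  have hub : ‖B‖ ≤ max ‖B 0 1‖ ‖B 1 0‖ := by
    apply opNorm_le_bound2 _ _ (le_max_of_le_left (norm_nonneg _))
    intro x y
    rw [hB00, hd]
    simp only [zero_mul, add_zero, zero_add, mul_zero, norm_mul]
    have h1 : ‖B 0 1‖ ≤ max ‖B 0 1‖ ‖B 1 0‖ := le_max_left _ _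
    have h2 : ‖B 1 0‖ ≤ max ‖B 0 1‖ ‖B 1 0‖ := le_max_right _ _
    nlinarith [norm_nonneg x, norm_nonneg y, sq_nonneg ‖x‖, sq_nonneg ‖y‖,
      pow_le_pow_left₀ (norm_nonneg (B 0 1)) h1 2, pow_le_pow_left₀ (norm_nonneg (B 1 0)) h2 2]
  have hlb1 : ‖B 0 1‖ ≤ ‖B + c • E‖ := by
    have h := row_le (B + c • E) 0
    have e0 : (B + c • E) 0 0 = 0 := by
      simp [hE, Matrix.add_apply, Matrix.smul_apply, hB00]
    have e1 : (B + c • E) 0 1 = B 0 1 := by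
      simp [hE, Matrix.add_apply, Matrix.smul_apply]
    rw [e0, e1] at h
    simpa [Real.sqrt_sq_eq_abs] using h
  have hlb2 : ‖B 1 0‖ ≤ ‖B + c • E‖ := by
    have h := col_le (B + c • E) 0
    have e0 : (B + c • E) 0 0 = 0 := by
      simp [hE, Matrix.add_apply, Matrix.smul_apply, hB00]
    have e1 : (B + c • E) 1 0 = B 1 0 := by
      simp [hE, Matrix.add_apply, Matrix.smul_apply]
    rw [e0, e1] at h
    simpa [Real.sqrt_sq_eq_abs] using h
  exact le_trans hub (max_le hlb1 hlb2)

private lemma case12 : LeftSymmRel V (Matrix.single 0 1 (1 : ℂ)) := by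
  constructor
  · show (Matrix.single 0 1 (1:ℂ)) 0 0 = 0
    simp
  intro B hB hEB
  have hB00 : B 0 0 = 0 := hB
  set E : Matrix (Fin 2) (Fin 2) ℂ := Matrix.single 0 1 (1 : ℂ) with hE
  have hE1 : (1:ℝ) ≤ ‖E‖ := by
    have h := col_le E 1
    simp only [hE, Matrix.single_apply_same,
      Matrix.single_apply_of_row_ne (show (0:Fin 2) ≠ 1 by decide)] at h
    simpa using h
  have hd : B 0 1 = 0 := by
    by_contra hd
    obtain ⟨c, hc⟩ := contra_aux (B 0 1) hd (‖B 1 0‖^2 + ‖B 1 1‖^2) (by positivity)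
    have h2 := frob_le (E + c • B)
    have e00 : (E + c • B) 0 0 = 0 := by
      simp [hE, Matrix.add_apply, Matrix.smul_apply, hB00]
    have e01 : (E + c • B) 0 1 = 1 + c * B 0 1 := by
      simp [hE, Matrix.add_apply, Matrix.smul_apply]
    have e10 : (E + c • B) 1 0 = c * B 1 0 := by
      simp [hE, Matrix.add_apply, Matrix.smul_apply]
    have e11 : (E + c • B) 1 1 = c * B 1 1 := by
      simp [hE, Matrix.add_apply, Matrix.smul_apply]
    rw [e00, e01, e10, e11] at h2
    have hlt : ‖E + c • B‖ < 1 := by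
      refine lt_of_le_of_lt h2 ?_
      rw [← Real.sqrt_one]
      apply Real.sqrt_lt_sqrt (by positivity)
      simp only [norm_zero, norm_mul, mul_pow]
      nlinarith [hc, norm_nonneg c, norm_nonneg (B 1 0), norm_nonneg (B 1 1)]
    have := hEB c
    linarith
  intro c
  have hub : ‖B‖ ≤ Real.sqrt (‖B 1 0‖^2 + ‖B 1 1‖^2) := by
    have h := frob_le B
    rw [hB00, hd] at h
    simpa using h
  have hlb : Real.sqrt (‖B 1 0‖^2 + ‖B 1 1‖^2) ≤ ‖B + c • E‖ := by
    have h := row_le (B + c • E) 1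
    have e0 : (B + c • E) 1 0 = B 1 0 := by
      simp [hE, Matrix.add_apply, Matrix.smul_apply]
    have e1 : (B + c • E) 1 1 = B 1 1 := by
      simp [hE, Matrix.add_apply, Matrix.smul_apply]
    rw [e0, e1] at h
    exact h
  exact le_trans hub hlb

private lemma case21 : LeftSymmRel V (Matrix.single 1 0 (1 : ℂ)) := by
  constructor
  · show (Matrix.single 1 0 (1:ℂ)) 0 0 = 0
    simp
  intro B hB hEB
  have hB00 : B 0 0 = 0 := hB
  set E : Matrix (Fin 2) (Fin 2) ℂ := Matrix.single 1 0 (1 : ℂ) with hE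
  have hE1 : (1:ℝ) ≤ ‖E‖ := by
    have h := col_le E 0
    simp only [hE, Matrix.single_apply_same,
      Matrix.single_apply_of_row_ne (show (1:Fin 2) ≠ 0 by decide)] at h
    simpa using h
  have hd : B 1 0 = 0 := by
    by_contra hd
    obtain ⟨c, hc⟩ := contra_aux (B 1 0) hd (‖B 0 1‖^2 + ‖B 1 1‖^2) (by positivity)
    have h2 := frob_le (E + c • B)
    have e00 : (E + c • B) 0 0 = 0 := by
      simp [hE, Matrix.add_apply, Matrix.smul_apply, hB00]
    have e01 : (E + c • B) 0 1 = c * B 0 1 := by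
      simp [hE, Matrix.add_apply, Matrix.smul_apply]
    have e10 : (E + c • B) 1 0 = 1 + c * B 1 0 := by
      simp [hE, Matrix.add_apply, Matrix.smul_apply]
    have e11 : (E + c • B) 1 1 = c * B 1 1 := by
      simp [hE, Matrix.add_apply, Matrix.smul_apply]
    rw [e00, e01, e10, e11] at h2
    have hlt : ‖E + c • B‖ < 1 := by
      refine lt_of_le_of_lt h2 ?_
      rw [← Real.sqrt_one]
      apply Real.sqrt_lt_sqrt (by positivity)
      simp only [norm_zero, norm_mul, mul_pow]
      nlinarith [hc, norm_nonneg c, norm_nonneg (B 0 1), norm_nonneg (B 1 1)]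
    have := hEB c
    linarith
  intro c
  have hub : ‖B‖ ≤ Real.sqrt (‖B 0 1‖^2 + ‖B 1 1‖^2) := by
    have h := frob_le B
    rw [hB00, hd] at h
    simpa using h
  have hlb : Real.sqrt (‖B 0 1‖^2 + ‖B 1 1‖^2) ≤ ‖B + c • E‖ := by
    have h := col_le (B + c • E) 1
    have e0 : (B + c • E) 0 1 = B 0 1 := by
      simp [hE, Matrix.add_apply, Matrix.smul_apply]
    have e1 : (B + c • E) 1 1 = B 1 1 := by
      simp [hE, Matrix.add_apply, Matrix.smul_apply]
    rw [e0, e1] at h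
    exact h
  exact le_trans hub hlb

/-- Each of the matrix units `E₂₂`, `E₁₂`, `E₂₁` is left-symmetric relative to
`V = {X ∈ M₂(ℂ) : X₁₁ = 0}` (Euclidean operator norm, complex scalars). -/
theorem matrix_units_leftSymmetric_in_V :
    LeftSymmRel V (Matrix.single 1 1 (1 : ℂ)) ∧
    LeftSymmRel V (Matrix.single 0 1 (1 : ℂ)) ∧
    LeftSymmRel V (Matrix.single 1 0 (1 : ℂ)) := by
  exact ⟨case22, case12, case21⟩
end

section
/- Regard M₂(ℂ), with the operator norm induced by the Euclidean norm, as a normed space over ℝ, so that Birkhoff–James orthogonality uses only real scalars: u ⊥ᵣ v iff ‖u + t·v‖ ≥ ‖u‖ for all t ∈ ℝ. Let V = {X ∈ M₂(ℂ) : X₁₁ = 0}. Then the matrix unit E₂₂ is left-symmetric relative to V with respect to ⊥ᵣ: for every B ∈ V, if E₂₂ ⊥ᵣ B then B ⊥ᵣ E₂₂. -/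
open scoped Matrix.Norms.L2Operator

/-- Birkhoff–James orthogonality with real scalars. -/
def BJr {E : Type*} [Norm E] [Add E] [SMul ℝ E] (u v : E) : Prop :=
  ∀ t : ℝ, ‖u‖ ≤ ‖u + t • v‖

/-- `A` is left-symmetric relative to the subset `S` (real scalars). -/
def LeftSymmRelR {E : Type*} [Norm E] [Add E] [SMul ℝ E] (S : Set E) (A : E) : Prop :=
  A ∈ S ∧ ∀ B ∈ S, BJr A B → BJr B A

section Aux

open Matrix

lemma sq_norm_complex (z : ℂ) : ‖z‖ ^ 2 = z.re ^ 2 + z.im ^ 2 := by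
  rw [Complex.sq_norm, Complex.normSq_apply]; ring

lemma aux_opNorm_le (A : Matrix (Fin 2) (Fin 2) ℂ) {C : ℝ} (hC : 0 ≤ C)
    (h : ∀ x : EuclideanSpace ℂ (Fin 2),
      ‖(EuclideanSpace.equiv (Fin 2) ℂ).symm (A.mulVec x)‖ ≤ C * ‖x‖) : ‖A‖ ≤ C := by
  rw [Matrix.l2_opNorm_def]
  exact ContinuousLinearMap.opNorm_le_bound _ hC h

lemma sq_norm_euclid (x : EuclideanSpace ℂ (Fin 2)) : ‖x‖ ^ 2 = ‖x 0‖ ^ 2 + ‖x 1‖ ^ 2 := by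
  rw [EuclideanSpace.norm_eq, Real.sq_sqrt (by positivity)]
  simp [Fin.sum_univ_two]

lemma sq_norm_symm (v : Fin 2 → ℂ) :
    ‖(EuclideanSpace.equiv (Fin 2) ℂ).symm v‖ ^ 2 = ‖v 0‖ ^ 2 + ‖v 1‖ ^ 2 := by
  rw [EuclideanSpace.norm_eq, Real.sq_sqrt (by positivity)]
  simp [Fin.sum_univ_two]

lemma le_of_sq_le_sq' {a b : ℝ} (ha : 0 ≤ a) (hb : 0 ≤ b) (h : a ^ 2 ≤ b ^ 2) : a ≤ b := by
  nlinarith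

/-- Frobenius bound for the operator norm. -/
lemma frob_bound (A : Matrix (Fin 2) (Fin 2) ℂ) :
    ‖A‖ ≤ Real.sqrt (‖A 0 0‖ ^ 2 + ‖A 0 1‖ ^ 2 + ‖A 1 0‖ ^ 2 + ‖A 1 1‖ ^ 2) := by
  apply aux_opNorm_le _ (Real.sqrt_nonneg _)
  intro x
  set S := ‖A 0 0‖ ^ 2 + ‖A 0 1‖ ^ 2 + ‖A 1 0‖ ^ 2 + ‖A 1 1‖ ^ 2 with hS
  apply le_of_sq_le_sq' (norm_nonneg _) (by positivity)
  have h1 : ‖(EuclideanSpace.equiv (Fin 2) ℂ).symm (A.mulVec x)‖ ^ 2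
      = ‖A.mulVec x 0‖ ^ 2 + ‖A.mulVec x 1‖ ^ 2 := sq_norm_symm _
  have h2 : ‖x‖ ^ 2 = ‖x 0‖ ^ 2 + ‖x 1‖ ^ 2 := sq_norm_euclid x
  have hmv : ∀ i, A.mulVec x i = A i 0 * x 0 + A i 1 * x 1 := by
    intro i; simp [Matrix.mulVec, dotProduct, Fin.sum_univ_two]
  have key : ∀ i, ‖A.mulVec x i‖ ^ 2
      ≤ (‖A i 0‖ ^ 2 + ‖A i 1‖ ^ 2) * (‖x 0‖ ^ 2 + ‖x 1‖ ^ 2) := by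
    intro i
    rw [hmv i]
    have htri : ‖A i 0 * x 0 + A i 1 * x 1‖ ≤ ‖A i 0‖ * ‖x 0‖ + ‖A i 1‖ * ‖x 1‖ := by
      calc ‖A i 0 * x 0 + A i 1 * x 1‖ ≤ ‖A i 0 * x 0‖ + ‖A i 1 * x 1‖ := norm_add_le _ _
        _ = ‖A i 0‖ * ‖x 0‖ + ‖A i 1‖ * ‖x 1‖ := by rw [norm_mul, norm_mul]
    nlinarith [sq_nonneg (‖A i 0‖ * ‖x 1‖ - ‖A i 1‖ * ‖x 0‖), norm_nonneg (A i 0 * x 0 + A i 1 * x 1),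
      mul_nonneg (norm_nonneg (A i 0)) (norm_nonneg (x 0)),
      mul_nonneg (norm_nonneg (A i 1)) (norm_nonneg (x 1))]
  have hsq : (Real.sqrt S * ‖x‖) ^ 2 = S * ‖x‖ ^ 2 := by
    rw [mul_pow, Real.sq_sqrt (by positivity)]
  rw [h1, hsq, h2, hS]
  nlinarith [key 0, key 1, sq_nonneg ‖x 0‖, sq_nonneg ‖x 1‖]

/-- Norm of a diagonal matrix with subunit entries is at most 1. -/
lemma diag_norm_le {α β : ℂ} (hα : ‖α‖ ≤ 1) (hβ : ‖β‖ ≤ 1) :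
    ‖(Matrix.of ![![α, 0], ![0, β]] : Matrix (Fin 2) (Fin 2) ℂ)‖ ≤ 1 := by
  apply aux_opNorm_le _ zero_le_one
  intro x
  rw [one_mul]
  apply le_of_sq_le_sq' (norm_nonneg _) (norm_nonneg _)
  have h1 := sq_norm_symm ((Matrix.of ![![α, 0], ![0, β]] : Matrix (Fin 2) (Fin 2) ℂ).mulVec x)
  have h2 := sq_norm_euclid x
  have hmv0 : (Matrix.of ![![α, 0], ![0, β]] : Matrix (Fin 2) (Fin 2) ℂ).mulVec x 0 = α * x 0 := by
    simp [Matrix.mulVec, dotProduct, Fin.sum_univ_two]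
  have hmv1 : (Matrix.of ![![α, 0], ![0, β]] : Matrix (Fin 2) (Fin 2) ℂ).mulVec x 1 = β * x 1 := by
    simp [Matrix.mulVec, dotProduct, Fin.sum_univ_two]
  rw [h1, h2, hmv0, hmv1, norm_mul, norm_mul]
  nlinarith [mul_le_mul hα hα (norm_nonneg α) zero_le_one,
    mul_le_mul hβ hβ (norm_nonneg β) zero_le_one,
    sq_nonneg ‖x 0‖, sq_nonneg ‖x 1‖]

/-- Phase invariance in the bottom-right corner. -/
lemma phase_inv (b c z ω : ℂ) (hω : ‖ω‖ = 1) :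
    ‖(!![0, b; c, ω * z] : Matrix (Fin 2) (Fin 2) ℂ)‖ = ‖(!![0, b; c, z] : Matrix (Fin 2) (Fin 2) ℂ)‖ := by
  have hω0 : ω ≠ 0 := by intro h; rw [h] at hω; simp at hω
  have hωinv : ‖ω⁻¹‖ = 1 := by rw [norm_inv, hω]; norm_num
  set D : Matrix (Fin 2) (Fin 2) ℂ := Matrix.of ![![(1 : ℂ), 0], ![0, ω]] with hD
  set Di : Matrix (Fin 2) (Fin 2) ℂ := Matrix.of ![![(1 : ℂ), 0], ![0, ω⁻¹]] with hDi
  set E : Matrix (Fin 2) (Fin 2) ℂ := Matrix.of ![![ω⁻¹, 0], ![0, (1 : ℂ)]] with hE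
  set Ei : Matrix (Fin 2) (Fin 2) ℂ := Matrix.of ![![ω, 0], ![0, (1 : ℂ)]] with hEi
  have hid : D * !![0, b; c, z] * E = !![0, b; c, ω * z] := by
    ext i j
    fin_cases i <;> fin_cases j <;>
      simp [hD, hE, Matrix.mul_apply, Fin.sum_univ_two] <;>
      field_simp <;> ring
  have hid2 : Di * !![0, b; c, ω * z] * Ei = !![0, b; c, z] := by
    ext i j
    fin_cases i <;> fin_cases j <;>
      simp [hDi, hEi, Matrix.mul_apply, Fin.sum_univ_two] <;>
      field_simp <;> ring
  have hDn : ‖D‖ ≤ 1 := diag_norm_le (by norm_num) (le_of_eq hω)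
  have hDin : ‖Di‖ ≤ 1 := diag_norm_le (by norm_num) (le_of_eq hωinv)
  have hEn : ‖E‖ ≤ 1 := diag_norm_le (le_of_eq hωinv) (by norm_num)
  have hEin : ‖Ei‖ ≤ 1 := diag_norm_le (le_of_eq hω) (by norm_num)
  apply le_antisymm
  · calc ‖(!![0, b; c, ω * z] : Matrix (Fin 2) (Fin 2) ℂ)‖ = ‖D * !![0, b; c, z] * E‖ := by rw [hid]
      _ ≤ ‖D * !![0, b; c, z]‖ * ‖E‖ := Matrix.l2_opNorm_mul _ _
      _ ≤ ‖D‖ * ‖(!![0, b; c, z] : Matrix (Fin 2) (Fin 2) ℂ)‖ * ‖E‖ := by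
          gcongr; exact Matrix.l2_opNorm_mul _ _
      _ ≤ 1 * ‖(!![0, b; c, z] : Matrix (Fin 2) (Fin 2) ℂ)‖ * 1 := by gcongr <;> positivity
      _ = ‖(!![0, b; c, z] : Matrix (Fin 2) (Fin 2) ℂ)‖ := by ring
  · calc ‖(!![0, b; c, z] : Matrix (Fin 2) (Fin 2) ℂ)‖ = ‖Di * !![0, b; c, ω * z] * Ei‖ := by rw [hid2]
      _ ≤ ‖Di * !![0, b; c, ω * z]‖ * ‖Ei‖ := Matrix.l2_opNorm_mul _ _
      _ ≤ ‖Di‖ * ‖(!![0, b; c, ω * z] : Matrix (Fin 2) (Fin 2) ℂ)‖ * ‖Ei‖ := by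
          gcongr; exact Matrix.l2_opNorm_mul _ _
      _ ≤ 1 * ‖(!![0, b; c, ω * z] : Matrix (Fin 2) (Fin 2) ℂ)‖ * 1 := by gcongr <;> positivity
      _ = ‖(!![0, b; c, ω * z] : Matrix (Fin 2) (Fin 2) ℂ)‖ := by ring

/-- The norm only depends on the absolute value of the bottom-right entry. -/
lemma norm_eq_normabs (b c z : ℂ) :
    ‖(!![0, b; c, z] : Matrix (Fin 2) (Fin 2) ℂ)‖
      = ‖(!![0, b; c, (‖z‖ : ℂ)] : Matrix (Fin 2) (Fin 2) ℂ)‖ := by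
  rcases eq_or_ne z 0 with h | h
  · rw [h]; norm_num
  · have hz : ‖z‖ ≠ 0 := norm_ne_zero_iff.mpr h
    have hω : ‖z / (‖z‖ : ℂ)‖ = 1 := by
      rw [norm_div, Complex.norm_real, Real.norm_eq_abs, abs_of_nonneg (norm_nonneg z)]
      exact div_self hz
    have hzz : z / (‖z‖ : ℂ) * (‖z‖ : ℂ) = z :=
      div_mul_cancel₀ z (Complex.ofReal_ne_zero.mpr hz)
    calc ‖(!![0, b; c, z] : Matrix (Fin 2) (Fin 2) ℂ)‖
        = ‖(!![0, b; c, z / (‖z‖ : ℂ) * (‖z‖ : ℂ)] : Matrix (Fin 2) (Fin 2) ℂ)‖ := by rw [hzz]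
      _ = ‖(!![0, b; c, (‖z‖ : ℂ)] : Matrix (Fin 2) (Fin 2) ℂ)‖ := phase_inv b c _ _ hω

/-- Monotonicity in the (nonnegative real) bottom-right entry. -/
lemma norm_mono (b c : ℂ) {r₁ r₂ : ℝ} (h1 : 0 ≤ r₁) (h12 : r₁ ≤ r₂) :
    ‖(!![0, b; c, (r₁ : ℂ)] : Matrix (Fin 2) (Fin 2) ℂ)‖
      ≤ ‖(!![0, b; c, (r₂ : ℂ)] : Matrix (Fin 2) (Fin 2) ℂ)‖ := by
  rcases eq_or_lt_of_le (h1.trans h12) with h2 | h2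
  · have : r₁ = 0 := le_antisymm (h12.trans h2.symm.le) h1
    rw [this, ← h2]
  · have hr₂ : r₂ ≠ 0 := ne_of_gt h2
    obtain ⟨lam, mu, hlam0, hmu0, hsum, hdiff⟩ :
        ∃ lam mu : ℝ, 0 ≤ lam ∧ 0 ≤ mu ∧ lam + mu = 1 ∧ lam * r₂ + mu * (-r₂) = r₁ :=
      ⟨(r₂ + r₁) / (2 * r₂), (r₂ - r₁) / (2 * r₂), by positivity,
        div_nonneg (by linarith) (by linarith), by field_simp; ring, by field_simp; ring⟩
    have hneg : ‖(!![0, b; c, ((-r₂ : ℝ) : ℂ)] : Matrix (Fin 2) (Fin 2) ℂ)‖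
        = ‖(!![0, b; c, (r₂ : ℂ)] : Matrix (Fin 2) (Fin 2) ℂ)‖ := by
      have : ((-r₂ : ℝ) : ℂ) = (-1 : ℂ) * (r₂ : ℂ) := by push_cast; ring
      rw [this]
      exact phase_inv b c _ _ (by norm_num)
    have hlm : (lam : ℂ) + (mu : ℂ) = 1 := by
      rw [← Complex.ofReal_add, hsum, Complex.ofReal_one]
    have hconv : (lam : ℂ) • (!![0, b; c, (r₂ : ℂ)] : Matrix (Fin 2) (Fin 2) ℂ)
        + (mu : ℂ) • (!![0, b; c, ((-r₂ : ℝ) : ℂ)] : Matrix (Fin 2) (Fin 2) ℂ)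
        = !![0, b; c, (r₁ : ℂ)] := by
      have hb : (lam : ℂ) * b + (mu : ℂ) * b = b := by rw [← add_mul, hlm, one_mul]
      have hc : (lam : ℂ) * c + (mu : ℂ) * c = c := by rw [← add_mul, hlm, one_mul]
      have hdC : (lam : ℂ) * (r₂ : ℂ) + (mu : ℂ) * (-(r₂ : ℂ)) = (r₁ : ℂ) := by
        exact_mod_cast hdiff
      ext i j
      fin_cases i <;> fin_cases j <;> simp [Matrix.smul_apply, smul_eq_mul, hb, hc]
      push_cast at hdC ⊢
      linear_combination hdC
    calc ‖(!![0, b; c, (r₁ : ℂ)] : Matrix (Fin 2) (Fin 2) ℂ)‖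
        = ‖(lam : ℂ) • (!![0, b; c, (r₂ : ℂ)] : Matrix (Fin 2) (Fin 2) ℂ)
            + (mu : ℂ) • (!![0, b; c, ((-r₂ : ℝ) : ℂ)] : Matrix (Fin 2) (Fin 2) ℂ)‖ := by
          rw [hconv]
      _ ≤ ‖(lam : ℂ) • (!![0, b; c, (r₂ : ℂ)] : Matrix (Fin 2) (Fin 2) ℂ)‖
            + ‖(mu : ℂ) • (!![0, b; c, ((-r₂ : ℝ) : ℂ)] : Matrix (Fin 2) (Fin 2) ℂ)‖ :=
          norm_add_le _ _
      _ = lam * ‖(!![0, b; c, (r₂ : ℂ)] : Matrix (Fin 2) (Fin 2) ℂ)‖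
            + mu * ‖(!![0, b; c, ((-r₂ : ℝ) : ℂ)] : Matrix (Fin 2) (Fin 2) ℂ)‖ := by
          rw [norm_smul, norm_smul, Complex.norm_real, Complex.norm_real,
            Real.norm_eq_abs, Real.norm_eq_abs, abs_of_nonneg hlam0, abs_of_nonneg hmu0]
      _ = (lam + mu) * ‖(!![0, b; c, (r₂ : ℂ)] : Matrix (Fin 2) (Fin 2) ℂ)‖ := by
          rw [hneg]; ring
      _ = ‖(!![0, b; c, (r₂ : ℂ)] : Matrix (Fin 2) (Fin 2) ℂ)‖ := by rw [hsum, one_mul]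

end Aux

/-- Regarding `M₂(ℂ)` (Euclidean operator norm) as a real normed space, the matrix unit
`E₂₂` is left-symmetric relative to `V = {X ∈ M₂(ℂ) : X₁₁ = 0}` w.r.t. real-scalar
Birkhoff–James orthogonality. -/
theorem E22_leftSymmetric_in_V_real :
    LeftSymmRelR V (Matrix.single 1 1 (1 : ℂ)) := by
  have hE : Matrix.single 1 1 (1 : ℂ) = !![0, 0; 0, 1] := by
    ext i j
    fin_cases i <;> fin_cases j <;> simp [Matrix.single]
  constructor
  · simp only [V, Set.mem_setOf_eq, hE]
    norm_num
  intro B hB hEB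
  have hB00 : B 0 0 = 0 := hB
  set b : ℂ := B 0 1 with hb
  set c : ℂ := B 1 0 with hc
  set d : ℂ := B 1 1 with hd
  -- Step 1 : ‖E₂₂‖ ≥ 1
  have hEnorm : 1 ≤ ‖(!![0, 0; 0, 1] : Matrix (Fin 2) (Fin 2) ℂ)‖ := by
    set x : EuclideanSpace ℂ (Fin 2) :=
      (EuclideanSpace.equiv (Fin 2) ℂ).symm ![0, 1] with hx
    have hone : ‖(EuclideanSpace.equiv (Fin 2) ℂ).symm ![(0 : ℂ), 1]‖ = 1 := by
      have h' : ‖(EuclideanSpace.equiv (Fin 2) ℂ).symm ![(0 : ℂ), 1]‖ ^ 2 = 1 := by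
        rw [sq_norm_symm]; norm_num
      calc ‖(EuclideanSpace.equiv (Fin 2) ℂ).symm ![(0 : ℂ), 1]‖
          = Real.sqrt (‖(EuclideanSpace.equiv (Fin 2) ℂ).symm ![(0 : ℂ), 1]‖ ^ 2) :=
            (Real.sqrt_sq (norm_nonneg _)).symm
        _ = 1 := by rw [h']; exact Real.sqrt_one
    have hxnorm : ‖x‖ = 1 := hone
    have hmv : (!![0, 0; 0, 1] : Matrix (Fin 2) (Fin 2) ℂ).mulVec x = ![0, 1] := by
      funext i
      fin_cases i <;>
        simp [Matrix.mulVec, dotProduct, Fin.sum_univ_two, hx]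
    have hle := Matrix.l2_opNorm_mulVec (!![0, 0; 0, 1] : Matrix (Fin 2) (Fin 2) ℂ) x
    rw [hxnorm, mul_one, hmv, hone] at hle
    exact hle
  -- Step 2 : Re d = 0
  have hdre : d.re = 0 := by
    set C : ℝ := ‖b‖ ^ 2 + ‖c‖ ^ 2 + d.re ^ 2 + d.im ^ 2 with hC
    have key : ∀ t : ℝ, 0 ≤ 2 * t * d.re + t ^ 2 * C := by
      intro t
      have h1 := hEB t
      rw [hE] at h1
      have hentry : (!![0, 0; 0, 1] : Matrix (Fin 2) (Fin 2) ℂ) + t • B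
          = !![(t : ℂ) * 0, (t : ℂ) * b; (t : ℂ) * c, 1 + (t : ℂ) * d] := by
        ext i j
        fin_cases i <;> fin_cases j <;>
          simp [Matrix.smul_apply, Complex.real_smul, hB00, hb, hc, hd] <;> ring
      have h2 := frob_bound ((!![0, 0; 0, 1] : Matrix (Fin 2) (Fin 2) ℂ) + t • B)
      rw [hentry] at h2
      simp only [Matrix.cons_val', Matrix.cons_val_zero, Matrix.cons_val_one, Matrix.head_cons,
        Matrix.empty_val', Matrix.cons_val_fin_one, Matrix.head_fin_const, Matrix.of_apply] at h2
      have hS : ‖(t : ℂ) * 0‖ ^ 2 + ‖(t : ℂ) * b‖ ^ 2 + ‖(t : ℂ) * c‖ ^ 2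
          + ‖1 + (t : ℂ) * d‖ ^ 2 = 1 + 2 * t * d.re + t ^ 2 * C := by
        rw [mul_zero, norm_zero, norm_mul, norm_mul, mul_pow, mul_pow,
          sq_norm_complex (1 + (t : ℂ) * d)]
        have hre : (1 + (t : ℂ) * d).re = 1 + t * d.re := by
          simp [Complex.add_re, Complex.mul_re]
        have him : (1 + (t : ℂ) * d).im = t * d.im := by
          simp [Complex.add_im, Complex.mul_im]
        rw [hre, him, hC]
        simp [Complex.norm_real, Real.norm_eq_abs, sq_abs]
        ring
      have h3 : 1 ≤ ‖(!![(t : ℂ) * 0, (t : ℂ) * b; (t : ℂ) * c, 1 + (t : ℂ) * d]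
          : Matrix (Fin 2) (Fin 2) ℂ)‖ := by
        rw [← hentry]; exact le_trans hEnorm h1
      have h4 : (1 : ℝ) ≤ Real.sqrt (1 + 2 * t * d.re + t ^ 2 * C) := by
        rw [← hS]
        exact le_trans h3 h2
      have h5 : (1 : ℝ) ≤ 1 + 2 * t * d.re + t ^ 2 * C := by
        have hnn : (0 : ℝ) ≤ 1 + 2 * t * d.re + t ^ 2 * C := by
          by_contra hneg
          push_neg at hneg
          rw [Real.sqrt_eq_zero_of_nonpos (le_of_lt hneg)] at h4
          linarith
        nlinarith [Real.sq_sqrt hnn, Real.sqrt_nonneg (1 + 2 * t * d.re + t ^ 2 * C)]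
      linarith
    by_contra hne
    have hdsq : 0 < d.re ^ 2 := lt_of_le_of_ne (sq_nonneg _) (Ne.symm (pow_ne_zero 2 hne))
    have hCpos : 0 < C := by
      rw [hC]; nlinarith [sq_nonneg ‖b‖, sq_nonneg ‖c‖, sq_nonneg d.im]
    have k := key (-(d.re) / C)
    have htC : (-(d.re) / C) * C = -d.re := by field_simp
    have k2 := mul_le_mul_of_nonneg_left k (le_of_lt hCpos)
    have e1 : C * (2 * (-(d.re) / C) * d.re + (-(d.re) / C) ^ 2 * C)
        = 2 * ((-(d.re) / C) * C) * d.re + ((-(d.re) / C) * C) ^ 2 := by ring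
    rw [mul_zero, e1, htC] at k2
    nlinarith
  -- Step 3 : B ⊥ E₂₂
  intro t
  have hBeq : B = !![0, b; c, d] := by
    ext i j
    fin_cases i <;> fin_cases j <;> simp [hB00, hb, hc, hd]
  have hadd : B + t • Matrix.single 1 1 (1 : ℂ) = !![0, b; c, d + (t : ℂ)] := by
    rw [hE]
    ext i j
    fin_cases i <;> fin_cases j <;>
      simp [hB00, hb, hc, hd, Matrix.smul_apply, Complex.real_smul]
  have habs : ‖d‖ ≤ ‖d + (t : ℂ)‖ := by
    apply le_of_sq_le_sq' (norm_nonneg _) (norm_nonneg _)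
    rw [sq_norm_complex, sq_norm_complex]
    have hre : (d + (t : ℂ)).re = d.re + t := by simp
    have him : (d + (t : ℂ)).im = d.im := by simp
    rw [hre, him, hdre]
    nlinarith [sq_nonneg t]
  calc ‖B‖ = ‖(!![0, b; c, (‖d‖ : ℂ)] : Matrix (Fin 2) (Fin 2) ℂ)‖ := by
        rw [hBeq]; exact norm_eq_normabs b c d
    _ ≤ ‖(!![0, b; c, (‖d + (t : ℂ)‖ : ℂ)] : Matrix (Fin 2) (Fin 2) ℂ)‖ :=
        norm_mono b c (norm_nonneg d) habs
    _ = ‖(!![0, b; c, d + (t : ℂ)] : Matrix (Fin 2) (Fin 2) ℂ)‖ :=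
        (norm_eq_normabs b c (d + (t : ℂ))).symm
    _ = ‖B + t • Matrix.single 1 1 (1 : ℂ)‖ := by rw [hadd]
end

section
/- Regard M₂(ℂ), with the operator norm induced by the Euclidean norm, as a normed space over ℝ, so that Birkhoff–James orthogonality uses only real scalars: u ⊥ᵣ v iff ‖u + t·v‖ ≥ ‖u‖ for all t ∈ ℝ. Let V = {X ∈ M₂(ℂ) : X₁₁ = 0}, and let L_V be the set of elements of V that are left-symmetric relative to V with respect to ⊥ᵣ. Then L_V contains a nonzero element, and the only X ∈ V satisfying Z ⊥ᵣ X for all Z ∈ L_V is X = 0. -/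
open scoped Matrix.Norms.L2Operator

noncomputable def Complex.abs : AbsoluteValue ℂ ℝ := NormedField.toAbsoluteValue ℂ

lemma Complex.norm_eq_abs (z : ℂ) : ‖z‖ = Complex.abs z := rfl

@[simp] lemma Complex.abs_ofReal (r : ℝ) : Complex.abs (r : ℂ) = |r| := Complex.norm_real r

@[simp] lemma Complex.abs_conj (z : ℂ) : Complex.abs ((starRingEnd ℂ) z) = Complex.abs z :=
  Complex.norm_conj z

@[simp] lemma Complex.abs_I : Complex.abs Complex.I = 1 := Complex.norm_I

lemma Complex.abs_abs (z : ℂ) : |Complex.abs z| = Complex.abs z :=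
  abs_of_nonneg (Complex.abs.nonneg z)

lemma Complex.sq_abs (z : ℂ) : Complex.abs z ^ 2 = Complex.normSq z := Complex.sq_norm z

open Matrix Complex

noncomputable def ev (v : Fin 2 → ℂ) : EuclideanSpace ℂ (Fin 2) := (WithLp.equiv 2 _).symm v

lemma norm_ev (v : Fin 2 → ℂ) :
    ‖ev v‖ = Real.sqrt (Complex.abs (v 0) ^ 2 + Complex.abs (v 1) ^ 2) := by
  rw [EuclideanSpace.norm_eq]
  simp [ev, Fin.sum_univ_two, Complex.norm_eq_abs]

lemma mulVec_two (M : Matrix (Fin 2) (Fin 2) ℂ) (v : Fin 2 → ℂ) (i : Fin 2) :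
    (M *ᵥ v) i = M i 0 * v 0 + M i 1 * v 1 := by
  simp [Matrix.mulVec, dotProduct, Fin.sum_univ_two]

lemma opnorm_le (M : Matrix (Fin 2) (Fin 2) ℂ) (c : ℝ) (hc : 0 ≤ c)
    (h : ∀ v : Fin 2 → ℂ, ‖ev (M *ᵥ v)‖ ≤ c * ‖ev v‖) : ‖M‖ ≤ c := by
  rw [Matrix.l2_opNorm_def]
  apply ContinuousLinearMap.opNorm_le_bound _ hc
  intro x
  have hx : x = ev (WithLp.equiv 2 _ x) := rfl
  calc ‖(Matrix.toEuclideanLin.trans LinearMap.toContinuousLinearMap M) x‖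
      = ‖ev (M *ᵥ (WithLp.equiv 2 _ x))‖ := rfl
    _ ≤ c * ‖ev (WithLp.equiv 2 _ x)‖ := h _
    _ = c * ‖x‖ := rfl

lemma opnorm_ge (M : Matrix (Fin 2) (Fin 2) ℂ) (v : Fin 2 → ℂ) :
    ‖ev (M *ᵥ v)‖ ≤ ‖M‖ * ‖ev v‖ := by
  have := Matrix.l2_opNorm_mulVec M (ev v)
  convert this using 2
  rfl

lemma opnorm_sq_le (M : Matrix (Fin 2) (Fin 2) ℂ) (r : ℝ)
    (h : ∀ v : Fin 2 → ℂ,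
      Complex.abs ((M *ᵥ v) 0) ^ 2 + Complex.abs ((M *ᵥ v) 1) ^ 2 ≤
        r * (Complex.abs (v 0) ^ 2 + Complex.abs (v 1) ^ 2)) :
    ‖M‖ ≤ Real.sqrt r := by
  apply opnorm_le _ _ (Real.sqrt_nonneg r)
  intro v
  rw [norm_ev, norm_ev, ← Real.sqrt_mul']
  · exact Real.sqrt_le_sqrt (h v)
  · positivity

lemma lemmaB (M : Matrix (Fin 2) (Fin 2) ℂ) (ε : ℝ) (hε : 0 < ε) (h00 : M 0 0 = 0) :
    ‖M‖ ≤ Real.sqrt (max (Complex.abs (M 0 1) ^ 2 + Complex.abs (M 1 1) ^ 2 * (1 + ε))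
      (Complex.abs (M 1 0) ^ 2 * (1 + 1 / ε))) := by
  apply opnorm_sq_le
  intro v
  rw [mulVec_two, mulVec_two, h00, zero_mul, zero_add]
  set p := Complex.abs (v 0) with hp
  set q := Complex.abs (v 1) with hq
  have hp0 : 0 ≤ p := Complex.abs.nonneg _
  have hq0 : 0 ≤ q := Complex.abs.nonneg _
  have h1 : Complex.abs (M 0 1 * v 1) = Complex.abs (M 0 1) * q := by rw [Complex.abs.map_mul]
  have h2 : Complex.abs (M 1 0 * v 0 + M 1 1 * v 1) ≤ Complex.abs (M 1 0) * p + Complex.abs (M 1 1) * q := by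
    calc Complex.abs (M 1 0 * v 0 + M 1 1 * v 1) ≤ Complex.abs (M 1 0 * v 0) + Complex.abs (M 1 1 * v 1) :=
          Complex.abs.add_le _ _
      _ = _ := by rw [Complex.abs.map_mul, Complex.abs.map_mul]
  have h2' : Complex.abs (M 1 0 * v 0 + M 1 1 * v 1) ^ 2 ≤ (Complex.abs (M 1 0) * p + Complex.abs (M 1 1) * q) ^ 2 := by
    apply pow_le_pow_left₀ (Complex.abs.nonneg _) h2
  rw [h1]
  set B := Complex.abs (M 0 1)
  set C := Complex.abs (M 1 0)
  set D := Complex.abs (M 1 1)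
  have hB : 0 ≤ B := Complex.abs.nonneg _
  have hC : 0 ≤ C := Complex.abs.nonneg _
  have hD : 0 ≤ D := Complex.abs.nonneg _
  have key : (C * p + D * q) ^ 2 ≤ C ^ 2 * (1 + 1/ε) * p ^ 2 + D ^ 2 * (1 + ε) * q ^ 2 := by
    have hε' : 0 < 1 / ε := by positivity
    have hεε : ε * (1 / ε) = 1 := by field_simp
    nlinarith [mul_nonneg (le_of_lt hε') (sq_nonneg (C * p - ε * (D * q))), hεε,
      sq_nonneg (C * p), sq_nonneg (D * q)]
  have hmax1 : B ^ 2 + D ^ 2 * (1 + ε) ≤ max (B ^ 2 + D ^ 2 * (1 + ε)) (C ^ 2 * (1 + 1/ε)) := le_max_left _ _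
  have hmax2 : C ^ 2 * (1 + 1/ε) ≤ max (B ^ 2 + D ^ 2 * (1 + ε)) (C ^ 2 * (1 + 1/ε)) := le_max_right _ _
  nlinarith [sq_nonneg p, sq_nonneg q, h2', key, mul_le_mul_of_nonneg_right hmax1 (sq_nonneg q),
    mul_le_mul_of_nonneg_right hmax2 (sq_nonneg p)]

lemma mono (M M' : Matrix (Fin 2) (Fin 2) ℂ)
    (h0 : M 0 0 = 0) (h0' : M' 0 0 = 0) (hcc : M' 1 0 = M 1 0)
    (hb : Complex.abs (M 0 1) ≤ Complex.abs (M' 0 1))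
    (hd : Complex.abs (M 1 1) ≤ Complex.abs (M' 1 1)) : ‖M‖ ≤ ‖M'‖ := by
  apply opnorm_le _ _ (norm_nonneg M')
  intro v
  set z : ℂ := M' 1 1 * v 1 with hzdef
  set θ : ℂ := if z = 0 then 1 else z / (Complex.abs z : ℝ) with hθdef
  have hθabs : Complex.abs θ = 1 := by
    rw [hθdef]
    split_ifs with h
    · simp
    · rw [map_div₀, Complex.abs_ofReal, Complex.abs_abs]
      field_simp [Complex.abs.ne_zero h]
  have hzθ : z = (Complex.abs z : ℝ) * θ := by
    rw [hθdef]
    split_ifs with h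
    · simp [h]
    · field_simp [Complex.abs.ne_zero h]
  set u : ℂ := (Complex.abs (v 0) : ℝ) * θ *
      (if M 1 0 = 0 then 1 else (starRingEnd ℂ) (M 1 0) / (Complex.abs (M 1 0) : ℝ)) with hudef
  have hu : Complex.abs u = Complex.abs (v 0) := by
    rw [hudef, Complex.abs.map_mul, Complex.abs.map_mul, Complex.abs_ofReal, Complex.abs_abs, hθabs]
    split_ifs with h
    · simp
    · rw [map_div₀, Complex.abs_conj, Complex.abs_ofReal, Complex.abs_abs]
      field_simp [Complex.abs.ne_zero h]
  have hcu : M 1 0 * u = ((Complex.abs (M 1 0) * Complex.abs (v 0) : ℝ) : ℂ) * θ := by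
    rw [hudef]
    split_ifs with h
    · simp [h]
    · have : M 1 0 * ((starRingEnd ℂ) (M 1 0) / (Complex.abs (M 1 0) : ℝ)) = (Complex.abs (M 1 0) : ℝ) := by
        have ha : ((Complex.abs (M 1 0) : ℝ) : ℂ) ≠ 0 := by
          exact_mod_cast Complex.abs.ne_zero h
        rw [mul_div_assoc', Complex.mul_conj', Complex.norm_eq_abs, pow_two, mul_div_assoc,
          div_self ha, mul_one]
      push_cast
      calc M 1 0 * ((Complex.abs (v 0) : ℝ) * θ * ((starRingEnd ℂ) (M 1 0) / (Complex.abs (M 1 0) : ℝ)))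
          = (M 1 0 * ((starRingEnd ℂ) (M 1 0) / (Complex.abs (M 1 0) : ℝ))) * ((Complex.abs (v 0) : ℝ) * θ) := by ring
        _ = _ := by rw [this]; push_cast; ring
  set v' : Fin 2 → ℂ := ![u, v 1] with hv'def
  have hv'0 : v' 0 = u := rfl
  have hv'1 : v' 1 = v 1 := rfl
  have hnormv : ‖ev v'‖ = ‖ev v‖ := by
    rw [norm_ev, norm_ev, hv'0, hv'1, hu]
  -- entries of M' *ᵥ v'
  have e0 : (M' *ᵥ v') 0 = M' 0 1 * v 1 := by
    rw [mulVec_two, h0', hv'0, hv'1, zero_mul, zero_add]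
  have e1 : (M' *ᵥ v') 1 = ((Complex.abs (M 1 0) * Complex.abs (v 0) + Complex.abs z : ℝ) : ℂ) * θ := by
    rw [mulVec_two, hv'0, hv'1, hcc, hcu]
    push_cast
    rw [add_mul]
    congr 1
  have f0 : Complex.abs ((M *ᵥ v) 0) ≤ Complex.abs ((M' *ᵥ v') 0) := by
    rw [mulVec_two, h0, zero_mul, zero_add, e0, Complex.abs.map_mul, Complex.abs.map_mul]
    exact mul_le_mul_of_nonneg_right hb (Complex.abs.nonneg _)
  have f1 : Complex.abs ((M *ᵥ v) 1) ≤ Complex.abs ((M' *ᵥ v') 1) := by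
    rw [mulVec_two, e1, Complex.abs.map_mul, hθabs, mul_one, Complex.abs_ofReal]
    have habs : Complex.abs (M 1 0 * v 0 + M 1 1 * v 1) ≤
        Complex.abs (M 1 0) * Complex.abs (v 0) + Complex.abs z := by
      calc Complex.abs (M 1 0 * v 0 + M 1 1 * v 1)
          ≤ Complex.abs (M 1 0 * v 0) + Complex.abs (M 1 1 * v 1) := Complex.abs.add_le _ _
        _ ≤ Complex.abs (M 1 0) * Complex.abs (v 0) + Complex.abs z := by
            rw [Complex.abs.map_mul, hzdef, Complex.abs.map_mul, Complex.abs.map_mul]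
            exact add_le_add le_rfl (mul_le_mul_of_nonneg_right hd (Complex.abs.nonneg _))
    calc Complex.abs (M 1 0 * v 0 + M 1 1 * v 1)
        ≤ Complex.abs (M 1 0) * Complex.abs (v 0) + Complex.abs z := habs
      _ ≤ |Complex.abs (M 1 0) * Complex.abs (v 0) + Complex.abs z| := le_abs_self _
  calc ‖ev (M *ᵥ v)‖ ≤ ‖ev (M' *ᵥ v')‖ := by
        rw [norm_ev, norm_ev]
        apply Real.sqrt_le_sqrt
        have g0 := pow_le_pow_left₀ (Complex.abs.nonneg _) f0 2
        have g1 := pow_le_pow_left₀ (Complex.abs.nonneg _) f1 2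
        linarith
    _ ≤ ‖M'‖ * ‖ev v'‖ := opnorm_ge _ _
    _ = ‖M'‖ * ‖ev v‖ := by rw [hnormv]

lemma re_mul_conj_comm (z w : ℂ) : (z * (starRingEnd ℂ) w).re = (w * (starRingEnd ℂ) z).re := by
  simp [Complex.mul_re]
  ring

lemma sq_abs_add (z w : ℂ) (t : ℝ) :
    (Complex.abs (z + (t : ℂ) * w)) ^ 2 =
      (Complex.abs z) ^ 2 + 2 * t * ((z * (starRingEnd ℂ) w).re) + t ^ 2 * (Complex.abs w) ^ 2 := by
  rw [Complex.sq_abs, Complex.sq_abs, Complex.sq_abs, Complex.normSq_add]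
  have h1 : Complex.normSq ((t : ℂ) * w) = t ^ 2 * Complex.normSq w := by
    rw [Complex.normSq_mul, Complex.normSq_ofReal, sq]
  have h2 : (z * (starRingEnd ℂ) ((t : ℂ) * w)).re = t * (z * (starRingEnd ℂ) w).re := by
    rw [_root_.map_mul, Complex.conj_ofReal, show z * ((t:ℂ) * (starRingEnd ℂ) w) = (t:ℂ) * (z * (starRingEnd ℂ) w) by ring,
      Complex.re_ofReal_mul]
  rw [h1, h2]
  ring


def Zb (ω : ℂ) : Matrix (Fin 2) (Fin 2) ℂ := !![0, ω; 0, 0]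
def Zc (ω : ℂ) : Matrix (Fin 2) (Fin 2) ℂ := !![0, 0; ω, 0]
def Zd (ω : ℂ) : Matrix (Fin 2) (Fin 2) ℂ := !![0, 0; 0, ω]

lemma one_le_Zb (ω : ℂ) (hω : Complex.abs ω = 1) : 1 ≤ ‖Zb ω‖ := by
  have h := opnorm_ge (Zb ω) ![0, 1]
  have h1 : ‖ev ![(0:ℂ), 1]‖ = 1 := by
    rw [norm_ev]; simp
  have h2 : ‖ev (Zb ω *ᵥ ![0, 1])‖ = 1 := by
    rw [norm_ev, mulVec_two, mulVec_two]
    simp [Zb, hω]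
  rw [h1, h2, mul_one] at h
  exact h

lemma one_le_Zd (ω : ℂ) (hω : Complex.abs ω = 1) : 1 ≤ ‖Zd ω‖ := by
  have h := opnorm_ge (Zd ω) ![0, 1]
  have h1 : ‖ev ![(0:ℂ), 1]‖ = 1 := by
    rw [norm_ev]; simp
  have h2 : ‖ev (Zd ω *ᵥ ![0, 1])‖ = 1 := by
    rw [norm_ev, mulVec_two, mulVec_two]
    simp [Zd, hω]
  rw [h1, h2, mul_one] at h
  exact h

lemma sqrt_lt_one_of {x : ℝ} (h : x < 1) : Real.sqrt x < 1 := by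
  rcases le_or_gt x 0 with h0 | h0
  · calc Real.sqrt x ≤ Real.sqrt 0 := Real.sqrt_le_sqrt h0
      _ < 1 := by norm_num
  · rw [← Real.sqrt_one]
    exact Real.sqrt_lt_sqrt h0.le h

lemma forward_b (ω : ℂ) (hω : Complex.abs ω = 1) (B : Matrix (Fin 2) (Fin 2) ℂ)
    (hB : B 0 0 = 0) (h : BJr (Zb ω) B) : (ω * (starRingEnd ℂ) (B 0 1)).re = 0 := by
  by_contra hρ
  set b := B 0 1 with hb
  set c := B 1 0 with hc
  set d := B 1 1 with hd
  set ρ := (ω * (starRingEnd ℂ) b).re with hρdef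
  have hρ2 : 0 < ρ ^ 2 := lt_of_le_of_ne (sq_nonneg ρ) (Ne.symm (pow_ne_zero 2 hρ))
  set P := Complex.abs b ^ 2 with hP
  set Q := Complex.abs c ^ 2 with hQ
  set R := Complex.abs d ^ 2 with hR
  have hP0 : 0 ≤ P := sq_nonneg _
  have hQ0 : 0 ≤ Q := sq_nonneg _
  have hR0 : 0 ≤ R := sq_nonneg _
  have hden : (0:ℝ) < 1 + P + 2*R + 2*ρ^2*Q := by positivity
  set τ := 1 / (1 + P + 2*R + 2*ρ^2*Q) with hτdef
  have hτpos : 0 < τ := by positivity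
  have hττ : τ * (1 + P + 2*R + 2*ρ^2*Q) = 1 := by
    rw [hτdef]; field_simp
  set t := -ρ * τ with ht
  set M := Zb ω + t • B with hM
  have hM00 : M 0 0 = 0 := by simp [hM, Zb, hB]
  have hM01 : M 0 1 = ω + (t:ℂ) * b := by
    simp [hM, Zb, Complex.real_smul, hb]
  have hM10 : M 1 0 = (t:ℂ) * c := by
    simp [hM, Zb, Complex.real_smul, hc]
  have hM11 : M 1 1 = (t:ℂ) * d := by
    simp [hM, Zb, Complex.real_smul, hd]
  have hub := lemmaB M 1 one_pos hM00
  rw [hM01, hM10, hM11] at hub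
  have e1 : Complex.abs (ω + (t:ℂ) * b) ^ 2 = 1 + 2*t*ρ + t^2*P := by
    rw [sq_abs_add, hω]; ring
  have e2 : Complex.abs ((t:ℂ) * c) ^ 2 = t^2 * Q := by
    rw [Complex.abs.map_mul, Complex.abs_ofReal, mul_pow, _root_.sq_abs]
  have e3 : Complex.abs ((t:ℂ) * d) ^ 2 = t^2 * R := by
    rw [Complex.abs.map_mul, Complex.abs_ofReal, mul_pow, _root_.sq_abs]
  rw [e1, e2, e3] at hub
  have htsq : t ^ 2 = ρ ^ 2 * τ ^ 2 := by rw [ht]; ring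
  have htρ : t * ρ = -(ρ ^ 2 * τ) := by rw [ht]; ring
  have hBJ := h t
  rw [← hM] at hBJ
  have hge := one_le_Zb ω hω
  have hnn : (0:ℝ) ≤ ‖M‖ := norm_nonneg _
  clear_value M t τ R Q P ρ d c b
  clear h hω B hB hb hc hd hρ hρdef hP hQ hR hden hτdef ht hM hM00 hM01 hM10 hM11 e1 e2 e3
  have key : τ * (P + 2*R) ≤ 1 := by
    nlinarith [hττ, hτpos, hQ0, mul_nonneg (mul_nonneg hρ2.le hτpos.le) hQ0]
  have key2 : ρ^2*τ*(τ*(P+2*R)) ≤ ρ^2*τ*1 :=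
    mul_le_mul_of_nonneg_left key (by positivity)
  have key3 : τ*(2*ρ^2*Q) ≤ 1 - τ := by
    nlinarith [hττ, hτpos, hP0, hR0]
  have key4 : τ*(τ*(2*ρ^2*Q)) ≤ τ*(1-τ) := mul_le_mul_of_nonneg_left key3 hτpos.le
  have hmaxlt : max (1 + 2*t*ρ + t^2*P + t^2*R * (1+1)) (t^2*Q * (1 + 1/1)) < 1 := by
    apply max_lt
    · nlinarith [key2, mul_pos hρ2 hτpos, htsq, htρ]
    · nlinarith [key4, htsq, sq_nonneg (2*τ - 1)]
  have hlt : ‖M‖ < 1 := lt_of_le_of_lt hub (sqrt_lt_one_of hmaxlt)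
  linarith

lemma forward_d (ω : ℂ) (hω : Complex.abs ω = 1) (B : Matrix (Fin 2) (Fin 2) ℂ)
    (hB : B 0 0 = 0) (h : BJr (Zd ω) B) : (ω * (starRingEnd ℂ) (B 1 1)).re = 0 := by
  by_contra hρ
  set b := B 0 1 with hb
  set c := B 1 0 with hc
  set d := B 1 1 with hd
  set ρ := (ω * (starRingEnd ℂ) d).re with hρdef
  have hρ2 : 0 < ρ ^ 2 := lt_of_le_of_ne (sq_nonneg ρ) (Ne.symm (pow_ne_zero 2 hρ))
  set P := Complex.abs b ^ 2 with hP
  set Q := Complex.abs c ^ 2 with hQ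
  set R := Complex.abs d ^ 2 with hR
  have hP0 : 0 ≤ P := sq_nonneg _
  have hQ0 : 0 ≤ Q := sq_nonneg _
  have hR0 : 0 ≤ R := sq_nonneg _
  have hρR : 0 ≤ ρ^2*R := by positivity
  have hρQ : 0 ≤ ρ^2*Q := by positivity
  have hden : (0:ℝ) < 1 + P + Q + R + ρ^2*R + ρ^2*Q := by positivity
  set τ := 1 / (1 + P + Q + R + ρ^2*R + ρ^2*Q) with hτdef
  have hτpos : 0 < τ := by positivity
  have hττ : τ * (1 + P + Q + R + ρ^2*R + ρ^2*Q) = 1 := by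
    rw [hτdef]; field_simp
  have hτ1 : τ ≤ 1 := by
    rw [hτdef, div_le_one hden]; linarith
  set t := -ρ * τ with ht
  set ε := τ * ρ^2 with hεdef
  have hεpos : 0 < ε := by positivity
  set M := Zd ω + t • B with hM
  have hM00 : M 0 0 = 0 := by simp [hM, Zd, hB]
  have hM01 : M 0 1 = (t:ℂ) * b := by
    simp [hM, Zd, Complex.real_smul, hb]
  have hM10 : M 1 0 = (t:ℂ) * c := by
    simp [hM, Zd, Complex.real_smul, hc]
  have hM11 : M 1 1 = ω + (t:ℂ) * d := by
    simp [hM, Zd, Complex.real_smul, hd]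
  have hub := lemmaB M ε hεpos hM00
  rw [hM01, hM10, hM11] at hub
  have e1 : Complex.abs (ω + (t:ℂ) * d) ^ 2 = 1 + 2*t*ρ + t^2*R := by
    rw [sq_abs_add, hω]; ring
  have e2 : Complex.abs ((t:ℂ) * b) ^ 2 = t^2 * P := by
    rw [Complex.abs.map_mul, Complex.abs_ofReal, mul_pow, _root_.sq_abs]
  have e3 : Complex.abs ((t:ℂ) * c) ^ 2 = t^2 * Q := by
    rw [Complex.abs.map_mul, Complex.abs_ofReal, mul_pow, _root_.sq_abs]
  rw [e1, e2, e3] at hub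
  have htsq : t ^ 2 = ρ ^ 2 * τ ^ 2 := by rw [ht]; ring
  have htρ : t * ρ = -(ρ ^ 2 * τ) := by rw [ht]; ring
  have hBJ := h t
  rw [← hM] at hBJ
  have hge := one_le_Zd ω hω
  have hnn : (0:ℝ) ≤ ‖M‖ := norm_nonneg _
  have hεeq : ε = τ * ρ^2 := hεdef
  clear_value M t ε τ R Q P ρ d c b
  clear h hω B hB hb hc hd hρ hρdef hP hQ hR hden hτdef hM hM00 hM01 hM10 hM11 e1 e2 e3 hεdef
  subst hεeq
  rw [ht] at hub
  clear htsq htρ ht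
  have k1 : τ*(P + R + ρ^2*R) ≤ 1 - τ := by
    nlinarith [hττ, hτpos, hQ0, mul_nonneg hτpos.le hQ0, mul_nonneg hτpos.le hρQ]
  have k2 : τ*(Q + ρ^2*Q) ≤ 1 - τ := by
    nlinarith [hττ, hτpos, hP0, hR0, mul_nonneg hτpos.le hP0, mul_nonneg hτpos.le hR0,
      mul_nonneg hτpos.le hρR]
  have hs : 0 < ρ^2*τ := by positivity
  have k1' : (ρ^2*τ)*(τ*(P + R + ρ^2*R)) ≤ (ρ^2*τ)*(1 - τ) :=
    mul_le_mul_of_nonneg_left k1 hs.le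
  have hcube : 0 ≤ (ρ^2*τ)^2*R*(1-τ) := by
    apply mul_nonneg (by positivity); linarith
  have hsimp : (-ρ*τ)^2*Q * (1 + 1/(τ*ρ^2)) = ρ^2*τ^2*Q + τ*Q := by
    have hρ0 : ρ ≠ 0 := fun h0 => by simp [h0] at hρ2
    have hτ0 : τ ≠ 0 := hτpos.ne'
    field_simp
  have k2' : 0 ≤ (1-τ)*(τ*(ρ^2*Q)) := by
    apply mul_nonneg (by linarith) (by positivity)
  have hmaxlt : max ((-ρ*τ)^2*P + (1 + 2*(-ρ*τ)*ρ + (-ρ*τ)^2*R) * (1+τ*ρ^2))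
      ((-ρ*τ)^2*Q * (1 + 1/(τ*ρ^2))) < 1 := by
    apply max_lt
    · nlinarith [k1', hcube, hs, mul_pos hs hs, mul_pos hτpos hs]
    · rw [hsimp]
      nlinarith [k2, k2', hτpos]
  have hlt : ‖M‖ < 1 := lt_of_le_of_lt hub (sqrt_lt_one_of hmaxlt)
  linarith

lemma abs_le_of_sq_le {x y : ℝ} (hx : 0 ≤ x) (hy : 0 ≤ y) (h : x^2 ≤ y^2) : x ≤ y := by
  nlinarith [h, hx, hy]

lemma backward_b (ω : ℂ) (B : Matrix (Fin 2) (Fin 2) ℂ) (hB : B 0 0 = 0)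
    (hre : (ω * (starRingEnd ℂ) (B 0 1)).re = 0) : BJr B (Zb ω) := by
  intro t
  set M' := B + t • Zb ω with hM'
  have h0' : M' 0 0 = 0 := by simp [hM', Zb, hB]
  have h01 : M' 0 1 = B 0 1 + (t:ℂ) * ω := by simp [hM', Zb, Complex.real_smul]
  have h10 : M' 1 0 = B 1 0 := by simp [hM', Zb]
  have h11 : M' 1 1 = B 1 1 := by simp [hM', Zb]
  apply mono B M' hB h0' h10
  · rw [h01]
    apply abs_le_of_sq_le (Complex.abs.nonneg _) (Complex.abs.nonneg _)
    rw [sq_abs_add, re_mul_conj_comm, hre]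
    nlinarith [sq_nonneg (t * Complex.abs ω)]
  · rw [h11]

lemma backward_d (ω : ℂ) (B : Matrix (Fin 2) (Fin 2) ℂ) (hB : B 0 0 = 0)
    (hre : (ω * (starRingEnd ℂ) (B 1 1)).re = 0) : BJr B (Zd ω) := by
  intro t
  set M' := B + t • Zd ω with hM'
  have h0' : M' 0 0 = 0 := by simp [hM', Zd, hB]
  have h01 : M' 0 1 = B 0 1 := by simp [hM', Zd]
  have h10 : M' 1 0 = B 1 0 := by simp [hM', Zd]
  have h11 : M' 1 1 = B 1 1 + (t:ℂ) * ω := by simp [hM', Zd, Complex.real_smul]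
  apply mono B M' hB h0' h10
  · rw [h01]
  · rw [h11]
    apply abs_le_of_sq_le (Complex.abs.nonneg _) (Complex.abs.nonneg _)
    rw [sq_abs_add, re_mul_conj_comm, hre]
    nlinarith [sq_nonneg (t * Complex.abs ω)]

lemma bjr_conjT (A B : Matrix (Fin 2) (Fin 2) ℂ) (h : BJr Aᴴ Bᴴ) : BJr A B := by
  intro t
  have ht := h t
  have e : (A + t • B)ᴴ = Aᴴ + t • Bᴴ := by
    rw [Matrix.conjTranspose_add, Matrix.conjTranspose_smul, star_trivial]
  rw [← e] at ht
  rw [Matrix.l2_opNorm_conjTranspose A, Matrix.l2_opNorm_conjTranspose (A + t • B)] at ht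
  exact ht

lemma bjr_conjT' (A B : Matrix (Fin 2) (Fin 2) ℂ) (h : BJr A B) : BJr Aᴴ Bᴴ := by
  apply bjr_conjT
  rwa [Matrix.conjTranspose_conjTranspose, Matrix.conjTranspose_conjTranspose]

lemma Zc_conjT (ω : ℂ) : (Zc ω)ᴴ = Zb ((starRingEnd ℂ) ω) := by
  ext i j
  fin_cases i <;> fin_cases j <;> simp [Zc, Zb]

lemma Zb_conjT (ω : ℂ) : (Zb ω)ᴴ = Zc ((starRingEnd ℂ) ω) := by
  ext i j
  fin_cases i <;> fin_cases j <;> simp [Zc, Zb]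

lemma LS_Zb (ω : ℂ) (hω : Complex.abs ω = 1) : LeftSymmRelR V (Zb ω) := by
  constructor
  · show Zb ω 0 0 = 0
    simp [Zb]
  · intro B hB h
    exact backward_b ω B hB (forward_b ω hω B hB h)

lemma LS_Zd (ω : ℂ) (hω : Complex.abs ω = 1) : LeftSymmRelR V (Zd ω) := by
  constructor
  · show Zd ω 0 0 = 0
    simp [Zd]
  · intro B hB h
    exact backward_d ω B hB (forward_d ω hω B hB h)

lemma forward_c (ω : ℂ) (hω : Complex.abs ω = 1) (B : Matrix (Fin 2) (Fin 2) ℂ)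
    (hB : B 0 0 = 0) (h : BJr (Zc ω) B) : ((starRingEnd ℂ) ω * B 1 0).re = 0 := by
  have h' := bjr_conjT' _ _ h
  rw [Zc_conjT] at h'
  have hB' : Bᴴ 0 0 = 0 := by simp [Matrix.conjTranspose_apply, hB]
  have := forward_b ((starRingEnd ℂ) ω) (by rwa [Complex.abs_conj]) Bᴴ hB' h'
  simpa [Matrix.conjTranspose_apply] using this

lemma LS_Zc (ω : ℂ) (hω : Complex.abs ω = 1) : LeftSymmRelR V (Zc ω) := by
  constructor
  · show Zc ω 0 0 = 0
    simp [Zc]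
  · intro B hB h
    have hB0 : B 0 0 = 0 := hB
    have hre := forward_c ω hω B hB0 h
    apply bjr_conjT
    rw [Zc_conjT]
    apply backward_b
    · simp [Matrix.conjTranspose_apply, hB0]
    · rw [Matrix.conjTranspose_apply]
      show ((starRingEnd ℂ) ω * (starRingEnd ℂ) ((starRingEnd ℂ) (B 1 0))).re = 0
      rwa [Complex.conj_conj]

/-- Regarding `M₂(ℂ)` (Euclidean operator norm) as a real normed space, the set `L_V` of
left-symmetric elements of `V = {X ∈ M₂(ℂ) : X₁₁ = 0}` (w.r.t. real-scalar BJ orthogonality)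
contains a nonzero element, and the only `X ∈ V` with `Z ⊥ᵣ X` for all `Z ∈ L_V` is `X = 0`. -/
theorem leftSymmetric_in_V_real_total :
    (∃ Z : Matrix (Fin 2) (Fin 2) ℂ, LeftSymmRelR V Z ∧ Z ≠ 0) ∧
    ∀ X ∈ V, (∀ Z : Matrix (Fin 2) (Fin 2) ℂ, LeftSymmRelR V Z → BJr Z X) → X = 0 := by

  constructor
  · refine ⟨Zb 1, LS_Zb 1 (by simp), ?_⟩
    intro h
    have : Zb 1 0 1 = (0 : Matrix (Fin 2) (Fin 2) ℂ) 0 1 := by rw [h]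
    simp [Zb] at this
  · intro X hX hall
    have hX0 : X 0 0 = 0 := hX
    have h1 := forward_b 1 (by simp) X hX0 (hall _ (LS_Zb 1 (by simp)))
    have h2 := forward_b Complex.I (by simp) X hX0 (hall _ (LS_Zb Complex.I (by simp)))
    have h3 := forward_c 1 (by simp) X hX0 (hall _ (LS_Zc 1 (by simp)))
    have h4 := forward_c Complex.I (by simp) X hX0 (hall _ (LS_Zc Complex.I (by simp)))
    have h5 := forward_d 1 (by simp) X hX0 (hall _ (LS_Zd 1 (by simp)))
    have h6 := forward_d Complex.I (by simp) X hX0 (hall _ (LS_Zd Complex.I (by simp)))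
    have hb : X 0 1 = 0 := by
      have e1 : (X 0 1).re = 0 := by simpa [Complex.mul_re] using h1
      have e2 : (X 0 1).im = 0 := by simpa [Complex.mul_re] using h2
      exact Complex.ext e1 e2
    have hc : X 1 0 = 0 := by
      have e1 : (X 1 0).re = 0 := by simpa [Complex.mul_re] using h3
      have e2 : (X 1 0).im = 0 := by simpa [Complex.mul_re] using h4
      exact Complex.ext e1 e2
    have hd : X 1 1 = 0 := by
      have e1 : (X 1 1).re = 0 := by simpa [Complex.mul_re] using h5
      have e2 : (X 1 1).im = 0 := by simpa [Complex.mul_re] using h6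
      exact Complex.ext e1 e2
    ext i j
    fin_cases i <;> fin_cases j <;> simp [hX0, hb, hc, hd]
end

section
/- Let n ≥ 2 and let T = {X ∈ M_n(ℂ) : X₁₁ = 0}, where M_n(ℂ) carries the operator norm induced by the Euclidean norm and Birkhoff–James orthogonality is taken with complex scalars. Then T contains a nonzero element that is left-symmetric relative to T if and only if n = 2. -/
open scoped Matrix.Norms.L2Operator

set_option maxHeartbeats 1000000

namespace LSaux

open scoped InnerProductSpace ComplexConjugate

noncomputable section

abbrev E (n : ℕ) := EuclideanSpace ℂ (Fin n)

variable {n : ℕ}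

def rk1 (p q : E n) : E n →L[ℂ] E n := (innerSL ℂ q).smulRight p

@[simp] lemma rk1_apply {n : ℕ} (p q y : E n) : rk1 p q y = ⟪q, y⟫_ℂ • p := rfl

variable {n : ℕ}

-- decomposition facts
lemma decomp_orth (q y : E n) (hq : ‖q‖ = 1) :
    ⟪q, y - ⟪q, y⟫_ℂ • q⟫_ℂ = 0 := by
  rw [inner_sub_right, inner_smul_right, inner_self_eq_norm_sq_to_K, hq]
  push_cast; ring

lemma decomp_norm (q y : E n) (hq : ‖q‖ = 1) :
    ‖y‖^2 = ‖⟪q, y⟫_ℂ‖^2 + ‖y - ⟪q, y⟫_ℂ • q‖^2 := by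
  set β := ⟪q, y⟫_ℂ
  set y' := y - β • q with hy'
  have hdec : y = β • q + y' := by rw [hy']; abel
  have horth : ⟪β • q, y'⟫_ℂ = 0 := by
    rw [inner_smul_left, decomp_orth q y hq, mul_zero]
  calc ‖y‖^2 = ‖β • q + y'‖^2 := by rw [← hdec]
  _ = ‖β • q‖^2 + 2 * Complex.re ⟪β • q, y'⟫_ℂ + ‖y'‖^2 := by
      exact norm_add_sq (𝕜 := ℂ) _ _
  _ = ‖β‖^2 + ‖y'‖^2 := by rw [horth, norm_smul, hq]; simp

lemma norm_one_of (p q : E n) (h : E n →L[ℂ] E n) (μ : ℝ)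
    (hp : ‖p‖ = 1) (hq : ‖q‖ = 1) (hμ1 : μ ≤ 1)
    (hhq : h q = 0) (hph : ∀ y, ⟪p, h y⟫_ℂ = 0) (hhy : ∀ y, ‖h y‖ ≤ μ * ‖y‖) :
    ‖rk1 p q + h‖ = 1 ∧ ∀ y : E n, ‖(rk1 p q + h) y‖^2 = ‖⟪q,y⟫_ℂ‖^2 + ‖h (y - ⟪q,y⟫_ℂ • q)‖^2 := by
  set f := rk1 p q + h with hf
  have happ : ∀ y, f y = ⟪q, y⟫_ℂ • p + h y := by
    intro y; rw [hf]; rfl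
  have hsq : ∀ y : E n, ‖f y‖^2 = ‖⟪q,y⟫_ℂ‖^2 + ‖h (y - ⟪q,y⟫_ℂ • q)‖^2 := by
    intro y
    set β := ⟪q, y⟫_ℂ
    set y' := y - β • q with hy'
    have hhyy : h y = h y' := by
      rw [hy', map_sub, map_smul, hhq, smul_zero, sub_zero]
    have horth : ⟪β • p, h y'⟫_ℂ = 0 := by
      rw [inner_smul_left, hph, mul_zero]
    calc ‖f y‖^2 = ‖β • p + h y'‖^2 := by rw [happ, hhyy]
    _ = ‖β • p‖^2 + 2 * Complex.re ⟪β • p, h y'⟫_ℂ + ‖h y'‖^2 := norm_add_sq (𝕜 := ℂ) _ _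
    _ = ‖β‖^2 + ‖h y'‖^2 := by rw [horth, norm_smul, hp]; simp
  constructor
  · refine le_antisymm ?_ ?_
    · refine ContinuousLinearMap.opNorm_le_bound f zero_le_one (fun y => ?_)
      have h1 := hsq y
      set β := ⟪q, y⟫_ℂ
      set y' := y - β • q
      have h2 : ‖h y'‖ ≤ ‖y'‖ := by
        calc ‖h y'‖ ≤ μ * ‖y'‖ := hhy y'
        _ ≤ 1 * ‖y'‖ := by nlinarith [norm_nonneg y']
        _ = ‖y'‖ := one_mul _
      have h3 := decomp_norm q y hq
      have h4 : ‖f y‖^2 ≤ ‖y‖^2 := by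
        rw [h1, h3]
        nlinarith [norm_nonneg (h y'), norm_nonneg y']
      have h5 := Real.sqrt_le_sqrt h4
      rw [Real.sqrt_sq (norm_nonneg (f y)), Real.sqrt_sq (norm_nonneg y)] at h5
      linarith
    · have hfq : f q = p := by
        rw [happ, hhq, add_zero, inner_self_eq_norm_sq_to_K, hq]
        norm_num
      have := (rk1 p q + h).le_opNorm q
      rw [show rk1 p q + h = f from rfl, hfq, hp, hq] at this
      linarith
  · exact hsq

lemma conj_mul_self (z : ℂ) : (starRingEnd ℂ) z * z = ((‖z‖^2 : ℝ) : ℂ) := by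
  rw [mul_comm, Complex.mul_conj]
  norm_cast
  rw [Complex.normSq_eq_norm_sq]

lemma key_real (b s t aA K : ℝ) (hs0 : 0 ≤ s) (hs1 : s ≤ 1)
    (ht : 0 < t) (haA : 0 < aA) (hK : 0 < K) (hb0 : 0 < b)
    (ht1 : 4*(t*aA) ≤ b) (ht2 : t*(K^2*(b+8)) ≤ aA*b) :
    1 - s^2 + (1-b)*s^2 - 2*t*aA*(1-s^2) + 4*t*K*s + t^2*K^2 ≤ 1 - t*aA := by
  have p1 : 2*(t*aA)*(b*s^2) ≤ (b/2)*(b*s^2) := by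
    nlinarith [mul_le_mul_of_nonneg_right ht1 (mul_nonneg hb0.le (sq_nonneg s))]
  have p2 : t*(t*(K^2*(b+8))) ≤ t*(aA*b) := mul_le_mul_of_nonneg_left ht2 ht.le
  have p3 : (0:ℝ) ≤ (b*s - 4*t*K)^2 := sq_nonneg _
  have Gb : b * ((1 - s^2 + (1-b)*s^2 - 2*t*aA*(1-s^2) + 4*t*K*s + t^2*K^2) - (1 - t*aA)) ≤ 0 := by
    nlinarith [p1, p2, p3]
  nlinarith [Gb, hb0]

lemma pointwise_bound (g h : E n →L[ℂ] E n) (p q y : E n) (α β : ℂ) (μ t M s : ℝ)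
    (hα : α = ⟪p, g q⟫_ℂ) (hβ : β = ⟪q, y⟫_ℂ) (hs : s = ‖y - β • q‖) (hM : M = ‖g‖)
    (hp : ‖p‖ = 1) (hq : ‖q‖ = 1) (hy : ‖y‖ = 1) (hμ0 : 0 ≤ μ) (hμ1 : μ ≤ 1)
    (hhq : h q = 0) (hph : ∀ z, ⟪p, h z⟫_ℂ = 0) (hhz : ∀ z, ‖h z‖ ≤ μ * ‖z‖) (ht : 0 < t) :
    ‖(rk1 p q + h) y + (-(t:ℂ) * (starRingEnd ℂ) α) • g y‖^2
      ≤ 1 - s^2 + μ^2*s^2 - 2*t*‖α‖^2*(1-s^2) + 4*t*(‖α‖*M)*s + t^2*(‖α‖*M)^2 := by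
  obtain ⟨hf1, hfsq⟩ := norm_one_of p q h μ hp hq hμ1 hhq hph hhz
  have hs0 : (0:ℝ) ≤ s := hs ▸ norm_nonneg _
  -- decomposition facts
  have hbs : ‖β‖^2 + s^2 = 1 := by
    have h0 := decomp_norm q y hq
    rw [hy, ← hβ, ← hs, one_pow] at h0
    linarith
  have hβ1 : ‖β‖ ≤ 1 := by nlinarith [norm_nonneg β, sq_nonneg s]
  have hβsq : ‖β‖^2 = 1 - s^2 := by linarith
  have hydec : y = β • q + (y - β • q) := by abel
  have hfy : (rk1 p q + h) y = β • p + h (y - β • q) := by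
    rw [ContinuousLinearMap.add_apply, rk1_apply, ← hβ]
    have h2 : h y = h (y - β • q) := by
      rw [map_sub, map_smul, hhq, smul_zero, sub_zero]
    rw [h2]
  have hhy'' : ‖h (y - β • q)‖ ≤ μ * s := by
    have h0 := hhz (y - β • q)
    rwa [← hs] at h0
  have hfy2 : ‖(rk1 p q + h) y‖^2 ≤ 1 - s^2 + μ^2 * s^2 := by
    have h0 := hfsq y
    rw [← hβ] at h0
    nlinarith [norm_nonneg (h (y - β • q)), mul_nonneg hμ0 hs0, hhy'', hβsq]
  -- inner product decomposition
  have hgy : g y = β • g q + g (y - β • q) := by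
    conv_lhs => rw [hydec]
    rw [map_add, map_smul]
  have hpgy : ⟪p, g y⟫_ℂ = β * α + ⟪p, g (y - β • q)⟫_ℂ := by
    rw [hgy, inner_add_right, inner_smul_right, hα]
  have hfyg : ⟪(rk1 p q + h) y, g y⟫_ℂ
      = ((‖β‖^2 : ℝ) : ℂ) * α
        + ((starRingEnd ℂ) β * ⟪p, g (y - β • q)⟫_ℂ + ⟪h (y - β • q), g y⟫_ℂ) := by
    rw [hfy, inner_add_left, inner_smul_left, hpgy, ← conj_mul_self β]
    ring
  have hgy'le : ‖g (y - β • q)‖ ≤ M * s := by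
    have := g.le_opNorm (y - β • q)
    rwa [← hs, ← hM] at this
  have hgyle : ‖g y‖ ≤ M := by
    have := g.le_opNorm y
    rwa [hy, mul_one, ← hM] at this
  have hM0 : (0:ℝ) ≤ M := hM ▸ norm_nonneg _
  have hpg : ‖⟪p, g (y - β • q)⟫_ℂ‖ ≤ M * s := by
    have h1 := norm_inner_le_norm (𝕜 := ℂ) p (g (y - β • q))
    rw [hp, one_mul] at h1
    exact h1.trans hgy'le
  have hhg : ‖⟪h (y - β • q), g y⟫_ℂ‖ ≤ M * s := by
    calc ‖⟪h (y - β • q), g y⟫_ℂ‖ ≤ ‖h (y - β • q)‖ * ‖g y‖ := norm_inner_le_norm _ _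
    _ ≤ (μ * s) * M := mul_le_mul hhy'' hgyle (norm_nonneg _) (mul_nonneg hμ0 hs0)
    _ ≤ M * s := by nlinarith [mul_nonneg (mul_nonneg hM0 hs0) (sub_nonneg.mpr hμ1)]
  set R : ℂ := (starRingEnd ℂ) β * ⟪p, g (y - β • q)⟫_ℂ + ⟪h (y - β • q), g y⟫_ℂ with hR
  have hRle : ‖R‖ ≤ 2 * M * s := by
    calc ‖R‖ ≤ ‖(starRingEnd ℂ) β * ⟪p, g (y - β • q)⟫_ℂ‖ + ‖⟪h (y - β • q), g y⟫_ℂ‖ :=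
      norm_add_le _ _
    _ ≤ 1 * (M*s) + M*s := by
        rw [norm_mul, RCLike.norm_conj]
        have h2 := mul_le_mul hβ1 hpg (norm_nonneg _) zero_le_one
        nlinarith
    _ = 2 * M * s := by ring
  -- real part
  set c : ℂ := -(t:ℂ) * (starRingEnd ℂ) α with hc
  have hccα : (starRingEnd ℂ) α * α = ((‖α‖^2 : ℝ) : ℂ) := conj_mul_self α
  have hsplit : c * ⟪(rk1 p q + h) y, g y⟫_ℂ
      = ((-(t * ‖α‖^2 * ‖β‖^2) : ℝ) : ℂ) + (-(t:ℂ) * (starRingEnd ℂ) α * R) := by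
    rw [hfyg, hc]
    have hexp2 : -(t:ℂ) * (starRingEnd ℂ) α * (((‖β‖^2 : ℝ) : ℂ) * α + R)
        = -(t:ℂ) * ((‖β‖^2 : ℝ) : ℂ) * ((starRingEnd ℂ) α * α)
          + (-(t:ℂ) * (starRingEnd ℂ) α * R) := by ring
    rw [hexp2, hccα]
    push_cast
    ring
  have hcnorm : ‖c‖ = t * ‖α‖ := by
    rw [hc, norm_mul, norm_neg, RCLike.norm_conj, Complex.norm_real,
      Real.norm_eq_abs, abs_of_pos ht]
  have hre : (c * ⟪(rk1 p q + h) y, g y⟫_ℂ).re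
      ≤ -(t * ‖α‖^2 * ‖β‖^2) + t * ‖α‖ * (2*M*s) := by
    rw [hsplit, Complex.add_re, Complex.ofReal_re]
    have h1 : (-(t:ℂ) * (starRingEnd ℂ) α * R).re ≤ ‖-(t:ℂ) * (starRingEnd ℂ) α * R‖ :=
      Complex.re_le_norm _
    have h2 : ‖-(t:ℂ) * (starRingEnd ℂ) α * R‖ = t * ‖α‖ * ‖R‖ := by
      rw [norm_mul, norm_mul, norm_neg, RCLike.norm_conj, Complex.norm_real,
        Real.norm_eq_abs, abs_of_pos ht]
    have h3 : t * ‖α‖ * ‖R‖ ≤ t * ‖α‖ * (2*M*s) :=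
      mul_le_mul_of_nonneg_left hRle (by positivity)
    linarith
  -- expansion
  have hexp : ‖(rk1 p q + h) y + c • g y‖^2
      = ‖(rk1 p q + h) y‖^2 + 2 * (c * ⟪(rk1 p q + h) y, g y⟫_ℂ).re + ‖c‖^2 * ‖g y‖^2 := by
    have h2 := norm_add_sq (𝕜 := ℂ) ((rk1 p q + h) y) (c • (g y))
    rw [inner_smul_right] at h2
    rw [h2, norm_smul]
    rw [RCLike.re_to_complex]
    ring
  rw [hexp]
  have hcgy : ‖c‖^2 * ‖g y‖^2 ≤ t^2 * (‖α‖*M)^2 := by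
    rw [hcnorm]
    have h4 : ‖g y‖^2 ≤ M^2 := by nlinarith [norm_nonneg (g y)]
    have h5 : (0:ℝ) ≤ t^2*‖α‖^2 := by positivity
    nlinarith [mul_le_mul_of_nonneg_left h4 h5]
  rw [hβsq] at hre
  linarith [hfy2, hre, hcgy]

lemma opNorm_le_of_unit' (f : E n →L[ℂ] E n) {C : ℝ} (hC : 0 ≤ C)
    (h : ∀ y : E n, ‖y‖ = 1 → ‖f y‖ ≤ C) : ‖f‖ ≤ C := by
  refine f.opNorm_le_bound hC (fun y => ?_)
  rcases eq_or_ne y 0 with rfl | hy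
  · simp
  · have hny : (0:ℝ) < ‖y‖ := norm_pos_iff.mpr hy
    have hu : ‖((‖y‖ : ℂ)⁻¹ • y : E n)‖ = 1 := by
      rw [norm_smul]; simp [hny.ne']
    have h2 := h _ hu
    rw [map_smul, norm_smul] at h2
    have h3 : ‖((‖y‖:ℂ))⁻¹‖ = ‖y‖⁻¹ := by simp
    rw [h3] at h2
    calc ‖f y‖ = ‖y‖ * (‖y‖⁻¹ * ‖f y‖) := by field_simp
    _ ≤ ‖y‖ * C := by nlinarith [hny.le]
    _ = C * ‖y‖ := by ring

lemma lemA (g h : E n →L[ℂ] E n) (p q : E n) (μ : ℝ)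
    (hp : ‖p‖ = 1) (hq : ‖q‖ = 1) (hμ0 : 0 ≤ μ) (hμ1 : μ < 1)
    (hhq : h q = 0) (hph : ∀ y, ⟪p, h y⟫_ℂ = 0) (hhy : ∀ y, ‖h y‖ ≤ μ * ‖y‖)
    (hα : ⟪p, g q⟫_ℂ ≠ 0) :
    ∃ c : ℂ, ‖(rk1 p q + h) + c • g‖ < ‖rk1 p q + h‖ := by
  obtain ⟨hf1, -⟩ := norm_one_of p q h μ hp hq hμ1.le hhq hph hhy
  have hα0 : (0:ℝ) < ‖⟪p, g q⟫_ℂ‖ := norm_pos_iff.mpr hα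
  have hαM : ‖⟪p, g q⟫_ℂ‖ ≤ ‖g‖ := by
    calc ‖⟪p, g q⟫_ℂ‖ ≤ ‖p‖ * ‖g q‖ := norm_inner_le_norm _ _
    _ = ‖g q‖ := by rw [hp, one_mul]
    _ ≤ ‖g‖ * ‖q‖ := g.le_opNorm q
    _ = ‖g‖ := by rw [hq, mul_one]
  have hM : (0:ℝ) < ‖g‖ := lt_of_lt_of_le hα0 hαM
  -- abbreviations as plain reals
  obtain ⟨aA, haAdef⟩ : ∃ aA, aA = ‖⟪p, g q⟫_ℂ‖^2 := ⟨_, rfl⟩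
  obtain ⟨K, hKdef⟩ : ∃ K, K = ‖⟪p, g q⟫_ℂ‖ * ‖g‖ := ⟨_, rfl⟩
  obtain ⟨b, hbdef⟩ : ∃ b, b = 1 - μ^2 := ⟨_, rfl⟩
  have haA0 : 0 < aA := by rw [haAdef]; positivity
  have hK0 : 0 < K := by rw [hKdef]; positivity
  have hb0 : 0 < b := by rw [hbdef]; nlinarith
  obtain ⟨t, htdef⟩ : ∃ t, t = min (b/(4*aA)) (aA*b/(K^2*(b+8))) := ⟨_, rfl⟩
  have ht : (0:ℝ) < t := by
    rw [htdef]; exact lt_min (by positivity) (by positivity)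
  have ht1 : 4*(t*aA) ≤ b := by
    have h1 : t ≤ b/(4*aA) := htdef ▸ min_le_left _ _
    rw [le_div_iff₀ (by positivity)] at h1
    nlinarith
  have ht2 : t*(K^2*(b+8)) ≤ aA*b := by
    have h1 : t ≤ aA*b/(K^2*(b+8)) := htdef ▸ min_le_right _ _
    rw [le_div_iff₀ (by positivity)] at h1
    nlinarith
  refine ⟨-(t:ℂ) * (starRingEnd ℂ) ⟪p, g q⟫_ℂ, ?_⟩
  rw [hf1]
  have hbound : ∀ y : E n, ‖y‖ = 1 →
      ‖((rk1 p q + h) + (-(t:ℂ) * (starRingEnd ℂ) ⟪p, g q⟫_ℂ) • g) y‖ ≤ Real.sqrt (1 - t*aA) := by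
    intro y hy
    have happly : ((rk1 p q + h) + (-(t:ℂ) * (starRingEnd ℂ) ⟪p, g q⟫_ℂ) • g) y
        = (rk1 p q + h) y + (-(t:ℂ) * (starRingEnd ℂ) ⟪p, g q⟫_ℂ) • g y := by
      rw [ContinuousLinearMap.add_apply, ContinuousLinearMap.smul_apply]
    rw [happly]
    have hpb := pointwise_bound g h p q y ⟪p, g q⟫_ℂ ⟪q, y⟫_ℂ μ t ‖g‖ ‖y - ⟪q, y⟫_ℂ • q‖
      rfl rfl rfl rfl hp hq hy hμ0 hμ1.le hhq hph hhy ht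
    have hs0 : (0:ℝ) ≤ ‖y - ⟪q, y⟫_ℂ • q‖ := norm_nonneg _
    have hs1 : ‖y - ⟪q, y⟫_ℂ • q‖ ≤ 1 := by
      have h0 := decomp_norm q y hq
      rw [hy, one_pow] at h0
      nlinarith [norm_nonneg (⟪q, y⟫_ℂ), norm_nonneg (y - ⟪q, y⟫_ℂ • q), sq_nonneg ‖⟪q, y⟫_ℂ‖]
    have hkr := key_real b ‖y - ⟪q, y⟫_ℂ • q‖ t aA K hs0 hs1 ht haA0 hK0 hb0 ht1 ht2
    have hμb : μ^2 = 1 - b := by rw [hbdef]; ring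
    have hchain : ‖(rk1 p q + h) y + (-(t:ℂ) * (starRingEnd ℂ) ⟪p, g q⟫_ℂ) • g y‖^2
        ≤ 1 - t*aA := by
      rw [haAdef]
      rw [haAdef, hKdef, hbdef] at hkr
      nlinarith [hpb, hkr]
    have := Real.sqrt_le_sqrt hchain
    rwa [Real.sqrt_sq (norm_nonneg _)] at this
  have hop := opNorm_le_of_unit' _ (Real.sqrt_nonneg _) hbound
  have hlt1 : Real.sqrt (1 - t*aA) < 1 := by
    rcases le_or_gt (1 - t*aA) 0 with hle | hpos
    · rw [Real.sqrt_eq_zero_of_nonpos hle]; exact one_pos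
    · have h6 : Real.sqrt (1 - t*aA) < Real.sqrt 1 := by
        apply Real.sqrt_lt_sqrt hpos.le
        nlinarith [mul_pos ht haA0]
      rwa [Real.sqrt_one] at h6
  linarith

abbrev φm {n : ℕ} : Matrix (Fin n) (Fin n) ℂ ≃⋆ₐ[ℂ] (E n →L[ℂ] E n) :=
  Matrix.toEuclideanCLM (𝕜 := ℂ)

lemma matrix_norm (A : Matrix (Fin n) (Fin n) ℂ) : ‖A‖ = ‖φm A‖ := Matrix.cstar_norm_def A

lemma entry_eq_inner (A : Matrix (Fin n) (Fin n) ℂ) (i j : Fin n) :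
    A i j = ⟪(EuclideanSpace.single i (1:ℂ)), φm A (EuclideanSpace.single j 1)⟫_ℂ := by
  rw [EuclideanSpace.inner_single_left]
  have h : φm A (EuclideanSpace.single j 1)
      = (WithLp.equiv 2 _).symm (Matrix.toLin' A (Pi.single j 1)) := by
    rfl
  rw [h]; simp [Matrix.mulVec_single]

lemma exists_attainer (hn : 0 < n) (f : E n →L[ℂ] E n) :
    ∃ x : E n, ‖x‖ = 1 ∧ ‖f x‖ = ‖f‖ := by
  haveI : Nontrivial (E n) := by
    refine ⟨EuclideanSpace.single ⟨0, hn⟩ (1:ℂ), 0, ?_⟩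
    intro h
    have := congrArg (fun z => ‖z‖) h
    simp [EuclideanSpace.norm_single] at this
  have hne : (Metric.sphere (0 : E n) 1).Nonempty :=
    NormedSpace.sphere_nonempty.mpr zero_le_one
  obtain ⟨x, hxs, hmax⟩ := (isCompact_sphere (0 : E n) 1).exists_isMaxOn hne
    ((f.continuous.norm).continuousOn)
  have hx1 : ‖x‖ = 1 := by simpa using hxs
  refine ⟨x, hx1, le_antisymm ?_ ?_⟩
  · have := f.le_opNorm x
    simpa [hx1] using this
  · refine opNorm_le_of_unit' f (norm_nonneg _) (fun y hy => ?_)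
    exact hmax (by simpa using hy)

lemma exists_unit_orth (hn : 3 ≤ n) (a b : E n) :
    ∃ s : E n, ‖s‖ = 1 ∧ ⟪a, s⟫_ℂ = 0 ∧ ⟪b, s⟫_ℂ = 0 := by
  classical
  set V : Submodule ℂ (E n) := Submodule.span ℂ {a, b} with hV
  have hfr : Module.finrank ℂ V ≤ 2 := by
    have h := finrank_span_le_card (R := ℂ) (M := E n) ({a, b} : Set (E n))
    refine h.trans ?_
    have hsub : ({a, b} : Set (E n)).toFinset ⊆ {a, b} := by
      intro z hz; simp at hz; rcases hz with h|h <;> simp [h]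
    calc ({a,b} : Set (E n)).toFinset.card ≤ ({a,b} : Finset (E n)).card :=
      Finset.card_le_card hsub
    _ ≤ 2 := Finset.card_insert_le _ _ |>.trans (by simp)
  have htot : Module.finrank ℂ (E n) = n := by simp
  have horth : 1 ≤ Module.finrank ℂ Vᗮ := by
    have := Submodule.finrank_add_finrank_orthogonal V
    omega
  have hne : Vᗮ ≠ ⊥ := by
    intro h
    rw [h] at horth; simp at horth
  obtain ⟨s₀, hs₀V, hs₀⟩ := Submodule.ne_bot_iff _ |>.mp hne
  have hs₀n : (0:ℝ) < ‖s₀‖ := norm_pos_iff.mpr hs₀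
  refine ⟨(‖s₀‖:ℂ)⁻¹ • s₀, ?_, ?_, ?_⟩
  · rw [norm_smul]; simp [hs₀n.ne']
  · have := hs₀V a (Submodule.subset_span (by simp))
    rw [inner_smul_right, this, mul_zero]
  · have := hs₀V b (Submodule.subset_span (by simp))
    rw [inner_smul_right, this, mul_zero]

/-- Lemma B': sufficient condition for BJ orthogonality via a norm attainer. -/
lemma bj_of_attain (Z B : Matrix (Fin n) (Fin n) ℂ) (x : E n) (hx : ‖x‖ = 1)
    (hatt : ‖φm Z x‖ = ‖Z‖) (horth : ⟪φm Z x, φm B x⟫_ℂ = 0) : BJ Z B := by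
  intro c
  have hZB : φm (Z + c • B) = φm Z + c • φm B := by rw [map_add, map_smul]
  rw [matrix_norm Z, matrix_norm (Z + c • B), hZB]
  have h1 : ‖(φm Z + c • φm B) x‖^2 = ‖φm Z x‖^2 + ‖c • φm B x‖^2 := by
    rw [ContinuousLinearMap.add_apply, ContinuousLinearMap.smul_apply]
    rw [norm_add_sq (𝕜 := ℂ), inner_smul_right, horth, mul_zero]
    simp
  have h2 : ‖φm Z x‖ ≤ ‖(φm Z + c • φm B) x‖ := by
    nlinarith [norm_nonneg ((φm Z + c • φm B) x), norm_nonneg (φm Z x),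
      sq_nonneg ‖c • φm B x‖]
  calc ‖φm Z‖ = ‖φm Z x‖ := by rw [hatt, matrix_norm]
  _ ≤ ‖(φm Z + c • φm B) x‖ := h2
  _ ≤ ‖φm Z + c • φm B‖ * ‖x‖ := (φm Z + c • φm B).le_opNorm x
  _ = ‖φm Z + c • φm B‖ := by rw [hx, mul_one]

/-- Lemma A at the matrix level: refuting BJ orthogonality. -/
lemma not_bj (B Z : Matrix (Fin n) (Fin n) ℂ) (p q : E n) (h : E n →L[ℂ] E n) (μ : ℝ)
    (hB : φm B = rk1 p q + h)
    (hp : ‖p‖ = 1) (hq : ‖q‖ = 1) (hμ0 : 0 ≤ μ) (hμ1 : μ < 1)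
    (hhq : h q = 0) (hph : ∀ y, ⟪p, h y⟫_ℂ = 0) (hhy : ∀ y, ‖h y‖ ≤ μ * ‖y‖)
    (hα : ⟪p, φm Z q⟫_ℂ ≠ 0) : ¬ BJ B Z := by
  obtain ⟨c, hc⟩ := lemA (φm Z) h p q μ hp hq hμ0 hμ1 hhq hph hhy hα
  intro hbj
  have h1 := hbj c
  rw [matrix_norm B, matrix_norm (B + c • Z), map_add, map_smul, hB] at h1
  linarith

-- helpers for linear combinations with real coefficients
lemma inner_comb_left (a b z : E n) (x1 x2 : ℝ) :
    ⟪(x1:ℂ) • a + (x2:ℂ) • b, z⟫_ℂ = (x1:ℂ) * ⟪a,z⟫_ℂ + (x2:ℂ) * ⟪b,z⟫_ℂ := by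
  rw [inner_add_left, inner_smul_left, inner_smul_left, Complex.conj_ofReal,
    Complex.conj_ofReal]

lemma inner_comb_right (a b z : E n) (x1 x2 : ℝ) :
    ⟪z, (x1:ℂ) • a + (x2:ℂ) • b⟫_ℂ = (x1:ℂ) * ⟪z,a⟫_ℂ + (x2:ℂ) * ⟪z,b⟫_ℂ := by
  rw [inner_add_right, inner_smul_right, inner_smul_right]

lemma inner_self_one {a : E n} (ha : ‖a‖ = 1) : ⟪a, a⟫_ℂ = 1 := by
  rw [inner_self_eq_norm_sq_to_K, ha]; norm_num

lemma norm_one_comb (a b : E n) (ca cb : ℝ) (ha : ‖a‖ = 1) (hb : ‖b‖ = 1)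
    (hab : ⟪a,b⟫_ℂ = 0) (h : ca^2 + cb^2 = 1) : ‖(ca:ℂ) • a + (cb:ℂ) • b‖ = 1 := by
  have h1 : ⟪(ca:ℂ) • a, (cb:ℂ) • b⟫_ℂ = 0 := by
    rw [inner_smul_left, inner_smul_right, hab, mul_zero, mul_zero]
  have h2 : ‖(ca:ℂ) • a + (cb:ℂ) • b‖^2 = 1 := by
    rw [norm_add_sq (𝕜 := ℂ), h1, norm_smul, norm_smul, ha, hb]
    simp only [map_zero, mul_zero, mul_one]
    rw [Complex.norm_real, Complex.norm_real]
    simp [sq_abs]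
    rw [← sq_abs ca, ← sq_abs cb] at h
    nlinarith [sq_abs ca, sq_abs cb]
  nlinarith [norm_nonneg ((ca:ℂ) • a + (cb:ℂ) • b)]


lemma two_case (T : Set (Matrix (Fin 2) (Fin 2) ℂ)) (hT : T = {X | X 0 0 = 0}) :
    ∃ Z : Matrix (Fin 2) (Fin 2) ℂ, Z ∈ T ∧ Z ≠ 0 ∧ LeftSymmRel T Z := by
  classical
  set e1 : E 2 := EuclideanSpace.single 0 1 with he1def
  set e2 : E 2 := EuclideanSpace.single 1 1 with he2def
  have he1 : ‖e1‖ = 1 := by rw [he1def, EuclideanSpace.norm_single]; norm_num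
  have he2 : ‖e2‖ = 1 := by rw [he2def, EuclideanSpace.norm_single]; norm_num
  have h12 : ⟪e1, e2⟫_ℂ = 0 := by
    rw [he1def, he2def, EuclideanSpace.inner_single_left, EuclideanSpace.single_apply]
    norm_num
  have h21 : ⟪e2, e1⟫_ℂ = 0 := by
    rw [he1def, he2def, EuclideanSpace.inner_single_left, EuclideanSpace.single_apply]
    norm_num
  have h11 : ⟪e1, e1⟫_ℂ = 1 := inner_self_one he1
  -- component facts
  have hcomp : ∀ (y : E 2) (i : Fin 2), y i = ⟪EuclideanSpace.single i (1:ℂ), y⟫_ℂ := by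
    intro y i
    rw [EuclideanSpace.inner_single_left]
    simp
  have hdecomp : ∀ y : E 2, y = y 0 • e1 + y 1 • e2 := by
    intro y
    ext i
    fin_cases i <;>
      simp [he1def, he2def, EuclideanSpace.single_apply]
  set Z : Matrix (Fin 2) (Fin 2) ℂ := φm.symm (rk1 e2 e1) with hZdef
  have hφZ : φm Z = rk1 e2 e1 := by rw [hZdef]; exact φm.apply_symm_apply _
  have hZe1 : φm Z e1 = e2 := by rw [hφZ, rk1_apply, h11, one_smul]
  have hZe2 : φm Z e2 = 0 := by rw [hφZ, rk1_apply, h12, zero_smul]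
  refine ⟨Z, ?_, ?_, ?_, ?_⟩
  · rw [hT]
    show Z 0 0 = 0
    rw [entry_eq_inner Z 0 0, ← he1def, hZe1, h12]
  · intro h0
    have : φm Z e1 = 0 := by rw [h0, map_zero]; rfl
    rw [hZe1] at this
    have := congrArg (fun z => ‖z‖) this
    simp only [norm_zero] at this
    rw [he2] at this
    norm_num at this
  · rw [hT]
    show Z 0 0 = 0
    rw [entry_eq_inner Z 0 0, ← he1def, hZe1, h12]
  · -- left symmetry
    intro B hBT hZB
    set g := φm B with hgdef
    have hB00 : ⟪e1, g e1⟫_ℂ = 0 := by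
      rw [hgdef, ← entry_eq_inner]
      rw [hT] at hBT
      exact hBT
    have hB10 : ⟪e2, g e1⟫_ℂ = 0 := by
      by_contra hne
      have := not_bj Z B e2 e1 0 0 (by rw [hφZ, add_zero]) he2 he1 le_rfl one_pos
        (by simp) (by intro y; simp) (by intro y; simp) hne
      exact this hZB
    have hge1 : g e1 = 0 := by
      ext i
      fin_cases i
      · show g e1 0 = 0
        rw [hcomp (g e1) 0, ← he1def, hB00]
      · show g e1 1 = 0
        rw [hcomp (g e1) 1, ← he2def, hB10]
    have hgy : ∀ y : E 2, g y = y 1 • g e2 := by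
      intro y
      conv_lhs => rw [hdecomp y]
      rw [map_add, map_smul, map_smul, hge1, smul_zero, zero_add]
    have hBnorm : ‖g‖ ≤ ‖g e2‖ := by
      refine opNorm_le_of_unit' g (norm_nonneg _) (fun y hy => ?_)
      rw [hgy y, norm_smul]
      have : ‖y 1‖ ≤ 1 := by
        rw [hcomp y 1, ← he2def]
        calc ‖⟪e2, y⟫_ℂ‖ ≤ ‖e2‖ * ‖y‖ := norm_inner_le_norm _ _
        _ = 1 := by rw [he2, hy, one_mul]
      nlinarith [norm_nonneg (g e2), norm_nonneg (y 1)]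
    intro c
    rw [matrix_norm B, matrix_norm (B + c • Z), map_add, map_smul, ← hgdef]
    have happ : (g + c • φm Z) e2 = g e2 := by
      rw [ContinuousLinearMap.add_apply, ContinuousLinearMap.smul_apply, hZe2,
        smul_zero, add_zero]
    calc ‖g‖ ≤ ‖g e2‖ := hBnorm
    _ = ‖(g + c • φm Z) e2‖ := by rw [happ]
    _ ≤ ‖g + c • φm Z‖ * ‖e2‖ := (g + c • φm Z).le_opNorm e2
    _ = ‖g + c • φm Z‖ := by rw [he2, mul_one]


lemma three_case (hn : 3 ≤ n) (T : Set (Matrix (Fin n) (Fin n) ℂ))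
    (hT : T = {X | X ⟨0, by omega⟩ ⟨0, by omega⟩ = 0})
    (Z : Matrix (Fin n) (Fin n) ℂ) (hZ0 : Z ≠ 0) : ¬ LeftSymmRel T Z := by
  rintro ⟨-, hsym⟩
  have hn0 : 0 < n := by omega
  have hi0 : (⟨0, by omega⟩ : Fin n) = ⟨0, by omega⟩ := rfl
  obtain ⟨e1, he1def⟩ : ∃ e1 : E n, e1 = EuclideanSpace.single ⟨0, by omega⟩ 1 := ⟨_, rfl⟩
  have he1 : ‖e1‖ = 1 := by rw [he1def, EuclideanSpace.norm_single]; norm_num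
  have hf0 : φm Z ≠ 0 := by
    intro h
    exact hZ0 (φm.injective (h.trans (map_zero φm).symm))
  obtain ⟨x, hx1, hxatt⟩ := exists_attainer hn0 (φm Z)
  have hfpos : 0 < ‖φm Z‖ := by
    rcases (norm_nonneg (φm Z)).lt_or_eq with h | h
    · exact h
    · exact absurd (ContinuousLinearMap.opNorm_zero_iff (φm Z) |>.mp h.symm) hf0
  have hv0 : φm Z x ≠ 0 := by
    intro h
    rw [h, norm_zero] at hxatt
    exact absurd hxatt.symm (ne_of_gt hfpos)
  have hvn : (0:ℝ) < ‖φm Z x‖ := norm_pos_iff.mpr hv0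
  have hZnorm : ‖φm Z x‖ = ‖Z‖ := by rw [hxatt, matrix_norm]
  by_cases hc1 : ∃ w : E n, ‖w‖ = 1 ∧ ⟪x, w⟫_ℂ = 0 ∧ ⟪e1, w⟫_ℂ = 0 ∧ φm Z w ≠ 0
  · -- Case 1 : rank-one perturbation
    obtain ⟨w, hw1, hwx, hwe, hfw⟩ := hc1
    have hfwn : (0:ℝ) < ‖φm Z w‖ := norm_pos_iff.mpr hfw
    obtain ⟨p, hpdef⟩ : ∃ p : E n, p = ((‖φm Z w‖:ℝ):ℂ)⁻¹ • φm Z w := ⟨_, rfl⟩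
    have hp1 : ‖p‖ = 1 := by
      rw [hpdef, norm_smul, norm_inv, Complex.norm_real, Real.norm_eq_abs,
        abs_of_pos hfwn]
      field_simp
    obtain ⟨B, hφB⟩ : ∃ B : Matrix (Fin n) (Fin n) ℂ, φm B = rk1 p w :=
      ⟨φm.symm (rk1 p w), φm.apply_symm_apply _⟩
    have hwe' : ⟪w, e1⟫_ℂ = 0 := by rw [← inner_conj_symm, hwe, map_zero]
    have hwx' : ⟪w, x⟫_ℂ = 0 := by rw [← inner_conj_symm, hwx, map_zero]
    have hBT : B ∈ T := by
      rw [hT]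
      show B _ _ = 0
      rw [entry_eq_inner B _ _, hφB, ← he1def, rk1_apply, inner_smul_right, hwe',
        zero_mul]
    have hZB : BJ Z B := by
      refine bj_of_attain Z B x hx1 hZnorm ?_
      rw [hφB, rk1_apply, inner_smul_right, hwx', zero_mul]
    have hNB : ¬ BJ B Z := by
      refine not_bj B Z p w 0 0 (by rw [hφB, add_zero]) hp1 hw1 le_rfl one_pos
        (by simp) (by intro y; simp) (by intro y; simp) ?_
      rw [hpdef, inner_smul_left]
      simp only [map_inv₀, Complex.conj_ofReal]
      rw [inner_self_eq_norm_sq_to_K]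
      apply mul_ne_zero
      · exact inv_ne_zero (Complex.ofReal_ne_zero.mpr (ne_of_gt hfwn))
      · exact pow_ne_zero _ (Complex.ofReal_ne_zero.mpr (ne_of_gt hfwn))
    exact hNB (hsym B hBT hZB)
  · -- Case 2
    push_neg at hc1
    obtain ⟨s, hs1, hsx, hse⟩ := exists_unit_orth hn x e1
    have hfs : φm Z s = 0 := hc1 s hs1 hsx hse
    obtain ⟨vh, hvhdef⟩ : ∃ vh : E n, vh = ((‖φm Z x‖:ℝ):ℂ)⁻¹ • φm Z x := ⟨_, rfl⟩
    have hvh1 : ‖vh‖ = 1 := by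
      rw [hvhdef, norm_smul, norm_inv, Complex.norm_real, Real.norm_eq_abs,
        abs_of_pos hvn]
      field_simp
    have hveq : φm Z x = ((‖φm Z x‖:ℝ):ℂ) • vh := by
      rw [hvhdef, smul_inv_smul₀ (Complex.ofReal_ne_zero.mpr (ne_of_gt hvn))]
    obtain ⟨r, hr1, hrv, hre⟩ := exists_unit_orth hn vh e1
    -- real coefficients
    obtain ⟨r2, hr2⟩ : ∃ r2 : ℝ, r2 = (Real.sqrt 2)⁻¹ := ⟨_, rfl⟩
    obtain ⟨r5, hr5⟩ : ∃ r5 : ℝ, r5 = (Real.sqrt 5)⁻¹ := ⟨_, rfl⟩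
    have hr2sq : r2^2 = 1/2 := by
      rw [hr2, ← one_div, div_pow, one_pow, Real.sq_sqrt (by norm_num : (0:ℝ) ≤ 2)]
    have hr5sq : r5^2 = 1/5 := by
      rw [hr5, ← one_div, div_pow, one_pow, Real.sq_sqrt (by norm_num : (0:ℝ) ≤ 5)]
    have hr2pos : 0 < r2 := by rw [hr2]; positivity
    have hr5pos : 0 < r5 := by rw [hr5]; positivity
    -- the vectors
    obtain ⟨p, hpdef⟩ : ∃ p : E n, p = (r2:ℂ) • vh + (r2:ℂ) • r := ⟨_, rfl⟩
    obtain ⟨u, hudef⟩ : ∃ u : E n, u = ((-r2:ℝ):ℂ) • vh + (r2:ℂ) • r := ⟨_, rfl⟩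
    obtain ⟨q, hqdef⟩ : ∃ q : E n, q = (r5:ℂ) • x + ((-2*r5:ℝ):ℂ) • s := ⟨_, rfl⟩
    obtain ⟨w, hwdef⟩ : ∃ w : E n, w = ((2*r5:ℝ):ℂ) • x + (r5:ℂ) • s := ⟨_, rfl⟩
    -- basic inner facts
    have hsx' : ⟪s, x⟫_ℂ = 0 := by rw [← inner_conj_symm, hsx, map_zero]
    have hse' : ⟪s, e1⟫_ℂ = 0 := by rw [← inner_conj_symm, hse, map_zero]
    have hrv' : ⟪r, vh⟫_ℂ = 0 := by rw [← inner_conj_symm, hrv, map_zero]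
    have hxx : ⟪x, x⟫_ℂ = 1 := inner_self_one hx1
    have hss : ⟪s, s⟫_ℂ = 1 := inner_self_one hs1
    have hvv : ⟪vh, vh⟫_ℂ = 1 := inner_self_one hvh1
    have hrr : ⟪r, r⟫_ℂ = 1 := inner_self_one hr1
    -- norms
    have hp1 : ‖p‖ = 1 := by
      rw [hpdef]; exact norm_one_comb vh r r2 r2 hvh1 hr1 hrv (by ring_nf; ring_nf at hr2sq; linarith [hr2sq])
    have hu1 : ‖u‖ = 1 := by
      rw [hudef]; exact norm_one_comb vh r (-r2) r2 hvh1 hr1 hrv (by ring_nf; ring_nf at hr2sq; linarith [hr2sq])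
    have hq1 : ‖q‖ = 1 := by
      rw [hqdef]
      exact norm_one_comb x s r5 (-2*r5) hx1 hs1 hsx (by ring_nf; ring_nf at hr5sq; linarith [hr5sq])
    have hw1 : ‖w‖ = 1 := by
      rw [hwdef]
      exact norm_one_comb x s (2*r5) r5 hx1 hs1 hsx (by ring_nf; ring_nf at hr5sq; linarith [hr5sq])
    -- inner computations
    have hwq : ⟪w, q⟫_ℂ = 0 := by
      rw [hwdef, hqdef, inner_comb_left, inner_comb_right, inner_comb_right,
        hxx, hss, hsx, hsx']
      push_cast
      ring
    have hpu : ⟪p, u⟫_ℂ = 0 := by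
      rw [hpdef, hudef, inner_comb_left, inner_comb_right, inner_comb_right,
        hvv, hrr, hrv, hrv']
      push_cast
      ring
    -- the perturbing operator
    obtain ⟨hOp, hOpdef⟩ : ∃ hOp : E n →L[ℂ] E n, hOp = ((2:ℂ)⁻¹) • rk1 u w := ⟨_, rfl⟩
    have hOpapp : ∀ y, hOp y = ((2:ℂ)⁻¹ * ⟪w, y⟫_ℂ) • u := by
      intro y
      rw [hOpdef, ContinuousLinearMap.smul_apply, rk1_apply, smul_smul]
    have hhq : hOp q = 0 := by rw [hOpapp, hwq, mul_zero, zero_smul]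
    have hph : ∀ y, ⟪p, hOp y⟫_ℂ = 0 := by
      intro y
      rw [hOpapp, inner_smul_right, hpu, mul_zero]
    have hhy : ∀ y, ‖hOp y‖ ≤ (1/2) * ‖y‖ := by
      intro y
      rw [hOpapp, norm_smul, norm_mul, hu1, mul_one]
      have h1 : ‖⟪w, y⟫_ℂ‖ ≤ ‖y‖ := by
        calc ‖⟪w, y⟫_ℂ‖ ≤ ‖w‖ * ‖y‖ := norm_inner_le_norm _ _
        _ = ‖y‖ := by rw [hw1, one_mul]
      have h2 : ‖(2:ℂ)⁻¹‖ = 1/2 := by norm_num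
      rw [h2]
      linarith [h1]
    -- the matrix B
    obtain ⟨B, hφB⟩ : ∃ B : Matrix (Fin n) (Fin n) ℂ, φm B = rk1 p q + hOp :=
      ⟨φm.symm (rk1 p q + hOp), φm.apply_symm_apply (rk1 p q + hOp)⟩
    have hBapp : ∀ y, φm B y = ⟪q, y⟫_ℂ • p + ((2:ℂ)⁻¹ * ⟪w, y⟫_ℂ) • u := by
      intro y
      rw [hφB, ContinuousLinearMap.add_apply, rk1_apply, hOpapp]
    -- B ∈ T
    have hqe1 : ⟪q, e1⟫_ℂ = (r5:ℂ) * ⟪x, e1⟫_ℂ := by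
      rw [hqdef, inner_comb_left, hse']
      push_cast; ring
    have hwe1 : ⟪w, e1⟫_ℂ = ((2*r5:ℝ):ℂ) * ⟪x, e1⟫_ℂ := by
      rw [hwdef, inner_comb_left, hse']
      push_cast; ring
    have he1p : ⟪e1, p⟫_ℂ = (r2:ℂ) * ⟪e1, vh⟫_ℂ := by
      rw [hpdef, inner_comb_right, hre]
      push_cast; ring
    have he1u : ⟪e1, u⟫_ℂ = ((-r2:ℝ):ℂ) * ⟪e1, vh⟫_ℂ := by
      rw [hudef, inner_comb_right, hre]
      push_cast; ring
    have hBT : B ∈ T := by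
      rw [hT]
      show B _ _ = 0
      rw [entry_eq_inner B _ _, ← he1def, hBapp, inner_add_right, inner_smul_right,
        inner_smul_right, hqe1, hwe1, he1p, he1u]
      push_cast
      ring
    -- BJ Z B
    have hqx : ⟪q, x⟫_ℂ = (r5:ℂ) := by
      rw [hqdef, inner_comb_left, hxx, hsx']
      push_cast; ring
    have hwx : ⟪w, x⟫_ℂ = ((2*r5:ℝ):ℂ) := by
      rw [hwdef, inner_comb_left, hxx, hsx']
      push_cast; ring
    have hvp : ⟪φm Z x, p⟫_ℂ = ((‖φm Z x‖:ℝ):ℂ) * (r2:ℂ) := by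
      conv_lhs => rw [hveq]
      rw [hpdef, inner_comb_right, inner_smul_left, inner_smul_left, hvv, hrv,
        Complex.conj_ofReal]
      push_cast; ring
    have hvu : ⟪φm Z x, u⟫_ℂ = ((‖φm Z x‖:ℝ):ℂ) * ((-r2:ℝ):ℂ) := by
      conv_lhs => rw [hveq]
      rw [hudef, inner_comb_right, inner_smul_left, inner_smul_left, hvv, hrv,
        Complex.conj_ofReal]
      push_cast; ring
    have hZB : BJ Z B := by
      refine bj_of_attain Z B x hx1 hZnorm ?_
      rw [hBapp, inner_add_right, inner_smul_right, inner_smul_right, hqx, hwx,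
        hvp, hvu]
      push_cast
      ring
    -- ¬ BJ B Z
    have hfq : φm Z q = (r5:ℂ) • φm Z x := by
      rw [hqdef, map_add, map_smul, map_smul, hfs, smul_zero, add_zero]
    have hα : ⟪p, φm Z q⟫_ℂ ≠ 0 := by
      rw [hfq, inner_smul_right]
      have h1 : ⟪p, φm Z x⟫_ℂ = ((‖φm Z x‖:ℝ):ℂ) * (r2:ℂ) := by
        rw [← inner_conj_symm, hvp]
        rw [map_mul, Complex.conj_ofReal, Complex.conj_ofReal]
      rw [h1]
      apply mul_ne_zero (Complex.ofReal_ne_zero.mpr (ne_of_gt hr5pos))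
      apply mul_ne_zero (Complex.ofReal_ne_zero.mpr (ne_of_gt hvn))
        (Complex.ofReal_ne_zero.mpr (ne_of_gt hr2pos))
    have hNB : ¬ BJ B Z :=
      not_bj B Z p q hOp (1/2) hφB hp1 hq1 (by norm_num) (by norm_num)
        hhq hph hhy hα
    exact hNB (hsym B hBT hZB)
end
end LSaux

/-- For `n ≥ 2`, the subspace `T = {X ∈ M_n(ℂ) : X₁₁ = 0}` (Euclidean operator norm,
complex scalars) contains a nonzero element left-symmetric relative to `T` iff `n = 2`. -/
theorem leftSymmetric_in_T_iff_two {n : ℕ} (hn : 2 ≤ n)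
    (T : Set (Matrix (Fin n) (Fin n) ℂ))
    (hT : T = {X | X ⟨0, by omega⟩ ⟨0, by omega⟩ = 0}) :
    (∃ Z : Matrix (Fin n) (Fin n) ℂ, Z ∈ T ∧ Z ≠ 0 ∧ LeftSymmRel T Z) ↔ n = 2 := by
  constructor
  · rintro ⟨Z, hZT, hZ0, hsym⟩
    by_contra hne
    have h3 : 3 ≤ n := by omega
    exact LSaux.three_case h3 T hT Z hZ0 hsym
  · rintro rfl
    exact LSaux.two_case T (by rw [hT]; rfl)
end

section
/- Let x, y, z be n-tuples of quaternions. Then the real part of ∑ᵢ conj(zᵢ)·(xᵢ + yᵢ·μ) equals 0 for every quaternion μ with ‖μ‖ = 1 if and only if the real part of ∑ᵢ conj(zᵢ)·xᵢ equals 0 and ∑ᵢ conj(zᵢ)·yᵢ = 0. -/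
open Quaternion

lemma quat_norm_unit (q : ℍ[ℝ]) (h : normSq q = 1) : ‖q‖ = 1 := by
  have := Quaternion.normSq_eq_norm_mul_self q
  rw [h] at this
  nlinarith [norm_nonneg q]

def qI : ℍ[ℝ] := ⟨0,1,0,0⟩
def qJ : ℍ[ℝ] := ⟨0,0,1,0⟩
def qK : ℍ[ℝ] := ⟨0,0,0,1⟩

/-- For `n`-tuples of quaternions `x, y, z`: `Re⟨x + y·μ, z⟩ = 0` for every unimodular
quaternion `μ` iff `Re⟨x, z⟩ = 0` and `⟨y, z⟩ = 0` (where `⟨u, v⟩ = ∑ conj(vᵢ)·uᵢ` and the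
scalar `μ` multiplies `y` on the right, entrywise). -/
theorem re_pairing_unimodular_quaternion {n : ℕ} (x y z : Fin n → Quaternion ℝ) :
    (∀ μ : Quaternion ℝ, ‖μ‖ = 1 →
        (∑ i, star (z i) * (x i + y i * μ)).re = 0) ↔
      ((∑ i, star (z i) * x i).re = 0 ∧ ∑ i, star (z i) * y i = 0) := by
  have hsum : ∀ μ : Quaternion ℝ, ∑ i, star (z i) * (x i + y i * μ)
      = (∑ i, star (z i) * x i) + (∑ i, star (z i) * y i) * μ := by
    intro μ
    rw [Finset.sum_mul, ← Finset.sum_add_distrib]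
    exact Finset.sum_congr rfl fun i _ => by rw [mul_add, mul_assoc]
  constructor
  · intro h
    have h' : ∀ μ : Quaternion ℝ, ‖μ‖ = 1 →
        ((∑ i, star (z i) * x i) + (∑ i, star (z i) * y i) * μ).re = 0 := by
      intro μ hμ; rw [← hsum]; exact h μ hμ
    set R := ∑ i, star (z i) * x i with hR
    set Q := ∑ i, star (z i) * y i with hQ
    have h1 := h' 1 norm_one
    have hm1 := h' (-1) (by rw [norm_neg]; exact norm_one)
    have hi := h' qI (quat_norm_unit _ (by rw [Quaternion.normSq_def']; simp [qI]))
    have hj := h' qJ (quat_norm_unit _ (by rw [Quaternion.normSq_def']; simp [qJ]))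
    have hk := h' qK (quat_norm_unit _ (by rw [Quaternion.normSq_def']; simp [qK]))
    simp [Quaternion.re_mul] at h1 hm1 hi hj hk; simp [qI, qJ, qK] at hi hj hk
    have hRre : R.re = 0 := by linarith
    refine ⟨hRre, ?_⟩
    ext <;> simp_all <;> linarith
  · rintro ⟨h1, h2⟩ μ hμ
    rw [hsum, h2, zero_mul, add_zero, h1]
end

section
/- Let a, b, q ∈ ℂ with q purely imaginary (Re q = 0) and |q| = 1, and let B ∈ M₂(ℂ) be the matrix with entries B₁₁ = 0, B₁₂ = a, B₂₁ = b, B₂₂ = q, where M₂(ℂ) carries the operator norm induced by the Euclidean norm on ℂ². Then ‖B‖² = (√((|a|² + |b|² + 1)² − 4|a|²|b|²) + |a|² + |b|² + 1)/2; moreover, setting λ = ‖B‖² − 1 − |a|² and x = (q·λ, conj(q)·b·q) ∈ ℂ², one has ‖Bx‖ = ‖B‖·‖x‖ and Re⟨Bx, E₂₂x⟩ = 0, where E₂₂ is the matrix unit with 1 in position (2,2). -/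
open scoped Matrix.Norms.L2Operator

private lemma qmat_scalar (A Bn : ℝ) (hA : 0 ≤ A) (hBn : 0 ≤ Bn) (μ : ℝ)
    (hμ : μ = (Real.sqrt ((A+Bn+1)^2 - 4*A*Bn) + (A+Bn+1))/2) :
    μ^2 - (A+Bn+1)*μ + A*Bn = 0 ∧ 1 + A ≤ μ ∧ Bn < μ ∧ (μ-Bn)*(μ-A-1) = Bn := by
  set D : ℝ := (A+Bn+1)^2 - 4*A*Bn with hD
  have hD0 : (0:ℝ) ≤ D := by rw [hD]; nlinarith [sq_nonneg (A - Bn)]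
  have hsq : Real.sqrt D ^ 2 = D := Real.sq_sqrt hD0
  have hs0 : 0 ≤ Real.sqrt D := Real.sqrt_nonneg D
  have hroot : μ^2 - (A+Bn+1)*μ + A*Bn = 0 := by rw [hμ]; field_simp; nlinarith [hsq]
  have habs : |A + 1 - Bn| ≤ Real.sqrt D := by
    rw [← Real.sqrt_sq_eq_abs]
    apply Real.sqrt_le_sqrt; rw [hD]; nlinarith
  have hge1 : 1 + A ≤ μ := by
    rw [hμ]; linarith [le_trans (le_abs_self (A+1-Bn)) habs]
  have hgeB : Bn < μ := by
    rw [hμ]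
    rcases le_or_gt Bn (A+1) with h | h
    · have hs1 : 1 ≤ Real.sqrt D := by
        have : (1:ℝ) ≤ D := by rw [hD]; nlinarith [sq_nonneg (A - Bn)]
        nlinarith [hsq, hs0]
      linarith
    · have h2 : (Bn - A - 1)^2 < Real.sqrt D ^ 2 := by rw [hsq, hD]; nlinarith
      nlinarith [hs0]
  exact ⟨hroot, hge1, hgeB, by nlinarith [hroot]⟩

private lemma qmat_quad (A Bn μ : ℝ) (hgeB : Bn < μ)
    (hprod : (μ - Bn) * (μ - A - 1) = Bn) (s t : ℝ) (β : ℝ) (hβ2 : β^2 = Bn) :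
    A * t^2 + (β*s + t)^2 ≤ μ * (s^2 + t^2) := by
  have key : (μ - Bn) * (μ*(s^2+t^2) - A*t^2 - (β*s+t)^2) = ((μ-Bn)*s - β*t)^2 := by
    linear_combination (-(μ - Bn)*s^2 - t^2) * hβ2 + t^2 * hprod
  nlinarith [key, sq_nonneg ((μ - Bn)*s - β*t), sub_pos.mpr hgeB]

private lemma qmat_eig (A Bn μ lam' : ℝ)
    (hroot : μ^2 - (A+Bn+1)*μ + A*Bn = 0) (hlam' : lam' = μ - 1 - A) :
    A * Bn + Bn * (lam'+1)^2 = μ * (lam'^2 + Bn) := by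
  subst hlam'
  linear_combination (-(μ-1-A)) * hroot

private lemma vec_norm_sq (u0 u1 : ℂ) :
    ‖(WithLp.equiv 2 (Fin 2 → ℂ)).symm ![u0, u1]‖^2 = ‖u0‖^2 + ‖u1‖^2 := by
  rw [EuclideanSpace.norm_eq, Real.sq_sqrt (by positivity)]
  simp [Fin.sum_univ_two]

private lemma vec_coords (v : EuclideanSpace ℂ (Fin 2)) :
    v = (WithLp.equiv 2 (Fin 2 → ℂ)).symm ![v 0, v 1] := by
  ext i; fin_cases i <;> rfl

private lemma vec_norm_sq' (v : EuclideanSpace ℂ (Fin 2)) : ‖v‖^2 = ‖v 0‖^2 + ‖v 1‖^2 := by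
  conv_lhs => rw [vec_coords v]
  rw [vec_norm_sq]

private lemma qmat_act (a b q : ℂ) (v : EuclideanSpace ℂ (Fin 2)) :
    Matrix.toEuclideanLin !![0, a; b, q] v
      = (WithLp.equiv 2 (Fin 2 → ℂ)).symm ![a * v 1, b * v 0 + q * v 1] := by
  rw [Matrix.toEuclideanLin_apply]
  congr 1
  funext i
  fin_cases i <;> simp [Matrix.mulVec, dotProduct, Fin.sum_univ_two, Matrix.vecHead, Matrix.vecTail]

private lemma e22_act (v : EuclideanSpace ℂ (Fin 2)) :
    Matrix.toEuclideanLin (Matrix.single 1 1 (1 : ℂ)) v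
      = (WithLp.equiv 2 (Fin 2 → ℂ)).symm ![0, v 1] := by
  rw [Matrix.toEuclideanLin_apply]
  congr 1
  funext i
  fin_cases i <;>
    simp [Matrix.mulVec, dotProduct, Fin.sum_univ_two, Matrix.single]

private lemma inner_two (u0 u1 w0 w1 : ℂ) :
    (inner (𝕜 := ℂ) ((WithLp.equiv 2 (Fin 2 → ℂ)).symm ![u0, u1])
      ((WithLp.equiv 2 (Fin 2 → ℂ)).symm ![w0, w1]))
      = starRingEnd ℂ u0 * w0 + starRingEnd ℂ u1 * w1 := by
  simp [PiLp.inner_apply, Fin.sum_univ_two, RCLike.inner_apply]; ring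

private lemma qmat_norm_le (M : Matrix (Fin 2) (Fin 2) ℂ) (c : ℝ) (hc : 0 ≤ c)
    (h : ∀ v : EuclideanSpace ℂ (Fin 2), ‖Matrix.toEuclideanLin M v‖ ≤ c * ‖v‖) :
    ‖M‖ ≤ c := by
  rw [Matrix.l2_opNorm_def]
  exact ContinuousLinearMap.opNorm_le_bound _ hc h

private lemma qmat_le_norm (M : Matrix (Fin 2) (Fin 2) ℂ) (v : EuclideanSpace ℂ (Fin 2)) :
    ‖Matrix.toEuclideanLin M v‖ ≤ ‖M‖ * ‖v‖ := by
  rw [Matrix.l2_opNorm_def]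
  exact ContinuousLinearMap.le_opNorm
    ((Matrix.toEuclideanLin.trans LinearMap.toContinuousLinearMap) M) v

set_option maxHeartbeats 1000000 in
/-- For `q ∈ ℂ` purely imaginary and unimodular, the norm of `B = !![0, a; b, q]` in the
Euclidean operator norm is given by the stated formula, and with
`λ = ‖B‖² − 1 − |a|²` and `x = (q·λ, conj(q)·b·q)`, the vector `x` is norm-attaining for `B`
and `Re⟨Bx, E₂₂x⟩ = 0`. -/
theorem norm_and_orthogonality_q_matrix (a b q : ℂ) (hqim : q.re = 0) (hq : ‖q‖ = 1)
    (B : Matrix (Fin 2) (Fin 2) ℂ) (hB : B = !![0, a; b, q])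
    (lam : ℝ) (hlam : lam = ‖B‖ ^ 2 - 1 - ‖a‖ ^ 2)
    (x : EuclideanSpace ℂ (Fin 2))
    (hx : x = (WithLp.equiv 2 (Fin 2 → ℂ)).symm ![q * (lam : ℂ), starRingEnd ℂ q * b * q]) :
    ‖B‖ ^ 2 = (Real.sqrt ((‖a‖ ^ 2 + ‖b‖ ^ 2 + 1) ^ 2 - 4 * ‖a‖ ^ 2 * ‖b‖ ^ 2)
        + ‖a‖ ^ 2 + ‖b‖ ^ 2 + 1) / 2 ∧
    ‖Matrix.toEuclideanLin B x‖ = ‖B‖ * ‖x‖ ∧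
    (inner (𝕜 := ℂ) (Matrix.toEuclideanLin (Matrix.single 1 1 (1 : ℂ)) x)
        (Matrix.toEuclideanLin B x)).re = 0 := by
  have hqq : (starRingEnd ℂ q) * q = 1 := by
    rw [Complex.conj_mul']
    simp [Complex.normSq_eq_norm_sq, hq]
  set A : ℝ := ‖a‖^2 with hAdef
  set Bn : ℝ := ‖b‖^2 with hBndef
  have hA : 0 ≤ A := sq_nonneg _
  have hBn : 0 ≤ Bn := sq_nonneg _
  set μ : ℝ := (Real.sqrt ((A+Bn+1)^2 - 4*A*Bn) + (A+Bn+1))/2 with hμ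
  obtain ⟨hroot, hge1, hgeB, hprod⟩ := qmat_scalar A Bn hA hBn μ hμ
  have hμpos : 0 < μ := by linarith
  have hBnormsq : ∀ v : EuclideanSpace ℂ (Fin 2),
      ‖Matrix.toEuclideanLin B v‖^2 = ‖a * v 1‖^2 + ‖b * v 0 + q * v 1‖^2 := by
    intro v; rw [hB, qmat_act, vec_norm_sq]
  -- upper bound
  have hupper : ‖B‖ ≤ Real.sqrt μ := by
    apply qmat_norm_le B (Real.sqrt μ) (Real.sqrt_nonneg μ)
    intro v
    have hsqle : ‖Matrix.toEuclideanLin B v‖^2 ≤ μ * ‖v‖^2 := by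
      rw [hBnormsq v, vec_norm_sq' v]
      have h1 : ‖a * v 1‖^2 = A * ‖v 1‖^2 := by rw [norm_mul, hAdef]; ring
      have h2 : ‖b * v 0 + q * v 1‖ ≤ ‖b‖ * ‖v 0‖ + ‖v 1‖ := by
        calc ‖b * v 0 + q * v 1‖ ≤ ‖b * v 0‖ + ‖q * v 1‖ := norm_add_le _ _
        _ = ‖b‖ * ‖v 0‖ + ‖v 1‖ := by rw [norm_mul, norm_mul, hq, one_mul]
      have h2' : ‖b * v 0 + q * v 1‖^2 ≤ (‖b‖ * ‖v 0‖ + ‖v 1‖)^2 :=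
        pow_le_pow_left₀ (norm_nonneg _) h2 2
      have h3 := qmat_quad A Bn μ hgeB hprod ‖v 0‖ ‖v 1‖ ‖b‖ hBndef.symm
      linarith [h1, h2', h3]
    have h4 := Real.sqrt_le_sqrt hsqle
    rwa [Real.sqrt_sq (norm_nonneg _), Real.sqrt_mul hμpos.le, Real.sqrt_sq (norm_nonneg _)]
      at h4
  -- eigenvector identity
  have heig : ∀ lam' : ℝ, lam' = μ - 1 - A →
      ‖Matrix.toEuclideanLin B ((WithLp.equiv 2 (Fin 2 → ℂ)).symm ![q * (lam' : ℂ), b])‖^2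
        = μ * ‖(WithLp.equiv 2 (Fin 2 → ℂ)).symm ![q * (lam' : ℂ), b]‖^2 := by
    intro lam' hlam'
    have hl0 : 0 ≤ lam' := by rw [hlam']; linarith
    set w : EuclideanSpace ℂ (Fin 2) := (WithLp.equiv 2 (Fin 2 → ℂ)).symm ![q * (lam' : ℂ), b]
      with hw
    have hw0 : w 0 = q * (lam' : ℂ) := rfl
    have hw1 : w 1 = b := rfl
    rw [hBnormsq w, vec_norm_sq' w, hw0, hw1]
    have e1 : ‖a * b‖^2 = A * Bn := by rw [norm_mul, hAdef, hBndef]; ring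
    have e2 : b * (q * (lam' : ℂ)) + q * b = q * b * (((lam' + 1 : ℝ)) : ℂ) := by
      push_cast; ring
    have e3 : ‖b * (q * (lam' : ℂ)) + q * b‖^2 = Bn * (lam' + 1)^2 := by
      rw [e2, norm_mul, norm_mul, hq, Complex.norm_real, Real.norm_eq_abs, abs_of_nonneg (by linarith : (0:ℝ) ≤ lam' + 1), hBndef]
      ring
    have e4 : ‖q * (lam' : ℂ)‖^2 = lam'^2 := by
      rw [norm_mul, hq, Complex.norm_real, Real.norm_eq_abs, abs_of_nonneg hl0, one_mul]
    rw [e1, e3, e4]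
    exact qmat_eig A Bn μ lam' hroot hlam'
  -- lower bound
  have hlower : Real.sqrt μ ≤ ‖B‖ := by
    by_cases hb : b = 0
    · set w : EuclideanSpace ℂ (Fin 2) := (WithLp.equiv 2 (Fin 2 → ℂ)).symm ![0, 1] with hw
      have hw0 : w 0 = 0 := rfl
      have hw1 : w 1 = 1 := rfl
      have hBn0 : Bn = 0 := by rw [hBndef, hb]; simp
      have hμval : μ = A + 1 := by
        rcases mul_eq_zero.mp (show μ * (μ - A - 1) = 0 by
          rw [hBn0] at hprod; linarith [hprod]) with h | h
        · exact absurd h hμpos.ne'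
        · linarith
      have hBw : ‖Matrix.toEuclideanLin B w‖^2 = μ := by
        rw [hBnormsq w, hw0, hw1]
        simp [hb, hq, hμval, hAdef]
      have hwnorm : ‖w‖ = 1 := by
        have h := vec_norm_sq' w
        rw [hw0, hw1] at h
        simp at h
        rcases h with h | h
        · exact h
        · linarith [norm_nonneg w]
      have h1 : ‖Matrix.toEuclideanLin B w‖ ≤ ‖B‖ := by
        have h5 := qmat_le_norm B w; rwa [hwnorm, mul_one] at h5
      have h2 : ‖Matrix.toEuclideanLin B w‖ = Real.sqrt μ := by
        rw [← hBw, Real.sqrt_sq (norm_nonneg _)]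
      linarith [h2 ▸ h1]
    · set lam' : ℝ := μ - 1 - A with hlam'
      set w : EuclideanSpace ℂ (Fin 2) := (WithLp.equiv 2 (Fin 2 → ℂ)).symm ![q * (lam' : ℂ), b]
        with hw
      have hkey := heig lam' rfl
      have hw1 : w 1 = b := rfl
      have hwpos : 0 < ‖w‖ := by
        rw [norm_pos_iff]
        intro hc
        apply hb
        rw [← hw1, hc]; rfl
      have hBw : ‖Matrix.toEuclideanLin B w‖ = Real.sqrt μ * ‖w‖ := by
        have h := congrArg Real.sqrt hkey
        rwa [Real.sqrt_sq (norm_nonneg _), Real.sqrt_mul hμpos.le, Real.sqrt_sq (norm_nonneg _)]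
          at h
      have h6 := qmat_le_norm B w
      rw [hBw] at h6
      exact le_of_mul_le_mul_right h6 hwpos
  have hBnorm : ‖B‖ = Real.sqrt μ := le_antisymm hupper hlower
  have hB2 : ‖B‖^2 = μ := by rw [hBnorm, Real.sq_sqrt hμpos.le]
  have hlam2 : lam = μ - 1 - A := by rw [hlam, hB2]
  have hxw : x = (WithLp.equiv 2 (Fin 2 → ℂ)).symm ![q * (lam : ℂ), b] := by
    rw [hx]
    congr 2
    rw [mul_comm (starRingEnd ℂ q) b, mul_assoc, hqq, mul_one]
  refine ⟨by rw [hB2, hμ]; ring, ?_, ?_⟩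
  · have hkey := heig lam hlam2
    rw [← hxw] at hkey
    have h := congrArg Real.sqrt hkey
    rwa [Real.sqrt_sq (norm_nonneg _), Real.sqrt_mul hμpos.le, Real.sqrt_sq (norm_nonneg _),
      ← hBnorm] at h
  · have hx0 : x 0 = q * (lam : ℂ) := by rw [hxw]; rfl
    have hx1 : x 1 = b := by rw [hxw]; rfl
    rw [e22_act x, hB, qmat_act, inner_two, hx0, hx1]
    simp [Complex.mul_re, Complex.mul_im, Complex.add_re, Complex.add_im, hqim,
      Complex.conj_re, Complex.conj_im]
    ring
end
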